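/- arXiv:2006.02015 — 2 statements merged into one kernel-verified Lean document; each statement's English description precedes it below -/
import Mathlib

section
/- Let H be a graph containing two disjoint pairs of nonadjacent vertices. Then K_4 ∨ H is d_1-choosable. -/
open SimpleGraph

/-- A graph `H` is `d₁`-choosable: for every list assignment giving each vertex `v`
a list of `d_H(v) - 1` colors, there is a proper coloring from the lists. -/
def D1Choosable {W : Type*} (H : SimpleGraph W) : Prop :=
  ∀ L : W → Finset ℕ, (∀ v, (L v).card = (H.neighborSet v).ncard - 1) →
    ∃ φ : W → ℕ, (∀ v, φ v ∈ L v) ∧ ∀ u v, H.Adj u v → φ u ≠ φ v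

/-- The join `K₄ ∨ H`. -/
def K4Join {W : Type*} (H : SimpleGraph W) : SimpleGraph (Fin 4 ⊕ W) where
  Adj x y :=
    match x, y with
    | .inl a, .inl b => a ≠ b
    | .inl _, .inr _ => True
    | .inr _, .inl _ => True
    | .inr a, .inr b => H.Adj a b
  symm := by
    constructor
    rintro (a | a) (b | b) h
    · exact Ne.symm h
    · trivial
    · trivial
    · exact H.adj_symm h
  loopless := by
    constructor
    rintro (a | a) h
    · exact h rfl
    · exact H.loopless.irrefl a h

namespace D1Aux
open Finset

lemma exists_avoid {B F : Finset ℕ} (h : F.card < B.card) : ∃ x ∈ B, x ∉ F := by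
  by_contra hc
  push_neg at hc
  exact absurd (Finset.card_le_card fun x hx => hc x hx) (not_le.mpr h)

lemma card_le_two {x y : ℕ} : ({x, y} : Finset ℕ).card ≤ 2 :=
  le_trans (Finset.card_insert_le _ _) (by simp)

lemma card_le_three {x y z : ℕ} : ({x, y, z} : Finset ℕ).card ≤ 3 :=
  le_trans (Finset.card_insert_le _ _) (Nat.add_le_add_right card_le_two 1)

lemma card_le_four {x y z w : ℕ} : ({x, y, z, w} : Finset ℕ).card ≤ 4 :=
  le_trans (Finset.card_insert_le _ _) (Nat.add_le_add_right card_le_three 1)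

lemma inter_card_le {T S F : Finset ℕ} (h : T ∩ S ⊆ F) {k : ℕ} (hF : F.card ≤ k) :
    (T ∩ S).card ≤ k := le_trans (Finset.card_le_card h) hF

/-- The conclusion of the core combinatorial lemma. -/
def Sol (A B C D T1 T2 T3 T4 : Finset ℕ) (Eac Ead Ebc Ebd : Prop) : Prop :=
  ∃ pa pb pc pd t1 t2 t3 t4 : ℕ,
    pa ∈ A ∧ pb ∈ B ∧ pc ∈ C ∧ pd ∈ D ∧
    (Eac → pa ≠ pc) ∧ (Ead → pa ≠ pd) ∧ (Ebc → pb ≠ pc) ∧ (Ebd → pb ≠ pd) ∧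
    t1 ∈ T1 ∧ t2 ∈ T2 ∧ t3 ∈ T3 ∧ t4 ∈ T4 ∧
    (t1 ≠ t2 ∧ t1 ≠ t3 ∧ t1 ≠ t4 ∧ t2 ≠ t3 ∧ t2 ≠ t4 ∧ t3 ≠ t4) ∧
    (t1 ≠ pa ∧ t1 ≠ pb ∧ t1 ≠ pc ∧ t1 ≠ pd) ∧
    (t2 ≠ pa ∧ t2 ≠ pb ∧ t2 ≠ pc ∧ t2 ≠ pd) ∧
    (t3 ≠ pa ∧ t3 ≠ pb ∧ t3 ≠ pc ∧ t3 ≠ pd) ∧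
    (t4 ≠ pa ∧ t4 ≠ pb ∧ t4 ≠ pc ∧ t4 ≠ pd)

lemma pick4 {X1 X2 X3 X4 S : Finset ℕ} (h1 : 6 ≤ X1.card) (h2 : 6 ≤ X2.card)
    (h3 : 6 ≤ X3.card) (h4 : 6 ≤ X4.card) (hS : S.card ≤ 4)
    (c3 : (X3 ∩ S).card ≤ 3) (c4 : (X4 ∩ S).card ≤ 2) :
    ∃ x1 x2 x3 x4 : ℕ, (x1 ∈ X1 ∧ x2 ∈ X2 ∧ x3 ∈ X3 ∧ x4 ∈ X4) ∧
      (x1 ∉ S ∧ x2 ∉ S ∧ x3 ∉ S ∧ x4 ∉ S) ∧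
      (x1 ≠ x2 ∧ x1 ≠ x3 ∧ x1 ≠ x4 ∧ x2 ≠ x3 ∧ x2 ≠ x4 ∧ x3 ≠ x4) := by
  obtain ⟨x1, hx1, hn1⟩ := exists_avoid (B := X1) (F := S) (by omega)
  obtain ⟨x2, hx2, hn2⟩ := exists_avoid (B := X2) (F := insert x1 S)
    (by have := Finset.card_insert_le x1 S; omega)
  obtain ⟨x3, hx3, hn3⟩ := exists_avoid (B := X3) (F := (X3 ∩ S) ∪ {x1, x2})
    (by
      have hu := Finset.card_union_le (X3 ∩ S) ({x1, x2} : Finset ℕ)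
      have h2' := card_le_two (x := x1) (y := x2)
      omega)
  obtain ⟨x4, hx4, hn4⟩ := exists_avoid (B := X4) (F := (X4 ∩ S) ∪ {x1, x2, x3})
    (by
      have hu := Finset.card_union_le (X4 ∩ S) ({x1, x2, x3} : Finset ℕ)
      have h3' := card_le_three (x := x1) (y := x2) (z := x3)
      omega)
  have hx2S : x2 ∉ S := fun h => hn2 (Finset.mem_insert_of_mem h)
  have hx12 : x1 ≠ x2 := fun h => hn2 (h ▸ Finset.mem_insert_self x1 S)
  have hx3S : x3 ∉ S := fun h => hn3 (Finset.mem_union_left _ (Finset.mem_inter.mpr ⟨hx3, h⟩))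
  have hx13 : x1 ≠ x3 := fun h => hn3 (Finset.mem_union_right _ (by simp [h.symm]))
  have hx23 : x2 ≠ x3 := fun h => hn3 (Finset.mem_union_right _ (by simp [h.symm]))
  have hx4S : x4 ∉ S := fun h => hn4 (Finset.mem_union_left _ (Finset.mem_inter.mpr ⟨hx4, h⟩))
  have hx14 : x1 ≠ x4 := fun h => hn4 (Finset.mem_union_right _ (by simp [h.symm]))
  have hx24 : x2 ≠ x4 := fun h => hn4 (Finset.mem_union_right _ (by simp [h.symm]))
  have hx34 : x3 ≠ x4 := fun h => hn4 (Finset.mem_union_right _ (by simp [h.symm]))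
  exact ⟨x1, x2, x3, x4, ⟨hx1, hx2, hx3, hx4⟩, ⟨hn1, hx2S, hx3S, hx4S⟩,
    hx12, hx13, hx14, hx23, hx24, hx34⟩

/-- Close a branch: exhibit the four colors and two "saved" clique-lists. -/
lemma close {A B C D T1 T2 T3 T4 : Finset ℕ} {Eac Ead Ebc Ebd : Prop}
    (hT1 : T1.card = 6) (hT2 : T2.card = 6) (hT3 : T3.card = 6) (hT4 : T4.card = 6)
    {pa pb pc pd : ℕ} (hpa : pa ∈ A) (hpb : pb ∈ B) (hpc : pc ∈ C) (hpd : pd ∈ D)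
    (e1 : Eac → pa ≠ pc) (e2 : Ead → pa ≠ pd) (e3 : Ebc → pb ≠ pc) (e4 : Ebd → pb ≠ pd)
    (hsave :
      ((T3 ∩ {pa,pb,pc,pd}).card ≤ 3 ∧ (T4 ∩ {pa,pb,pc,pd}).card ≤ 2) ∨
      ((T4 ∩ {pa,pb,pc,pd}).card ≤ 3 ∧ (T3 ∩ {pa,pb,pc,pd}).card ≤ 2) ∨
      ((T1 ∩ {pa,pb,pc,pd}).card ≤ 3 ∧ (T3 ∩ {pa,pb,pc,pd}).card ≤ 2) ∨
      ((T2 ∩ {pa,pb,pc,pd}).card ≤ 3 ∧ (T3 ∩ {pa,pb,pc,pd}).card ≤ 2) ∨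
      ((T2 ∩ {pa,pb,pc,pd}).card ≤ 3 ∧ (T1 ∩ {pa,pb,pc,pd}).card ≤ 2)) :
    Sol A B C D T1 T2 T3 T4 Eac Ead Ebc Ebd := by
  have hS : ({pa,pb,pc,pd} : Finset ℕ).card ≤ 4 := card_le_four
  have h1 : 6 ≤ T1.card := hT1.ge
  have h2 : 6 ≤ T2.card := hT2.ge
  have h3 : 6 ≤ T3.card := hT3.ge
  have h4 : 6 ≤ T4.card := hT4.ge
  rcases hsave with ⟨c3, c4⟩ | ⟨c3, c4⟩ | ⟨c3, c4⟩ | ⟨c3, c4⟩ | ⟨c3, c4⟩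
  · obtain ⟨x1, x2, x3, x4, ⟨m1, m2, m3, m4⟩, ⟨n1, n2, n3, n4⟩, d12, d13, d14, d23, d24, d34⟩ :=
      pick4 h1 h2 h3 h4 hS c3 c4
    refine ⟨pa, pb, pc, pd, x1, x2, x3, x4, hpa, hpb, hpc, hpd, e1, e2, e3, e4,
      m1, m2, m3, m4, ⟨d12, d13, d14, d23, d24, d34⟩, ?_, ?_, ?_, ?_⟩ <;>
      simp only [Finset.mem_insert, Finset.mem_singleton, not_or] at n1 n2 n3 n4 <;> tauto
  · obtain ⟨x1, x2, x3, x4, ⟨m1, m2, m3, m4⟩, ⟨n1, n2, n3, n4⟩, d12, d13, d14, d23, d24, d34⟩ :=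
      pick4 h1 h2 h4 h3 hS c3 c4
    refine ⟨pa, pb, pc, pd, x1, x2, x4, x3, hpa, hpb, hpc, hpd, e1, e2, e3, e4,
      m1, m2, m4, m3, ⟨d12, d14, d13, d24, d23, d34.symm⟩, ?_, ?_, ?_, ?_⟩ <;>
      simp only [Finset.mem_insert, Finset.mem_singleton, not_or] at n1 n2 n3 n4 <;> tauto
  · obtain ⟨x1, x2, x3, x4, ⟨m1, m2, m3, m4⟩, ⟨n1, n2, n3, n4⟩, d12, d13, d14, d23, d24, d34⟩ :=
      pick4 h2 h4 h1 h3 hS c3 c4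
    refine ⟨pa, pb, pc, pd, x3, x1, x4, x2, hpa, hpb, hpc, hpd, e1, e2, e3, e4,
      m3, m1, m4, m2, ⟨d13.symm, d34, d23.symm, d14, d12, d24.symm⟩, ?_, ?_, ?_, ?_⟩ <;>
      simp only [Finset.mem_insert, Finset.mem_singleton, not_or] at n1 n2 n3 n4 <;> tauto
  · obtain ⟨x1, x2, x3, x4, ⟨m1, m2, m3, m4⟩, ⟨n1, n2, n3, n4⟩, d12, d13, d14, d23, d24, d34⟩ :=
      pick4 h1 h4 h2 h3 hS c3 c4
    refine ⟨pa, pb, pc, pd, x1, x3, x4, x2, hpa, hpb, hpc, hpd, e1, e2, e3, e4,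
      m1, m3, m4, m2, ⟨d13, d14, d12, d34, d23.symm, d24.symm⟩, ?_, ?_, ?_, ?_⟩ <;>
      simp only [Finset.mem_insert, Finset.mem_singleton, not_or] at n1 n2 n3 n4 <;> tauto
  · obtain ⟨x1, x2, x3, x4, ⟨m1, m2, m3, m4⟩, ⟨n1, n2, n3, n4⟩, d12, d13, d14, d23, d24, d34⟩ :=
      pick4 h3 h4 h2 h1 hS c3 c4
    refine ⟨pa, pb, pc, pd, x4, x3, x1, x2, hpa, hpb, hpc, hpd, e1, e2, e3, e4,
      m4, m3, m1, m2, ⟨d34.symm, d14.symm, d24.symm, d13.symm, d23.symm, d12⟩, ?_, ?_, ?_, ?_⟩ <;>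
      simp only [Finset.mem_insert, Finset.mem_singleton, not_or] at n1 n2 n3 n4 <;> tauto

section Converters
variable {A B C D T1 T2 T3 T4 : Finset ℕ} {Eac Ead Ebc Ebd : Prop}

lemma swapAB (h : Sol B A C D T1 T2 T3 T4 Ebc Ebd Eac Ead) :
    Sol A B C D T1 T2 T3 T4 Eac Ead Ebc Ebd := by
  obtain ⟨pb, pa, pc, pd, t1, t2, t3, t4, hb, ha, hc, hd, f1, f2, f3, f4, m1, m2, m3, m4, hds,
    ⟨q1a, q1b, q1c, q1d⟩, ⟨q2a, q2b, q2c, q2d⟩, ⟨q3a, q3b, q3c, q3d⟩, ⟨q4a, q4b, q4c, q4d⟩⟩ := h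
  exact ⟨pa, pb, pc, pd, t1, t2, t3, t4, ha, hb, hc, hd, f3, f4, f1, f2, m1, m2, m3, m4, hds,
    ⟨q1b, q1a, q1c, q1d⟩, ⟨q2b, q2a, q2c, q2d⟩, ⟨q3b, q3a, q3c, q3d⟩, ⟨q4b, q4a, q4c, q4d⟩⟩

lemma swapCD (h : Sol A B D C T1 T2 T3 T4 Ead Eac Ebd Ebc) :
    Sol A B C D T1 T2 T3 T4 Eac Ead Ebc Ebd := by
  obtain ⟨pa, pb, pd, pc, t1, t2, t3, t4, ha, hb, hd, hc, f1, f2, f3, f4, m1, m2, m3, m4, hds,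
    ⟨q1a, q1b, q1c, q1d⟩, ⟨q2a, q2b, q2c, q2d⟩, ⟨q3a, q3b, q3c, q3d⟩, ⟨q4a, q4b, q4c, q4d⟩⟩ := h
  exact ⟨pa, pb, pc, pd, t1, t2, t3, t4, ha, hb, hc, hd, f2, f1, f4, f3, m1, m2, m3, m4, hds,
    ⟨q1a, q1b, q1d, q1c⟩, ⟨q2a, q2b, q2d, q2c⟩, ⟨q3a, q3b, q3d, q3c⟩, ⟨q4a, q4b, q4d, q4c⟩⟩

lemma swapSides (h : Sol C D A B T1 T2 T3 T4 Eac Ebc Ead Ebd) :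
    Sol A B C D T1 T2 T3 T4 Eac Ead Ebc Ebd := by
  obtain ⟨pc, pd, pa, pb, t1, t2, t3, t4, hc, hd, ha, hb, f1, f2, f3, f4, m1, m2, m3, m4, hds,
    ⟨q1a, q1b, q1c, q1d⟩, ⟨q2a, q2b, q2c, q2d⟩, ⟨q3a, q3b, q3c, q3d⟩, ⟨q4a, q4b, q4c, q4d⟩⟩ := h
  exact ⟨pa, pb, pc, pd, t1, t2, t3, t4, ha, hb, hc, hd,
    fun h => (f1 h).symm, fun h => (f3 h).symm, fun h => (f2 h).symm, fun h => (f4 h).symm,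
    m1, m2, m3, m4, hds,
    ⟨q1c, q1d, q1a, q1b⟩, ⟨q2c, q2d, q2a, q2b⟩, ⟨q3c, q3d, q3a, q3b⟩, ⟨q4c, q4d, q4a, q4b⟩⟩

end Converters


lemma ne_of_not_mem {T : Finset ℕ} {x y : ℕ} (hx : x ∈ T) (hy : y ∉ T) : x ≠ y :=
  fun h => hy (h ▸ hx)

lemma save0 {T S : Finset ℕ} : (T ∩ S).card ≤ S.card :=
  Finset.card_le_card Finset.inter_subset_right

lemma save1 {T S : Finset ℕ} {x : ℕ} (hx : x ∈ S) (hxT : x ∉ T) {k : ℕ}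
    (hS : S.card ≤ k + 1) : (T ∩ S).card ≤ k := by
  have hsub : T ∩ S ⊆ S.erase x := by
    intro e he
    rw [Finset.mem_inter] at he
    rw [Finset.mem_erase]
    exact ⟨fun h => hxT (h ▸ he.1), he.2⟩
  have h1 := Finset.card_erase_of_mem hx
  have h2 := Finset.card_le_card hsub
  omega

lemma save2 {T S : Finset ℕ} {x y : ℕ} (hx : x ∈ S) (hy : y ∈ S) (hxy : x ≠ y)
    (hxT : x ∉ T) (hyT : y ∉ T) {k : ℕ} (hS : S.card ≤ k + 2) : (T ∩ S).card ≤ k := by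
  have hsub : T ∩ S ⊆ (S.erase x).erase y := by
    intro e he
    rw [Finset.mem_inter] at he
    rw [Finset.mem_erase, Finset.mem_erase]
    exact ⟨fun h => hyT (h ▸ he.1), fun h => hxT (h ▸ he.1), he.2⟩
  have h1 := Finset.card_erase_of_mem hx
  have h2 := Finset.card_erase_of_mem (Finset.mem_erase.mpr ⟨hxy.symm, hy⟩)
  have h3 := Finset.card_le_card hsub
  omega

lemma union_card_disj {X Y : Finset ℕ} (h : X ∩ Y = ∅) :
    (X ∪ Y).card = X.card + Y.card := by
  have := Finset.card_union_add_card_inter X Y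
  rw [h] at this
  simpa using this

lemma union_avoid {A B T : Finset ℕ} (hAB : A ∩ B = ∅) (h7 : T.card < A.card + B.card) :
    ∃ γ ∈ A ∪ B, γ ∉ T :=
  exists_avoid (by rw [union_card_disj hAB]; exact h7)

/-- If `B ⊆ T` and `A, B` disjoint, then `|A \ T| ≥ |A| + |B| - |T|`. -/
lemma diff_lower {A B T : Finset ℕ} (hAB : A ∩ B = ∅) (hBT : B ⊆ T) :
    A.card + B.card ≤ T.card + (A \ T).card := by
  have h1 : (A ∩ T) ∪ B ⊆ T := Finset.union_subset Finset.inter_subset_right hBT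
  have h2 : ((A ∩ T) ∩ B) = ∅ := by
    have hsub : (A ∩ T) ∩ B ⊆ A ∩ B := by
      intro e he
      simp only [Finset.mem_inter] at he ⊢
      exact ⟨he.1.1, he.2⟩
    rw [hAB] at hsub
    exact Finset.subset_empty.1 hsub
  have h3 := Finset.card_le_card h1
  rw [union_card_disj h2] at h3
  have h4 := Finset.card_inter_add_card_sdiff A T
  omega

/-- The sizes context. -/
structure Ctx (A B C D T1 T2 T3 T4 : Finset ℕ) (Eac Ead Ebc Ebd : Prop) : Prop where
  hA3 : 3 ≤ A.card
  hB3 : 3 ≤ B.card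
  hC3 : 3 ≤ C.card
  hD3 : 3 ≤ D.card
  hAac : Eac → 4 ≤ A.card
  hAad : Ead → 4 ≤ A.card
  hAboth : Eac → Ead → 5 ≤ A.card
  hBbc : Ebc → 4 ≤ B.card
  hBbd : Ebd → 4 ≤ B.card
  hBboth : Ebc → Ebd → 5 ≤ B.card
  hCac : Eac → 4 ≤ C.card
  hCbc : Ebc → 4 ≤ C.card
  hCboth : Eac → Ebc → 5 ≤ C.card
  hDad : Ead → 4 ≤ D.card
  hDbd : Ebd → 4 ≤ D.card
  hDboth : Ead → Ebd → 5 ≤ D.card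
  hT1 : T1.card = 6
  hT2 : T2.card = 6
  hT3 : T3.card = 6
  hT4 : T4.card = 6

namespace Ctx
variable {A B C D T1 T2 T3 T4 : Finset ℕ} {Eac Ead Ebc Ebd : Prop}

lemma swapAB (c : Ctx A B C D T1 T2 T3 T4 Eac Ead Ebc Ebd) :
    Ctx B A C D T1 T2 T3 T4 Ebc Ebd Eac Ead :=
  ⟨c.hB3, c.hA3, c.hC3, c.hD3, c.hBbc, c.hBbd, c.hBboth, c.hAac, c.hAad, c.hAboth,
    c.hCbc, c.hCac, fun h1 h2 => c.hCboth h2 h1,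
    c.hDbd, c.hDad, fun h1 h2 => c.hDboth h2 h1, c.hT1, c.hT2, c.hT3, c.hT4⟩

lemma swapCD (c : Ctx A B C D T1 T2 T3 T4 Eac Ead Ebc Ebd) :
    Ctx A B D C T1 T2 T3 T4 Ead Eac Ebd Ebc :=
  ⟨c.hA3, c.hB3, c.hD3, c.hC3, c.hAad, c.hAac, fun h1 h2 => c.hAboth h2 h1,
    c.hBbd, c.hBbc, fun h1 h2 => c.hBboth h2 h1,
    c.hDad, c.hDbd, c.hDboth, c.hCac, c.hCbc, c.hCboth, c.hT1, c.hT2, c.hT3, c.hT4⟩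

lemma swapSides (c : Ctx A B C D T1 T2 T3 T4 Eac Ead Ebc Ebd) :
    Ctx C D A B T1 T2 T3 T4 Eac Ebc Ead Ebd :=
  ⟨c.hC3, c.hD3, c.hA3, c.hB3, c.hCac, c.hCbc, c.hCboth, c.hDad, c.hDbd, c.hDboth,
    c.hAac, c.hAad, c.hAboth, c.hBbc, c.hBbd, c.hBboth, c.hT1, c.hT2, c.hT3, c.hT4⟩

end Ctx

section Core
variable {A B C D T1 T2 T3 T4 : Finset ℕ} {Eac Ead Ebc Ebd : Prop}

/-- Case 1: both `A ∩ B` and `C ∩ D` nonempty. -/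
lemma case1 (ctx : Ctx A B C D T1 T2 T3 T4 Eac Ead Ebc Ebd)
    (hAB : (A ∩ B).Nonempty) (hCD : (C ∩ D).Nonempty) :
    Sol A B C D T1 T2 T3 T4 Eac Ead Ebc Ebd := by
  obtain ⟨α0, hα0⟩ := hAB
  obtain ⟨β, hβ⟩ := hCD
  rw [Finset.mem_inter] at hα0 hβ
  by_cases hd1 : ∃ α ∈ A ∩ B, ∃ β' ∈ C ∩ D, α ≠ β'
  · obtain ⟨α, hα, β', hβ', hne⟩ := hd1
    rw [Finset.mem_inter] at hα hβ'
    have hS2 : ({α, α, β', β'} : Finset ℕ).card ≤ 2 :=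
      le_trans (Finset.card_le_card (by intro e he; simp at he ⊢; tauto)) card_le_two
    exact close ctx.hT1 ctx.hT2 ctx.hT3 ctx.hT4 hα.1 hα.2 hβ'.1 hβ'.2
      (fun _ => hne) (fun _ => hne) (fun _ => hne) (fun _ => hne)
      (Or.inl ⟨le_trans save0 (by omega), le_trans save0 hS2⟩)
  · push_neg at hd1
    have hαβ : α0 = β := hd1 α0 (Finset.mem_inter.mpr hα0) β (Finset.mem_inter.mpr hβ)
    subst hαβ
    -- now α0 ∈ A∩B and α0 ∈ C∩D; write β := α0
    by_cases hca : ¬Ebc ∧ ¬Ebd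
    · -- color b,c,d with α0, a fresh
      obtain ⟨pa, hpa, hpan⟩ := exists_avoid (B := A) (F := {α0})
        (by rw [Finset.card_singleton]; have := ctx.hA3; omega)
      rw [Finset.mem_singleton] at hpan
      have hS2 : ({pa, α0, α0, α0} : Finset ℕ).card ≤ 2 :=
        le_trans (Finset.card_le_card (by intro e he; simp at he ⊢; tauto)) card_le_two
      exact close ctx.hT1 ctx.hT2 ctx.hT3 ctx.hT4 hpa hα0.2 hβ.1 hβ.2
        (fun _ => hpan) (fun _ => hpan) (fun h => absurd h hca.1) (fun h => absurd h hca.2)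
        (Or.inl ⟨le_trans save0 (by omega), le_trans save0 hS2⟩)
    by_cases hcb : ¬Eac ∧ ¬Ead
    · obtain ⟨pb, hpb, hpbn⟩ := exists_avoid (B := B) (F := {α0})
        (by rw [Finset.card_singleton]; have := ctx.hB3; omega)
      rw [Finset.mem_singleton] at hpbn
      have hS2 : ({α0, pb, α0, α0} : Finset ℕ).card ≤ 2 :=
        le_trans (Finset.card_le_card (by intro e he; simp at he ⊢; tauto)) card_le_two
      exact close ctx.hT1 ctx.hT2 ctx.hT3 ctx.hT4 hα0.1 hpb hβ.1 hβ.2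
        (fun h => absurd h hcb.1) (fun h => absurd h hcb.2) (fun _ => hpbn) (fun _ => hpbn)
        (Or.inl ⟨le_trans save0 (by omega), le_trans save0 hS2⟩)
    by_cases hcc : ¬Ead ∧ ¬Ebd
    · obtain ⟨pc, hpc, hpcn⟩ := exists_avoid (B := C) (F := {α0})
        (by rw [Finset.card_singleton]; have := ctx.hC3; omega)
      rw [Finset.mem_singleton] at hpcn
      have hS2 : ({α0, α0, pc, α0} : Finset ℕ).card ≤ 2 :=
        le_trans (Finset.card_le_card (by intro e he; simp at he ⊢; tauto)) card_le_two
      exact close ctx.hT1 ctx.hT2 ctx.hT3 ctx.hT4 hα0.1 hα0.2 hpc hβ.2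
        (fun _ => Ne.symm hpcn) (fun h => absurd h hcc.1) (fun _ => Ne.symm hpcn)
        (fun h => absurd h hcc.2)
        (Or.inl ⟨le_trans save0 (by omega), le_trans save0 hS2⟩)
    by_cases hcd' : ¬Eac ∧ ¬Ebc
    · obtain ⟨pd, hpd, hpdn⟩ := exists_avoid (B := D) (F := {α0})
        (by rw [Finset.card_singleton]; have := ctx.hD3; omega)
      rw [Finset.mem_singleton] at hpdn
      have hS2 : ({α0, α0, α0, pd} : Finset ℕ).card ≤ 2 :=
        le_trans (Finset.card_le_card (by intro e he; simp at he ⊢; tauto)) card_le_two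
      exact close ctx.hT1 ctx.hT2 ctx.hT3 ctx.hT4 hα0.1 hα0.2 hβ.1 hpd
        (fun h => absurd h hcd'.1) (fun _ => Ne.symm hpdn) (fun h => absurd h hcd'.2)
        (fun _ => Ne.symm hpdn)
        (Or.inl ⟨le_trans save0 (by omega), le_trans save0 hS2⟩)
    -- at least two edges; |A| + |B| ≥ 8
    · have h8 : 8 ≤ A.card + B.card := by
        by_cases he1 : Eac
        · by_cases he2 : Ead
          · have := ctx.hAboth he1 he2; have := ctx.hB3; omega
          · have h3 := ctx.hAac he1
            have h4 : Ebd := by tauto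
            have := ctx.hBbd h4; omega
        · have h4 : Ead := by tauto
          have h5 : Ebc := by tauto
          have := ctx.hAad h4; have := ctx.hBbc h5; omega
      have hABsub : A ∩ B ⊆ {α0} := by
        intro e he
        rw [Finset.mem_singleton]
        exact hd1 e he α0 (Finset.mem_inter.mpr hβ)
      have hABcard : 7 ≤ (A ∪ B).card := by
        have h1 := Finset.card_union_add_card_inter A B
        have h2 : (A ∩ B).card ≤ 1 :=
          le_trans (Finset.card_le_card hABsub) (by rw [Finset.card_singleton])
        omega
      obtain ⟨γ, hγ, hγ4⟩ := exists_avoid (B := A ∪ B) (F := T4) (by rw [ctx.hT4]; omega)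
      by_cases hγβ : γ = α0
      · -- α0 ∉ T4
        subst hγβ
        obtain ⟨pa, hpa, hpan⟩ := exists_avoid (B := A) (F := {γ})
          (by rw [Finset.card_singleton]; have := ctx.hA3; omega)
        obtain ⟨pb, hpb, hpbn⟩ := exists_avoid (B := B) (F := {γ})
          (by rw [Finset.card_singleton]; have := ctx.hB3; omega)
        rw [Finset.mem_singleton] at hpan hpbn
        have hS3 : ({pa, pb, γ, γ} : Finset ℕ).card ≤ 3 :=
          le_trans (Finset.card_le_card
            (by intro e he; simp at he ⊢; tauto : ({pa, pb, γ, γ} : Finset ℕ) ⊆ {pa, pb, γ}))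
            card_le_three
        exact close ctx.hT1 ctx.hT2 ctx.hT3 ctx.hT4 hpa hpb hβ.1 hβ.2
          (fun _ => hpan) (fun _ => hpan) (fun _ => hpbn) (fun _ => hpbn)
          (Or.inl ⟨le_trans save0 (by omega),
            save1 (by simp) hγ4 (le_trans hS3 (by omega))⟩)
      · rcases Finset.mem_union.1 hγ with hγA | hγB
        · obtain ⟨pb, hpb, hpbn⟩ := exists_avoid (B := B) (F := {α0})
            (by rw [Finset.card_singleton]; have := ctx.hB3; omega)
          rw [Finset.mem_singleton] at hpbn
          have hS3 : ({γ, pb, α0, α0} : Finset ℕ).card ≤ 3 :=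
            le_trans (Finset.card_le_card
              (by intro e he; simp at he ⊢; tauto : ({γ, pb, α0, α0} : Finset ℕ) ⊆ {γ, pb, α0}))
              card_le_three
          exact close ctx.hT1 ctx.hT2 ctx.hT3 ctx.hT4 hγA hpb hβ.1 hβ.2
            (fun _ => hγβ) (fun _ => hγβ) (fun _ => hpbn) (fun _ => hpbn)
            (Or.inl ⟨le_trans save0 (by omega),
              save1 (by simp) hγ4 (le_trans hS3 (by omega))⟩)
        · obtain ⟨pa, hpa, hpan⟩ := exists_avoid (B := A) (F := {α0})
            (by rw [Finset.card_singleton]; have := ctx.hA3; omega)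
          rw [Finset.mem_singleton] at hpan
          have hS3 : ({pa, γ, α0, α0} : Finset ℕ).card ≤ 3 :=
            le_trans (Finset.card_le_card
              (by intro e he; simp at he ⊢; tauto : ({pa, γ, α0, α0} : Finset ℕ) ⊆ {pa, γ, α0}))
              card_le_three
          exact close ctx.hT1 ctx.hT2 ctx.hT3 ctx.hT4 hpa hγB hβ.1 hβ.2
            (fun _ => hpan) (fun _ => hpan) (fun _ => hγβ) (fun _ => hγβ)
            (Or.inl ⟨le_trans save0 (by omega),
              save1 (by simp) hγ4 (le_trans hS3 (by omega))⟩)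

/-- Single-merge analysis in the edgeless case. -/
lemma m0single {X X' Y Y' T3 T4 : Finset ℕ}
    (hX3 : 3 ≤ X.card) (hX'3 : 3 ≤ X'.card) (hY3 : 3 ≤ Y.card) (hY'3 : 3 ≤ Y'.card)
    (hXX' : X ∩ X' = ∅) (hYY' : Y ∩ Y' = ∅) (hX'Y' : X' ∩ Y' = ∅)
    (hT3 : T3.card = 6) (hT4 : T4.card = 6)
    {δ : ℕ} (hδX : δ ∈ X) (hδY : δ ∈ Y)
    (hexcl : X' ∩ Y = ∅ ∨ X ∩ Y' = ∅) :
    ∃ px px' py py' : ℕ, px ∈ X ∧ px' ∈ X' ∧ py ∈ Y ∧ py' ∈ Y' ∧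
      (((T3 ∩ {px, px', py, py'}).card ≤ 3 ∧ (T4 ∩ {px, px', py, py'}).card ≤ 2) ∨
       ((T4 ∩ {px, px', py, py'}).card ≤ 3 ∧ (T3 ∩ {px, px', py, py'}).card ≤ 2)) := by
  by_cases hI : ∃ ρ ∈ X' ∪ Y', ρ ∉ T3 ∨ ρ ∉ T4
  · obtain ⟨ρ, hρ, hρT⟩ := hI
    rcases Finset.mem_union.1 hρ with hρX' | hρY'
    · obtain ⟨py', hpy'⟩ := Finset.card_pos.mp (by omega : 0 < Y'.card)
      refine ⟨δ, ρ, δ, py', hδX, hρX', hδY, hpy', ?_⟩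
      have hS3 : ({δ, ρ, δ, py'} : Finset ℕ).card ≤ 3 :=
        le_trans (Finset.card_le_card
          (by intro e he; simp at he ⊢; tauto : ({δ, ρ, δ, py'} : Finset ℕ) ⊆ {δ, ρ, py'}))
          card_le_three
      rcases hρT with h3 | h4
      · exact Or.inr ⟨le_trans save0 (by omega), save1 (by simp) h3 (le_trans hS3 (by omega))⟩
      · exact Or.inl ⟨le_trans save0 (by omega), save1 (by simp) h4 (le_trans hS3 (by omega))⟩
    · obtain ⟨px', hpx'⟩ := Finset.card_pos.mp (by omega : 0 < X'.card)
      refine ⟨δ, px', δ, ρ, hδX, hpx', hδY, hρY', ?_⟩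
      have hS3 : ({δ, px', δ, ρ} : Finset ℕ).card ≤ 3 :=
        le_trans (Finset.card_le_card
          (by intro e he; simp at he ⊢; tauto : ({δ, px', δ, ρ} : Finset ℕ) ⊆ {δ, px', ρ}))
          card_le_three
      rcases hρT with h3 | h4
      · exact Or.inr ⟨le_trans save0 (by omega), save1 (by simp) h3 (le_trans hS3 (by omega))⟩
      · exact Or.inl ⟨le_trans save0 (by omega), save1 (by simp) h4 (le_trans hS3 (by omega))⟩
  · push_neg at hI
    have hsub3 : X' ∪ Y' ⊆ T3 := fun ρ h => (hI ρ h).1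
    have hsub4 : X' ∪ Y' ⊆ T4 := fun ρ h => (hI ρ h).2
    have hucard : (X' ∪ Y').card = X'.card + Y'.card := union_card_disj hX'Y'
    have hc3 : X'.card = 3 := by
      have := Finset.card_le_card hsub3; rw [hucard, hT3] at this; omega
    have hc3' : Y'.card = 3 := by
      have := Finset.card_le_card hsub3; rw [hucard, hT3] at this; omega
    have hT3eq : X' ∪ Y' = T3 :=
      Finset.eq_of_subset_of_card_le hsub3 (by rw [hucard, hT3]; omega)
    have hT4eq : X' ∪ Y' = T4 :=
      Finset.eq_of_subset_of_card_le hsub4 (by rw [hucard, hT4]; omega)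
    have hTT : T3 = T4 := hT3eq ▸ hT4eq
    by_cases hXT : ∃ γ ∈ X, γ ∉ T3
    · obtain ⟨γ, hγX, hγ3⟩ := hXT
      have hγ4 : γ ∉ T4 := hTT ▸ hγ3
      by_cases hYT : ∃ γ2 ∈ Y, γ2 ∉ T3
      · obtain ⟨γ2, hγ2Y, hγ23⟩ := hYT
        have hγ24 : γ2 ∉ T4 := hTT ▸ hγ23
        obtain ⟨px', hpx'⟩ := Finset.card_pos.mp (by omega : 0 < X'.card)
        obtain ⟨py', hpy'⟩ := Finset.card_pos.mp (by omega : 0 < Y'.card)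
        by_cases hγγ : γ = γ2
        · subst hγγ
          refine ⟨γ, px', γ, py', hγX, hpx', hγ2Y, hpy', ?_⟩
          have hS3 : ({γ, px', γ, py'} : Finset ℕ).card ≤ 3 :=
            le_trans (Finset.card_le_card
              (by intro e he; simp at he ⊢; tauto :
                ({γ, px', γ, py'} : Finset ℕ) ⊆ {γ, px', py'})) card_le_three
          exact Or.inl ⟨le_trans save0 (by omega),
            save1 (by simp) hγ4 (le_trans hS3 (by omega))⟩
        · refine ⟨γ, px', γ2, py', hγX, hpx', hγ2Y, hpy', ?_⟩
          exact Or.inl ⟨save1 (by simp) hγ3 (le_trans card_le_four (by omega)),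
            save2 (by simp) (by simp) hγγ hγ4 hγ24 (le_trans card_le_four (by omega))⟩
      · push_neg at hYT
        have hYsub : Y ⊆ X' := by
          intro y hy
          have hyT : y ∈ X' ∪ Y' := by rw [hT3eq]; exact hYT y hy
          rcases Finset.mem_union.1 hyT with h | h
          · exact h
          · exact absurd (Finset.mem_inter.mpr ⟨hy, h⟩)
              (by rw [hYY']; exact Finset.notMem_empty y)
        rcases hexcl with hexl | hexr
        · exfalso
          obtain ⟨y, hy⟩ := Finset.card_pos.mp (by omega : 0 < Y.card)
          exact absurd (Finset.mem_inter.mpr ⟨hYsub hy, hy⟩)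
            (by rw [hexl]; exact Finset.notMem_empty y)
        · obtain ⟨ρ, hρY⟩ := Finset.card_pos.mp (by omega : 0 < Y.card)
          obtain ⟨py', hpy'⟩ := Finset.card_pos.mp (by omega : 0 < Y'.card)
          refine ⟨γ, ρ, ρ, py', hγX, hYsub hρY, hρY, hpy', ?_⟩
          have hS3 : ({γ, ρ, ρ, py'} : Finset ℕ).card ≤ 3 :=
            le_trans (Finset.card_le_card
              (by intro e he; simp at he ⊢; tauto :
                ({γ, ρ, ρ, py'} : Finset ℕ) ⊆ {γ, ρ, py'})) card_le_three
          exact Or.inl ⟨le_trans save0 (by omega),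
            save1 (by simp) hγ4 (le_trans hS3 (by omega))⟩
    · push_neg at hXT
      have hXsub : X ⊆ Y' := by
        intro x hx
        have hxT : x ∈ X' ∪ Y' := by rw [hT3eq]; exact hXT x hx
        rcases Finset.mem_union.1 hxT with h | h
        · exact absurd (Finset.mem_inter.mpr ⟨hx, h⟩)
            (by rw [hXX']; exact Finset.notMem_empty x)
        · exact h
      rcases hexcl with hexl | hexr
      · by_cases hYT : ∃ γ2 ∈ Y, γ2 ∉ T3
        · obtain ⟨γ2, hγ2Y, hγ23⟩ := hYT
          have hγ24 : γ2 ∉ T4 := hTT ▸ hγ23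
          obtain ⟨ρ, hρX⟩ := Finset.card_pos.mp (by omega : 0 < X.card)
          obtain ⟨px', hpx'⟩ := Finset.card_pos.mp (by omega : 0 < X'.card)
          refine ⟨ρ, px', γ2, ρ, hρX, hpx', hγ2Y, hXsub hρX, ?_⟩
          have hS3 : ({ρ, px', γ2, ρ} : Finset ℕ).card ≤ 3 :=
            le_trans (Finset.card_le_card
              (by intro e he; simp at he ⊢; tauto :
                ({ρ, px', γ2, ρ} : Finset ℕ) ⊆ {ρ, px', γ2})) card_le_three
          exact Or.inl ⟨le_trans save0 (by omega),
            save1 (by simp) hγ24 (le_trans hS3 (by omega))⟩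
        · push_neg at hYT
          exfalso
          have hYsub : Y ⊆ X' := by
            intro y hy
            have hyT : y ∈ X' ∪ Y' := by rw [hT3eq]; exact hYT y hy
            rcases Finset.mem_union.1 hyT with h | h
            · exact h
            · exact absurd (Finset.mem_inter.mpr ⟨hy, h⟩)
                (by rw [hYY']; exact Finset.notMem_empty y)
          exact absurd (Finset.mem_inter.mpr ⟨hYsub hδY, hXsub hδX⟩)
            (by rw [hX'Y']; exact Finset.notMem_empty δ)
      · exfalso
        exact absurd (Finset.mem_inter.mpr ⟨hδX, hXsub hδX⟩)
          (by rw [hexr]; exact Finset.notMem_empty δ)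

/-- All-cross-disjoint analysis with two `T4`-missing elements located. -/
lemma m0disjA {X1 X2 X3 X4 T3 T4 : Finset ℕ}
    (h3c : 3 ≤ X3.card) (h4c : 3 ≤ X4.card)
    (h12 : X1 ∩ X2 = ∅) (h13 : X1 ∩ X3 = ∅) (h14 : X1 ∩ X4 = ∅) (h34 : X3 ∩ X4 = ∅)
    (hT3 : T3.card = 6)
    {u1 u2 : ℕ} (hu1 : u1 ∈ X1) (hu14 : u1 ∉ T4) (hu2 : u2 ∈ X2) (hu24 : u2 ∉ T4) :
    ∃ p1 p2 p3 p4 : ℕ, p1 ∈ X1 ∧ p2 ∈ X2 ∧ p3 ∈ X3 ∧ p4 ∈ X4 ∧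
      ((T3 ∩ {p1, p2, p3, p4}).card ≤ 3 ∧ (T4 ∩ {p1, p2, p3, p4}).card ≤ 2) := by
  have hne12 : u1 ≠ u2 := fun h => absurd (Finset.mem_inter.mpr ⟨hu1, h ▸ hu2⟩)
    (by rw [h12]; exact Finset.notMem_empty u1)
  by_cases hw3 : ∃ w ∈ X3, w ∉ T3
  · obtain ⟨w, hw, hwT⟩ := hw3
    obtain ⟨p4, hp4⟩ := Finset.card_pos.mp (by omega : 0 < X4.card)
    exact ⟨u1, u2, w, p4, hu1, hu2, hw, hp4,
      save1 (by simp) hwT (le_trans card_le_four (by omega)),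
      save2 (by simp) (by simp) hne12 hu14 hu24 (le_trans card_le_four (by omega))⟩
  by_cases hw4 : ∃ w ∈ X4, w ∉ T3
  · obtain ⟨w, hw, hwT⟩ := hw4
    obtain ⟨p3, hp3⟩ := Finset.card_pos.mp (by omega : 0 < X3.card)
    exact ⟨u1, u2, p3, w, hu1, hu2, hp3, hw,
      save1 (by simp) hwT (le_trans card_le_four (by omega)),
      save2 (by simp) (by simp) hne12 hu14 hu24 (le_trans card_le_four (by omega))⟩
  · push_neg at hw3 hw4
    have hsub : X3 ∪ X4 ⊆ T3 := by
      intro e he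
      rcases Finset.mem_union.1 he with h | h
      · exact hw3 e h
      · exact hw4 e h
    have heq : X3 ∪ X4 = T3 := by
      apply Finset.eq_of_subset_of_card_le hsub
      rw [union_card_disj h34, hT3]
      omega
    have hu13 : u1 ∉ T3 := by
      rw [← heq]
      intro h
      rcases Finset.mem_union.1 h with h' | h'
      · exact absurd (Finset.mem_inter.mpr ⟨hu1, h'⟩)
          (by rw [h13]; exact Finset.notMem_empty u1)
      · exact absurd (Finset.mem_inter.mpr ⟨hu1, h'⟩)
          (by rw [h14]; exact Finset.notMem_empty u1)
    obtain ⟨p3, hp3⟩ := Finset.card_pos.mp (by omega : 0 < X3.card)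
    obtain ⟨p4, hp4⟩ := Finset.card_pos.mp (by omega : 0 < X4.card)
    exact ⟨u1, u2, p3, p4, hu1, hu2, hp3, hp4,
      save1 (by simp) hu13 (le_trans card_le_four (by omega)),
      save2 (by simp) (by simp) hne12 hu14 hu24 (le_trans card_le_four (by omega))⟩

set_option maxHeartbeats 2000000 in
/-- The edgeless case of `sec22`. -/
lemma m0 (ctx : Ctx A B C D T1 T2 T3 T4 Eac Ead Ebc Ebd)
    (hAB : A ∩ B = ∅) (hCD : C ∩ D = ∅)
    (hnac : ¬Eac) (hnad : ¬Ead) (hnbc : ¬Ebc) (hnbd : ¬Ebd) :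
    Sol A B C D T1 T2 T3 T4 Eac Ead Ebc Ebd := by
  have hBA : B ∩ A = ∅ := by rw [Finset.inter_comm]; exact hAB
  have hDC : D ∩ C = ∅ := by rw [Finset.inter_comm]; exact hCD
  by_cases hh1 : (A ∩ C).Nonempty ∧ (B ∩ D).Nonempty
  · obtain ⟨⟨γ, hγ⟩, ⟨δ, hδ⟩⟩ := hh1
    rw [Finset.mem_inter] at hγ hδ
    have hS2 : ({γ, δ, γ, δ} : Finset ℕ).card ≤ 2 :=
      le_trans (Finset.card_le_card (by intro e he; simp at he ⊢; tauto)) card_le_two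
    exact close ctx.hT1 ctx.hT2 ctx.hT3 ctx.hT4 hγ.1 hδ.1 hγ.2 hδ.2
      (fun h => absurd h hnac) (fun h => absurd h hnad)
      (fun h => absurd h hnbc) (fun h => absurd h hnbd)
      (Or.inl ⟨le_trans save0 (by omega), le_trans save0 hS2⟩)
  by_cases hh2 : (A ∩ D).Nonempty ∧ (B ∩ C).Nonempty
  · obtain ⟨⟨γ, hγ⟩, ⟨δ, hδ⟩⟩ := hh2
    rw [Finset.mem_inter] at hγ hδ
    have hS2 : ({γ, δ, δ, γ} : Finset ℕ).card ≤ 2 :=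
      le_trans (Finset.card_le_card (by intro e he; simp at he ⊢; tauto)) card_le_two
    exact close ctx.hT1 ctx.hT2 ctx.hT3 ctx.hT4 hγ.1 hδ.1 hδ.2 hγ.2
      (fun h => absurd h hnac) (fun h => absurd h hnad)
      (fun h => absurd h hnbc) (fun h => absurd h hnbd)
      (Or.inl ⟨le_trans save0 (by omega), le_trans save0 hS2⟩)
  by_cases hs1 : (A ∩ C).Nonempty
  · have hscopy := hs1
    obtain ⟨δ, hδ⟩ := hscopy
    rw [Finset.mem_inter] at hδ
    have hBD : B ∩ D = ∅ := Finset.not_nonempty_iff_eq_empty.1 (fun h => hh1 ⟨hs1, h⟩)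
    have hexcl : B ∩ C = ∅ ∨ A ∩ D = ∅ := by
      by_cases h : (A ∩ D).Nonempty
      · exact Or.inl (Finset.not_nonempty_iff_eq_empty.1 (fun h2 => hh2 ⟨h, h2⟩))
      · exact Or.inr (Finset.not_nonempty_iff_eq_empty.1 h)
    obtain ⟨px, px', py, py', hpx, hpx', hpy, hpy', hsv⟩ :=
      m0single ctx.hA3 ctx.hB3 ctx.hC3 ctx.hD3 hAB hCD hBD ctx.hT3 ctx.hT4 hδ.1 hδ.2 hexcl
    rcases hsv with ⟨h3s, h4s⟩ | ⟨h3s, h4s⟩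
    · exact close ctx.hT1 ctx.hT2 ctx.hT3 ctx.hT4 hpx hpx' hpy hpy'
        (fun h => absurd h hnac) (fun h => absurd h hnad)
        (fun h => absurd h hnbc) (fun h => absurd h hnbd) (Or.inl ⟨h3s, h4s⟩)
    · exact close ctx.hT1 ctx.hT2 ctx.hT3 ctx.hT4 hpx hpx' hpy hpy'
        (fun h => absurd h hnac) (fun h => absurd h hnad)
        (fun h => absurd h hnbc) (fun h => absurd h hnbd) (Or.inr (Or.inl ⟨h3s, h4s⟩))
  by_cases hs2 : (A ∩ D).Nonempty
  · have hscopy := hs2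
    obtain ⟨δ, hδ⟩ := hscopy
    rw [Finset.mem_inter] at hδ
    have hBC : B ∩ C = ∅ := Finset.not_nonempty_iff_eq_empty.1 (fun h => hh2 ⟨hs2, h⟩)
    have hexcl : B ∩ D = ∅ ∨ A ∩ C = ∅ := by
      by_cases h : (A ∩ C).Nonempty
      · exact Or.inl (Finset.not_nonempty_iff_eq_empty.1 (fun h2 => hh1 ⟨h, h2⟩))
      · exact Or.inr (Finset.not_nonempty_iff_eq_empty.1 h)
    obtain ⟨px, px', py, py', hpx, hpx', hpy, hpy', hsv⟩ :=
      m0single ctx.hA3 ctx.hB3 ctx.hD3 ctx.hC3 hAB hDC hBC ctx.hT3 ctx.hT4 hδ.1 hδ.2 hexcl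
    have hseq : ({px, px', py', py} : Finset ℕ) = {px, px', py, py'} := by
      ext e
      simp only [Finset.mem_insert, Finset.mem_singleton]
      constructor <;> (rintro (rfl | rfl | rfl | rfl) <;> simp)
    rcases hsv with ⟨h3s, h4s⟩ | ⟨h3s, h4s⟩
    · exact close ctx.hT1 ctx.hT2 ctx.hT3 ctx.hT4 hpx hpx' hpy' hpy
        (fun h => absurd h hnac) (fun h => absurd h hnad)
        (fun h => absurd h hnbc) (fun h => absurd h hnbd)
        (Or.inl ⟨by rw [hseq]; exact h3s, by rw [hseq]; exact h4s⟩)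
    · exact close ctx.hT1 ctx.hT2 ctx.hT3 ctx.hT4 hpx hpx' hpy' hpy
        (fun h => absurd h hnac) (fun h => absurd h hnad)
        (fun h => absurd h hnbc) (fun h => absurd h hnbd)
        (Or.inr (Or.inl ⟨by rw [hseq]; exact h3s, by rw [hseq]; exact h4s⟩))
  by_cases hs3 : (B ∩ C).Nonempty
  · have hscopy := hs3
    obtain ⟨δ, hδ⟩ := hscopy
    rw [Finset.mem_inter] at hδ
    have hAD : A ∩ D = ∅ := Finset.not_nonempty_iff_eq_empty.1 (fun h => hh2 ⟨h, hs3⟩)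
    have hexcl : A ∩ C = ∅ ∨ B ∩ D = ∅ := by
      by_cases h : (A ∩ C).Nonempty
      · exact Or.inr (Finset.not_nonempty_iff_eq_empty.1 (fun h2 => hh1 ⟨h, h2⟩))
      · exact Or.inl (Finset.not_nonempty_iff_eq_empty.1 h)
    obtain ⟨px, px', py, py', hpx, hpx', hpy, hpy', hsv⟩ :=
      m0single ctx.hB3 ctx.hA3 ctx.hC3 ctx.hD3 hBA hCD hAD ctx.hT3 ctx.hT4 hδ.1 hδ.2 hexcl
    have hseq : ({px', px, py, py'} : Finset ℕ) = {px, px', py, py'} := by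
      ext e
      simp only [Finset.mem_insert, Finset.mem_singleton]
      constructor <;> (rintro (rfl | rfl | rfl | rfl) <;> simp)
    rcases hsv with ⟨h3s, h4s⟩ | ⟨h3s, h4s⟩
    · exact close ctx.hT1 ctx.hT2 ctx.hT3 ctx.hT4 hpx' hpx hpy hpy'
        (fun h => absurd h hnac) (fun h => absurd h hnad)
        (fun h => absurd h hnbc) (fun h => absurd h hnbd)
        (Or.inl ⟨by rw [hseq]; exact h3s, by rw [hseq]; exact h4s⟩)
    · exact close ctx.hT1 ctx.hT2 ctx.hT3 ctx.hT4 hpx' hpx hpy hpy'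
        (fun h => absurd h hnac) (fun h => absurd h hnad)
        (fun h => absurd h hnbc) (fun h => absurd h hnbd)
        (Or.inr (Or.inl ⟨by rw [hseq]; exact h3s, by rw [hseq]; exact h4s⟩))
  by_cases hs4 : (B ∩ D).Nonempty
  · have hscopy := hs4
    obtain ⟨δ, hδ⟩ := hscopy
    rw [Finset.mem_inter] at hδ
    have hAC : A ∩ C = ∅ := Finset.not_nonempty_iff_eq_empty.1 (fun h => hh1 ⟨h, hs4⟩)
    have hexcl : A ∩ D = ∅ ∨ B ∩ C = ∅ := by
      by_cases h : (A ∩ D).Nonempty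
      · exact Or.inr (Finset.not_nonempty_iff_eq_empty.1 (fun h2 => hh2 ⟨h, h2⟩))
      · exact Or.inl (Finset.not_nonempty_iff_eq_empty.1 h)
    obtain ⟨px, px', py, py', hpx, hpx', hpy, hpy', hsv⟩ :=
      m0single ctx.hB3 ctx.hA3 ctx.hD3 ctx.hC3 hBA hDC hAC ctx.hT3 ctx.hT4 hδ.1 hδ.2 hexcl
    have hseq : ({px', px, py', py} : Finset ℕ) = {px, px', py, py'} := by
      ext e
      simp only [Finset.mem_insert, Finset.mem_singleton]
      constructor <;> (rintro (rfl | rfl | rfl | rfl) <;> simp)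
    rcases hsv with ⟨h3s, h4s⟩ | ⟨h3s, h4s⟩
    · exact close ctx.hT1 ctx.hT2 ctx.hT3 ctx.hT4 hpx' hpx hpy' hpy
        (fun h => absurd h hnac) (fun h => absurd h hnad)
        (fun h => absurd h hnbc) (fun h => absurd h hnbd)
        (Or.inl ⟨by rw [hseq]; exact h3s, by rw [hseq]; exact h4s⟩)
    · exact close ctx.hT1 ctx.hT2 ctx.hT3 ctx.hT4 hpx' hpx hpy' hpy
        (fun h => absurd h hnac) (fun h => absurd h hnad)
        (fun h => absurd h hnbc) (fun h => absurd h hnbd)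
        (Or.inr (Or.inl ⟨by rw [hseq]; exact h3s, by rw [hseq]; exact h4s⟩))
  · -- all four cross intersections empty: pigeonhole
    have hAC : A ∩ C = ∅ := Finset.not_nonempty_iff_eq_empty.1 hs1
    have hAD : A ∩ D = ∅ := Finset.not_nonempty_iff_eq_empty.1 hs2
    have hBC : B ∩ C = ∅ := Finset.not_nonempty_iff_eq_empty.1 hs3
    have hBD : B ∩ D = ∅ := Finset.not_nonempty_iff_eq_empty.1 hs4
    have hCA : C ∩ A = ∅ := by rw [Finset.inter_comm]; exact hAC
    have hDA : D ∩ A = ∅ := by rw [Finset.inter_comm]; exact hAD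
    have hCB : C ∩ B = ∅ := by rw [Finset.inter_comm]; exact hBC
    have hDB : D ∩ B = ∅ := by rw [Finset.inter_comm]; exact hBD
    set U : Finset ℕ := (A ∪ B) ∪ (C ∪ D) with hU
    have hcross : (A ∪ B) ∩ (C ∪ D) = ∅ := by
      ext e
      simp only [Finset.mem_inter, Finset.mem_union, Finset.notMem_empty, iff_false, not_and]
      rintro (h | h) (h' | h')
      · exact absurd (Finset.mem_inter.mpr ⟨h, h'⟩) (by rw [hAC]; exact Finset.notMem_empty e)
      · exact absurd (Finset.mem_inter.mpr ⟨h, h'⟩) (by rw [hAD]; exact Finset.notMem_empty e)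
      · exact absurd (Finset.mem_inter.mpr ⟨h, h'⟩) (by rw [hBC]; exact Finset.notMem_empty e)
      · exact absurd (Finset.mem_inter.mpr ⟨h, h'⟩) (by rw [hBD]; exact Finset.notMem_empty e)
    have hUc : U.card = A.card + B.card + C.card + D.card := by
      rw [hU, union_card_disj hcross, union_card_disj hAB, union_card_disj hCD]
      omega
    obtain ⟨u1, hu1U, hu14⟩ := exists_avoid (B := U) (F := T4)
      (by
        have := ctx.hA3; have := ctx.hB3; have := ctx.hC3; have := ctx.hD3
        rw [ctx.hT4, hUc]; omega)
    have hu1' : u1 ∈ A ∨ u1 ∈ B ∨ u1 ∈ C ∨ u1 ∈ D := by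
      have := hu1U
      simp only [hU, Finset.mem_union] at this
      tauto
    rcases hu1' with hu1A | hu1B | hu1C | hu1D
    · obtain ⟨u2, hu2U, hu2n⟩ := exists_avoid (B := U) (F := T4 ∪ A)
        (by
          have h1 := Finset.card_union_le T4 A
          have := ctx.hA3; have := ctx.hB3; have := ctx.hC3; have := ctx.hD3
          rw [ctx.hT4] at h1
          rw [hUc]
          omega)
      have hu24 : u2 ∉ T4 := fun h => hu2n (Finset.mem_union_left _ h)
      have hu2L : u2 ∉ A := fun h => hu2n (Finset.mem_union_right _ h)
      have hu2' : u2 ∈ A ∨ u2 ∈ B ∨ u2 ∈ C ∨ u2 ∈ D := by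
        have := hu2U
        simp only [hU, Finset.mem_union] at this
        tauto
      rcases hu2' with hu2m | hu2m | hu2m | hu2m
      · exact absurd hu2m hu2L
      · obtain ⟨p1, p2, p3, p4, hp1, hp2, hp3, hp4, h3s, h4s⟩ :=
          m0disjA (X3 := C) (X4 := D) ctx.hC3 ctx.hD3
            hAB hAC hAD hCD ctx.hT3 hu1A hu14 hu2m hu24
        have hseq : ({p1, p2, p3, p4} : Finset ℕ) = {p1, p2, p3, p4} := rfl
        exact close ctx.hT1 ctx.hT2 ctx.hT3 ctx.hT4 hp1 hp2 hp3 hp4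
          (fun h => absurd h hnac) (fun h => absurd h hnad) (fun h => absurd h hnbc) (fun h => absurd h hnbd)
          (Or.inl ⟨by rw [hseq]; exact h3s, by rw [hseq]; exact h4s⟩)
      · obtain ⟨p1, p2, p3, p4, hp1, hp2, hp3, hp4, h3s, h4s⟩ :=
          m0disjA (X3 := B) (X4 := D) ctx.hB3 ctx.hD3
            hAC hAB hAD hBD ctx.hT3 hu1A hu14 hu2m hu24
        have hseq : ({p1, p3, p2, p4} : Finset ℕ) = {p1, p2, p3, p4} := by
          ext e
          simp only [Finset.mem_insert, Finset.mem_singleton]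
          constructor <;> (rintro (rfl | rfl | rfl | rfl) <;> simp)
        exact close ctx.hT1 ctx.hT2 ctx.hT3 ctx.hT4 hp1 hp3 hp2 hp4
          (fun h => absurd h hnac) (fun h => absurd h hnad) (fun h => absurd h hnbc) (fun h => absurd h hnbd)
          (Or.inl ⟨by rw [hseq]; exact h3s, by rw [hseq]; exact h4s⟩)
      · obtain ⟨p1, p2, p3, p4, hp1, hp2, hp3, hp4, h3s, h4s⟩ :=
          m0disjA (X3 := B) (X4 := C) ctx.hB3 ctx.hC3
            hAD hAB hAC hBC ctx.hT3 hu1A hu14 hu2m hu24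
        have hseq : ({p1, p3, p4, p2} : Finset ℕ) = {p1, p2, p3, p4} := by
          ext e
          simp only [Finset.mem_insert, Finset.mem_singleton]
          constructor <;> (rintro (rfl | rfl | rfl | rfl) <;> simp)
        exact close ctx.hT1 ctx.hT2 ctx.hT3 ctx.hT4 hp1 hp3 hp4 hp2
          (fun h => absurd h hnac) (fun h => absurd h hnad) (fun h => absurd h hnbc) (fun h => absurd h hnbd)
          (Or.inl ⟨by rw [hseq]; exact h3s, by rw [hseq]; exact h4s⟩)
    · obtain ⟨u2, hu2U, hu2n⟩ := exists_avoid (B := U) (F := T4 ∪ B)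
        (by
          have h1 := Finset.card_union_le T4 B
          have := ctx.hA3; have := ctx.hB3; have := ctx.hC3; have := ctx.hD3
          rw [ctx.hT4] at h1
          rw [hUc]
          omega)
      have hu24 : u2 ∉ T4 := fun h => hu2n (Finset.mem_union_left _ h)
      have hu2L : u2 ∉ B := fun h => hu2n (Finset.mem_union_right _ h)
      have hu2' : u2 ∈ A ∨ u2 ∈ B ∨ u2 ∈ C ∨ u2 ∈ D := by
        have := hu2U
        simp only [hU, Finset.mem_union] at this
        tauto
      rcases hu2' with hu2m | hu2m | hu2m | hu2m
      · obtain ⟨p1, p2, p3, p4, hp1, hp2, hp3, hp4, h3s, h4s⟩ :=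
          m0disjA (X3 := C) (X4 := D) ctx.hC3 ctx.hD3
            hBA hBC hBD hCD ctx.hT3 hu1B hu14 hu2m hu24
        have hseq : ({p2, p1, p3, p4} : Finset ℕ) = {p1, p2, p3, p4} := by
          ext e
          simp only [Finset.mem_insert, Finset.mem_singleton]
          constructor <;> (rintro (rfl | rfl | rfl | rfl) <;> simp)
        exact close ctx.hT1 ctx.hT2 ctx.hT3 ctx.hT4 hp2 hp1 hp3 hp4
          (fun h => absurd h hnac) (fun h => absurd h hnad) (fun h => absurd h hnbc) (fun h => absurd h hnbd)
          (Or.inl ⟨by rw [hseq]; exact h3s, by rw [hseq]; exact h4s⟩)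
      · exact absurd hu2m hu2L
      · obtain ⟨p1, p2, p3, p4, hp1, hp2, hp3, hp4, h3s, h4s⟩ :=
          m0disjA (X3 := A) (X4 := D) ctx.hA3 ctx.hD3
            hBC hBA hBD hAD ctx.hT3 hu1B hu14 hu2m hu24
        have hseq : ({p3, p1, p2, p4} : Finset ℕ) = {p1, p2, p3, p4} := by
          ext e
          simp only [Finset.mem_insert, Finset.mem_singleton]
          constructor <;> (rintro (rfl | rfl | rfl | rfl) <;> simp)
        exact close ctx.hT1 ctx.hT2 ctx.hT3 ctx.hT4 hp3 hp1 hp2 hp4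
          (fun h => absurd h hnac) (fun h => absurd h hnad) (fun h => absurd h hnbc) (fun h => absurd h hnbd)
          (Or.inl ⟨by rw [hseq]; exact h3s, by rw [hseq]; exact h4s⟩)
      · obtain ⟨p1, p2, p3, p4, hp1, hp2, hp3, hp4, h3s, h4s⟩ :=
          m0disjA (X3 := A) (X4 := C) ctx.hA3 ctx.hC3
            hBD hBA hBC hAC ctx.hT3 hu1B hu14 hu2m hu24
        have hseq : ({p3, p1, p4, p2} : Finset ℕ) = {p1, p2, p3, p4} := by
          ext e
          simp only [Finset.mem_insert, Finset.mem_singleton]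
          constructor <;> (rintro (rfl | rfl | rfl | rfl) <;> simp)
        exact close ctx.hT1 ctx.hT2 ctx.hT3 ctx.hT4 hp3 hp1 hp4 hp2
          (fun h => absurd h hnac) (fun h => absurd h hnad) (fun h => absurd h hnbc) (fun h => absurd h hnbd)
          (Or.inl ⟨by rw [hseq]; exact h3s, by rw [hseq]; exact h4s⟩)
    · obtain ⟨u2, hu2U, hu2n⟩ := exists_avoid (B := U) (F := T4 ∪ C)
        (by
          have h1 := Finset.card_union_le T4 C
          have := ctx.hA3; have := ctx.hB3; have := ctx.hC3; have := ctx.hD3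
          rw [ctx.hT4] at h1
          rw [hUc]
          omega)
      have hu24 : u2 ∉ T4 := fun h => hu2n (Finset.mem_union_left _ h)
      have hu2L : u2 ∉ C := fun h => hu2n (Finset.mem_union_right _ h)
      have hu2' : u2 ∈ A ∨ u2 ∈ B ∨ u2 ∈ C ∨ u2 ∈ D := by
        have := hu2U
        simp only [hU, Finset.mem_union] at this
        tauto
      rcases hu2' with hu2m | hu2m | hu2m | hu2m
      · obtain ⟨p1, p2, p3, p4, hp1, hp2, hp3, hp4, h3s, h4s⟩ :=
          m0disjA (X3 := B) (X4 := D) ctx.hB3 ctx.hD3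
            hCA hCB hCD hBD ctx.hT3 hu1C hu14 hu2m hu24
        have hseq : ({p2, p3, p1, p4} : Finset ℕ) = {p1, p2, p3, p4} := by
          ext e
          simp only [Finset.mem_insert, Finset.mem_singleton]
          constructor <;> (rintro (rfl | rfl | rfl | rfl) <;> simp)
        exact close ctx.hT1 ctx.hT2 ctx.hT3 ctx.hT4 hp2 hp3 hp1 hp4
          (fun h => absurd h hnac) (fun h => absurd h hnad) (fun h => absurd h hnbc) (fun h => absurd h hnbd)
          (Or.inl ⟨by rw [hseq]; exact h3s, by rw [hseq]; exact h4s⟩)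
      · obtain ⟨p1, p2, p3, p4, hp1, hp2, hp3, hp4, h3s, h4s⟩ :=
          m0disjA (X3 := A) (X4 := D) ctx.hA3 ctx.hD3
            hCB hCA hCD hAD ctx.hT3 hu1C hu14 hu2m hu24
        have hseq : ({p3, p2, p1, p4} : Finset ℕ) = {p1, p2, p3, p4} := by
          ext e
          simp only [Finset.mem_insert, Finset.mem_singleton]
          constructor <;> (rintro (rfl | rfl | rfl | rfl) <;> simp)
        exact close ctx.hT1 ctx.hT2 ctx.hT3 ctx.hT4 hp3 hp2 hp1 hp4
          (fun h => absurd h hnac) (fun h => absurd h hnad) (fun h => absurd h hnbc) (fun h => absurd h hnbd)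
          (Or.inl ⟨by rw [hseq]; exact h3s, by rw [hseq]; exact h4s⟩)
      · exact absurd hu2m hu2L
      · obtain ⟨p1, p2, p3, p4, hp1, hp2, hp3, hp4, h3s, h4s⟩ :=
          m0disjA (X3 := A) (X4 := B) ctx.hA3 ctx.hB3
            hCD hCA hCB hAB ctx.hT3 hu1C hu14 hu2m hu24
        have hseq : ({p3, p4, p1, p2} : Finset ℕ) = {p1, p2, p3, p4} := by
          ext e
          simp only [Finset.mem_insert, Finset.mem_singleton]
          constructor <;> (rintro (rfl | rfl | rfl | rfl) <;> simp)
        exact close ctx.hT1 ctx.hT2 ctx.hT3 ctx.hT4 hp3 hp4 hp1 hp2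
          (fun h => absurd h hnac) (fun h => absurd h hnad) (fun h => absurd h hnbc) (fun h => absurd h hnbd)
          (Or.inl ⟨by rw [hseq]; exact h3s, by rw [hseq]; exact h4s⟩)
    · obtain ⟨u2, hu2U, hu2n⟩ := exists_avoid (B := U) (F := T4 ∪ D)
        (by
          have h1 := Finset.card_union_le T4 D
          have := ctx.hA3; have := ctx.hB3; have := ctx.hC3; have := ctx.hD3
          rw [ctx.hT4] at h1
          rw [hUc]
          omega)
      have hu24 : u2 ∉ T4 := fun h => hu2n (Finset.mem_union_left _ h)
      have hu2L : u2 ∉ D := fun h => hu2n (Finset.mem_union_right _ h)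
      have hu2' : u2 ∈ A ∨ u2 ∈ B ∨ u2 ∈ C ∨ u2 ∈ D := by
        have := hu2U
        simp only [hU, Finset.mem_union] at this
        tauto
      rcases hu2' with hu2m | hu2m | hu2m | hu2m
      · obtain ⟨p1, p2, p3, p4, hp1, hp2, hp3, hp4, h3s, h4s⟩ :=
          m0disjA (X3 := B) (X4 := C) ctx.hB3 ctx.hC3
            hDA hDB hDC hBC ctx.hT3 hu1D hu14 hu2m hu24
        have hseq : ({p2, p3, p4, p1} : Finset ℕ) = {p1, p2, p3, p4} := by
          ext e
          simp only [Finset.mem_insert, Finset.mem_singleton]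
          constructor <;> (rintro (rfl | rfl | rfl | rfl) <;> simp)
        exact close ctx.hT1 ctx.hT2 ctx.hT3 ctx.hT4 hp2 hp3 hp4 hp1
          (fun h => absurd h hnac) (fun h => absurd h hnad) (fun h => absurd h hnbc) (fun h => absurd h hnbd)
          (Or.inl ⟨by rw [hseq]; exact h3s, by rw [hseq]; exact h4s⟩)
      · obtain ⟨p1, p2, p3, p4, hp1, hp2, hp3, hp4, h3s, h4s⟩ :=
          m0disjA (X3 := A) (X4 := C) ctx.hA3 ctx.hC3
            hDB hDA hDC hAC ctx.hT3 hu1D hu14 hu2m hu24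
        have hseq : ({p3, p2, p4, p1} : Finset ℕ) = {p1, p2, p3, p4} := by
          ext e
          simp only [Finset.mem_insert, Finset.mem_singleton]
          constructor <;> (rintro (rfl | rfl | rfl | rfl) <;> simp)
        exact close ctx.hT1 ctx.hT2 ctx.hT3 ctx.hT4 hp3 hp2 hp4 hp1
          (fun h => absurd h hnac) (fun h => absurd h hnad) (fun h => absurd h hnbc) (fun h => absurd h hnbd)
          (Or.inl ⟨by rw [hseq]; exact h3s, by rw [hseq]; exact h4s⟩)
      · obtain ⟨p1, p2, p3, p4, hp1, hp2, hp3, hp4, h3s, h4s⟩ :=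
          m0disjA (X3 := A) (X4 := B) ctx.hA3 ctx.hB3
            hDC hDA hDB hAB ctx.hT3 hu1D hu14 hu2m hu24
        have hseq : ({p3, p4, p2, p1} : Finset ℕ) = {p1, p2, p3, p4} := by
          ext e
          simp only [Finset.mem_insert, Finset.mem_singleton]
          constructor <;> (rintro (rfl | rfl | rfl | rfl) <;> simp)
        exact close ctx.hT1 ctx.hT2 ctx.hT3 ctx.hT4 hp3 hp4 hp2 hp1
          (fun h => absurd h hnac) (fun h => absurd h hnad) (fun h => absurd h hnbc) (fun h => absurd h hnbd)
          (Or.inl ⟨by rw [hseq]; exact h3s, by rw [hseq]; exact h4s⟩)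
      · exact absurd hu2m hu2L

set_option maxHeartbeats 2000000 in
/-- Step 1 of the `m ≥ 1` case: the free pair `(a,c)` has a common color. -/
lemma step1 (ctx : Ctx A B C D T1 T2 T3 T4 Eac Ead Ebc Ebd)
    (hAB : A ∩ B = ∅) (hCD : C ∩ D = ∅) (hnac : ¬Eac)
    {δ : ℕ} (hδA : δ ∈ A) (hδC : δ ∈ C) (hm : Ead ∨ Ebc ∨ Ebd) :
    Sol A B C D T1 T2 T3 T4 Eac Ead Ebc Ebd := by
  by_cases h0 : ∃ ρ, ρ ∈ A ∧ ρ ∈ C ∧ (ρ ∉ T3 ∨ ρ ∉ T4)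
  · obtain ⟨ρ, hρA, hρC, hρT⟩ := h0
    obtain ⟨py', hpy', hpy'n⟩ := exists_avoid (B := D) (F := {ρ})
      (by rw [Finset.card_singleton]; have := ctx.hD3; omega)
    obtain ⟨px', hpx', hpx'n⟩ := exists_avoid (B := B) (F := {ρ, py'})
      (by have := card_le_two (x := ρ) (y := py'); have := ctx.hB3; omega)
    rw [Finset.mem_singleton] at hpy'n
    simp only [Finset.mem_insert, Finset.mem_singleton, not_or] at hpx'n
    have hS3 : ({ρ, px', ρ, py'} : Finset ℕ).card ≤ 3 :=
      le_trans (Finset.card_le_card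
        (by intro e he; simp at he ⊢; tauto : ({ρ, px', ρ, py'} : Finset ℕ) ⊆ {ρ, px', py'}))
        card_le_three
    refine close ctx.hT1 ctx.hT2 ctx.hT3 ctx.hT4 hρA hpx' hρC hpy'
      (fun h => absurd h hnac) (fun _ => Ne.symm hpy'n) (fun _ => hpx'n.1)
      (fun _ => hpx'n.2) ?_
    rcases hρT with h3 | h4
    · exact Or.inr (Or.inl ⟨le_trans save0 (by omega),
        save1 (by simp) h3 (le_trans hS3 (by omega))⟩)
    · exact Or.inl ⟨le_trans save0 (by omega), save1 (by simp) h4 (le_trans hS3 (by omega))⟩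
  by_cases hi : ∃ ρ, ρ ∈ D ∧ ρ ≠ δ ∧ (ρ ∉ T3 ∨ ρ ∉ T4)
  · obtain ⟨ρ, hρD, hρδ, hρT⟩ := hi
    obtain ⟨px', hpx', hpx'n⟩ := exists_avoid (B := B) (F := {δ, ρ})
      (by have := card_le_two (x := δ) (y := ρ); have := ctx.hB3; omega)
    simp only [Finset.mem_insert, Finset.mem_singleton, not_or] at hpx'n
    have hS3 : ({δ, px', δ, ρ} : Finset ℕ).card ≤ 3 :=
      le_trans (Finset.card_le_card
        (by intro e he; simp at he ⊢; tauto : ({δ, px', δ, ρ} : Finset ℕ) ⊆ {δ, px', ρ}))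
        card_le_three
    refine close ctx.hT1 ctx.hT2 ctx.hT3 ctx.hT4 hδA hpx' hδC hρD
      (fun h => absurd h hnac) (fun _ => Ne.symm hρδ) (fun _ => hpx'n.1)
      (fun _ => hpx'n.2) ?_
    rcases hρT with h3 | h4
    · exact Or.inr (Or.inl ⟨le_trans save0 (by omega),
        save1 (by simp) h3 (le_trans hS3 (by omega))⟩)
    · exact Or.inl ⟨le_trans save0 (by omega), save1 (by simp) h4 (le_trans hS3 (by omega))⟩
  by_cases hii : ∃ ρ, ρ ∈ B ∧ ρ ≠ δ ∧ (ρ ∉ T3 ∨ ρ ∉ T4)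
  · obtain ⟨ρ, hρB, hρδ, hρT⟩ := hii
    obtain ⟨py', hpy', hpy'n⟩ := exists_avoid (B := D) (F := {δ, ρ})
      (by have := card_le_two (x := δ) (y := ρ); have := ctx.hD3; omega)
    simp only [Finset.mem_insert, Finset.mem_singleton, not_or] at hpy'n
    have hS3 : ({δ, ρ, δ, py'} : Finset ℕ).card ≤ 3 :=
      le_trans (Finset.card_le_card
        (by intro e he; simp at he ⊢; tauto : ({δ, ρ, δ, py'} : Finset ℕ) ⊆ {δ, ρ, py'}))
        card_le_three
    refine close ctx.hT1 ctx.hT2 ctx.hT3 ctx.hT4 hδA hρB hδC hpy'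
      (fun h => absurd h hnac) (fun _ => Ne.symm hpy'n.1) (fun _ => hρδ)
      (fun _ => Ne.symm hpy'n.2) ?_
    rcases hρT with h3 | h4
    · exact Or.inr (Or.inl ⟨le_trans save0 (by omega),
        save1 (by simp) h3 (le_trans hS3 (by omega))⟩)
    · exact Or.inl ⟨le_trans save0 (by omega), save1 (by simp) h4 (le_trans hS3 (by omega))⟩
  -- now B and D are inside T3 ∩ T4, and A ∩ C ⊆ T3 ∩ T4
  push_neg at h0 hi hii
  have hACI : ∀ ρ, ρ ∈ A → ρ ∈ C → ρ ∈ T3 ∧ ρ ∈ T4 := h0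
  have hBI : ∀ ρ ∈ B, ρ ∈ T3 ∧ ρ ∈ T4 := by
    intro ρ hρ
    refine hii ρ hρ (fun h => ?_)
    exact absurd (Finset.mem_inter.mpr ⟨hδA, h ▸ hρ⟩)
      (by rw [hAB]; exact Finset.notMem_empty δ)
  have hDI : ∀ ρ ∈ D, ρ ∈ T3 ∧ ρ ∈ T4 := by
    intro ρ hρ
    refine hi ρ hρ (fun h => ?_)
    exact absurd (Finset.mem_inter.mpr ⟨hδC, h ▸ hρ⟩)
      (by rw [hCD]; exact Finset.notMem_empty δ)
  have hsumAB : 7 ≤ A.card + B.card := by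
    rcases hm with h | h | h
    · have := ctx.hAad h; have := ctx.hB3; omega
    · have := ctx.hBbc h; have := ctx.hA3; omega
    · have := ctx.hBbd h; have := ctx.hA3; omega
  have hsumCD : 7 ≤ C.card + D.card := by
    rcases hm with h | h | h
    · have := ctx.hDad h; have := ctx.hC3; omega
    · have := ctx.hCbc h; have := ctx.hD3; omega
    · have := ctx.hDbd h; have := ctx.hC3; omega
  have hBT4 : B ⊆ T4 := fun ρ h => (hBI ρ h).2
  have hBT3 : B ⊆ T3 := fun ρ h => (hBI ρ h).1
  have hDT4 : D ⊆ T4 := fun ρ h => (hDI ρ h).2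
  have hDT3 : D ⊆ T3 := fun ρ h => (hDI ρ h).1
  have hA4 := diff_lower hAB hBT4
  have hC4 := diff_lower hCD hDT4
  have hA3' := diff_lower hAB hBT3
  have hC3' := diff_lower hCD hDT3
  obtain ⟨γ1, hγ1m⟩ := Finset.card_pos.mp (by rw [ctx.hT4] at hA4; omega : 0 < (A \ T4).card)
  obtain ⟨γ2, hγ2m⟩ := Finset.card_pos.mp (by rw [ctx.hT4] at hC4; omega : 0 < (C \ T4).card)
  rw [Finset.mem_sdiff] at hγ1m hγ2m
  obtain ⟨hγ1A, hγ14⟩ := hγ1m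
  obtain ⟨hγ2C, hγ24⟩ := hγ2m
  have hγγ : γ1 ≠ γ2 := fun h => hγ14 (hACI γ1 hγ1A (h ▸ hγ2C)).2
  by_cases ha : ∃ γ, γ ∈ A ∧ γ ∉ T3 ∧ γ ∉ T4
  · obtain ⟨γ, hγA, hγ3, hγ4⟩ := ha
    have hne : γ ≠ γ2 := fun h => hγ4 (hACI γ hγA (h ▸ hγ2C)).2
    obtain ⟨py', hpy', hpy'n⟩ := exists_avoid (B := D) (F := {γ})
      (by rw [Finset.card_singleton]; have := ctx.hD3; omega)
    obtain ⟨px', hpx', hpx'n⟩ := exists_avoid (B := B) (F := {γ2, py'})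
      (by have := card_le_two (x := γ2) (y := py'); have := ctx.hB3; omega)
    rw [Finset.mem_singleton] at hpy'n
    simp only [Finset.mem_insert, Finset.mem_singleton, not_or] at hpx'n
    exact close ctx.hT1 ctx.hT2 ctx.hT3 ctx.hT4 hγA hpx' hγ2C hpy'
      (fun h => absurd h hnac) (fun _ => Ne.symm hpy'n) (fun _ => hpx'n.1)
      (fun _ => hpx'n.2)
      (Or.inl ⟨save1 (by simp) hγ3 (le_trans card_le_four (by omega)),
        save2 (by simp) (by simp) hne hγ4 hγ24 (le_trans card_le_four (by omega))⟩)
  by_cases hc : ∃ γ, γ ∈ C ∧ γ ∉ T3 ∧ γ ∉ T4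
  · obtain ⟨γ, hγC, hγ3, hγ4⟩ := hc
    have hne : γ1 ≠ γ := fun h => hγ14 (hACI γ1 hγ1A (h ▸ hγC)).2
    obtain ⟨py', hpy', hpy'n⟩ := exists_avoid (B := D) (F := {γ1})
      (by rw [Finset.card_singleton]; have := ctx.hD3; omega)
    obtain ⟨px', hpx', hpx'n⟩ := exists_avoid (B := B) (F := {γ, py'})
      (by have := card_le_two (x := γ) (y := py'); have := ctx.hB3; omega)
    rw [Finset.mem_singleton] at hpy'n
    simp only [Finset.mem_insert, Finset.mem_singleton, not_or] at hpx'n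
    exact close ctx.hT1 ctx.hT2 ctx.hT3 ctx.hT4 hγ1A hpx' hγC hpy'
      (fun h => absurd h hnac) (fun _ => Ne.symm hpy'n) (fun _ => hpx'n.1)
      (fun _ => hpx'n.2)
      (Or.inl ⟨save1 (by simp) hγ3 (le_trans card_le_four (by omega)),
        save2 (by simp) (by simp) hne hγ14 hγ4 (le_trans card_le_four (by omega))⟩)
  · -- A \ T4 ⊆ T3 and A \ T3 ⊆ T4 (and same for C)
    push_neg at ha hc
    by_cases h3 : ¬Ebd ∧ (B ∩ D).Nonempty
    · obtain ⟨ρ, hρ⟩ := h3.2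
      rw [Finset.mem_inter] at hρ
      have hρT4 : ρ ∈ T4 := (hBI ρ hρ.1).2
      have hS3 : ({γ1, ρ, γ2, ρ} : Finset ℕ).card ≤ 3 :=
        le_trans (Finset.card_le_card
          (by intro e he; simp at he ⊢; tauto : ({γ1, ρ, γ2, ρ} : Finset ℕ) ⊆ {γ1, ρ, γ2}))
          card_le_three
      exact close ctx.hT1 ctx.hT2 ctx.hT3 ctx.hT4 hγ1A hρ.1 hγ2C hρ.2
        (fun h => absurd h hnac) (fun _ => fun h => hγ14 (h ▸ hρT4))
        (fun _ => fun h => hγ24 (h.symm ▸ hρT4)) (fun h => absurd h h3.1)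
        (Or.inl ⟨le_trans save0 (by omega),
          save1 (by simp) hγ14 (le_trans hS3 (by omega))⟩)
    · -- contradiction by counting
      exfalso
      by_cases hbd : Ebd
      · -- |B ∪ D| ≥ 4, A\T3, C\T3 nonempty, δ: all disjoint inside T4
        have hB4 : 4 ≤ B.card := ctx.hBbd hbd
        have hBDsub : B ∪ D ⊆ T4 := Finset.union_subset hBT4 hDT4
        obtain ⟨δ1, hδ1m⟩ := Finset.card_pos.mp
          (by rw [ctx.hT3] at hA3'; omega : 0 < (A \ T3).card)
        obtain ⟨δ2, hδ2m⟩ := Finset.card_pos.mp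
          (by rw [ctx.hT3] at hC3'; omega : 0 < (C \ T3).card)
        rw [Finset.mem_sdiff] at hδ1m hδ2m
        have hδ1T4 : δ1 ∈ T4 := ha δ1 hδ1m.1 hδ1m.2
        have hδ2T4 : δ2 ∈ T4 := hc δ2 hδ2m.1 hδ2m.2
        have hδT : δ ∈ T3 ∧ δ ∈ T4 := hACI δ hδA hδC
        have hd12 : δ1 ≠ δ2 := fun h => hδ1m.2 (hACI δ1 hδ1m.1 (h ▸ hδ2m.1)).1
        have hd1δ : δ1 ≠ δ := fun h => hδ1m.2 (h ▸ hδT.1)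
        have hd2δ : δ2 ≠ δ := fun h => hδ2m.2 (h ▸ hδT.1)
        have hset : ({δ1, δ2, δ} : Finset ℕ).card = 3 := by
          rw [Finset.card_insert_of_notMem (by simp [hd12, hd1δ]),
            Finset.card_insert_of_notMem (by simp [hd2δ]), Finset.card_singleton]
        have hdisj : ((B ∪ D) ∩ ({δ1, δ2, δ} : Finset ℕ)) = ∅ := by
          ext e
          simp only [Finset.mem_inter, Finset.mem_union, Finset.mem_insert,
            Finset.mem_singleton, Finset.notMem_empty, iff_false, not_and]
          rintro (h | h) (rfl | rfl | rfl)
          · exact absurd (Finset.mem_inter.mpr ⟨hδ1m.1, h⟩)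
              (by rw [hAB]; exact Finset.notMem_empty _)
          · exact hδ2m.2 (hBT3 h)
          · exact absurd (Finset.mem_inter.mpr ⟨hδA, h⟩)
              (by rw [hAB]; exact Finset.notMem_empty _)
          · exact hδ1m.2 (hDT3 h)
          · exact absurd (Finset.mem_inter.mpr ⟨hδ2m.1, h⟩)
              (by rw [hCD]; exact Finset.notMem_empty _)
          · exact absurd (Finset.mem_inter.mpr ⟨hδC, h⟩)
              (by rw [hCD]; exact Finset.notMem_empty _)
        have hsub : (B ∪ D) ∪ ({δ1, δ2, δ} : Finset ℕ) ⊆ T4 := by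
          refine Finset.union_subset hBDsub ?_
          intro e he
          rcases Finset.mem_insert.1 he with rfl | he
          · exact hδ1T4
          rcases Finset.mem_insert.1 he with rfl | he
          · exact hδ2T4
          · rw [Finset.mem_singleton] at he
            exact he ▸ hδT.2
        have hcard := Finset.card_le_card hsub
        rw [union_card_disj hdisj, hset, ctx.hT4] at hcard
        have hBle : B.card ≤ (B ∪ D).card :=
          Finset.card_le_card Finset.subset_union_left
        omega
      · have hBD : B ∩ D = ∅ :=
          Finset.not_nonempty_iff_eq_empty.1 (fun hne => h3 ⟨hbd, hne⟩)
        have hγ13 : γ1 ∈ T3 := by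
          by_contra h
          exact hγ14 (ha γ1 hγ1A h)
        have hγ1BD : γ1 ∉ B ∪ D := by
          intro h
          rcases Finset.mem_union.1 h with h' | h'
          · exact hγ14 (hBT4 h')
          · exact hγ14 (hDT4 h')
        have hsub : insert γ1 (B ∪ D) ⊆ T3 :=
          Finset.insert_subset hγ13 (Finset.union_subset hBT3 hDT3)
        have hcard := Finset.card_le_card hsub
        rw [Finset.card_insert_of_notMem hγ1BD, union_card_disj hBD, ctx.hT3] at hcard
        have := ctx.hB3
        have := ctx.hD3
        omega

set_option maxHeartbeats 2000000 in
/-- The `(C ∪ D) \ T4` singleton case of step 2a, normalized to `u ∈ A ∩ C`. -/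
lemma step2q (ctx : Ctx A B C D T1 T2 T3 T4 Eac Ead Ebc Ebd)
    (hAB : A ∩ B = ∅) (hCD : C ∩ D = ∅)
    (hPac : ¬Eac → A ∩ C = ∅) (hPad : ¬Ead → A ∩ D = ∅)
    (hPbc : ¬Ebc → B ∩ C = ∅) (hPbd : ¬Ebd → B ∩ D = ∅)
    {u : ℕ} (hu : u ∈ A) (hu4 : u ∉ T4) (huC : u ∈ C)
    (hQsing : ∀ v ∈ C ∪ D, v ∉ T4 → v = u) :
    Sol A B C D T1 T2 T3 T4 Eac Ead Ebc Ebd := by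
  have hEac : Eac := by
    by_contra h
    exact absurd (Finset.mem_inter.mpr ⟨hu, huC⟩)
      (by rw [hPac h]; exact Finset.notMem_empty u)
  have hC4 := ctx.hCac hEac
  have hsub : C ∪ D ⊆ insert u T4 := by
    intro e he
    by_cases h : e ∈ T4
    · exact Finset.mem_insert_of_mem h
    · rw [hQsing e he h]; exact Finset.mem_insert_self u T4
  have hCD7 : C.card + D.card ≤ 7 := by
    have h1 := Finset.card_le_card hsub
    have h2 := Finset.card_insert_le u T4
    rw [union_card_disj hCD] at h1
    rw [ctx.hT4] at h2
    omega
  have hnad : ¬Ead := fun h => by have := ctx.hDad h; omega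
  have hnbc : ¬Ebc := fun h => by have := ctx.hCboth hEac h; have := ctx.hD3; omega
  have hnbd : ¬Ebd := fun h => by have := ctx.hDbd h; omega
  have hBC : B ∩ C = ∅ := hPbc hnbc
  have hBD : B ∩ D = ∅ := hPbd hnbd
  have hCDcard : 7 ≤ C.card + D.card := by have := ctx.hD3; omega
  have hT4sub : T4 ⊆ C ∪ D := by
    have h2 : C ∪ D ⊆ ((C ∪ D) ∩ T4) ∪ {u} := by
      intro e he
      by_cases h : e ∈ T4
      · exact Finset.mem_union_left _ (Finset.mem_inter.mpr ⟨he, h⟩)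
      · rw [hQsing e he h]; exact Finset.mem_union_right _ (Finset.mem_singleton_self u)
    have h3 := Finset.card_le_card h2
    have h4 := Finset.card_union_le ((C ∪ D) ∩ T4) ({u} : Finset ℕ)
    rw [union_card_disj hCD] at h3
    rw [Finset.card_singleton] at h4
    have h5 : T4.card ≤ ((C ∪ D) ∩ T4).card := by rw [ctx.hT4]; omega
    have h6 := Finset.eq_of_subset_of_card_le Finset.inter_subset_right h5
    rw [← h6]
    exact Finset.inter_subset_left
  have hBT4 : ∀ x ∈ B, x ∉ T4 := by
    intro x hx h
    rcases Finset.mem_union.1 (hT4sub h) with h' | h'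
    · exact absurd (Finset.mem_inter.mpr ⟨hx, h'⟩)
        (by rw [hBC]; exact Finset.notMem_empty x)
    · exact absurd (Finset.mem_inter.mpr ⟨hx, h'⟩)
        (by rw [hBD]; exact Finset.notMem_empty x)
  obtain ⟨u', hu'B⟩ := Finset.card_pos.mp (by have := ctx.hB3; omega : 0 < B.card)
  have hu'4 : u' ∉ T4 := hBT4 u' hu'B
  have hune : u ≠ u' := fun h => absurd (Finset.mem_inter.mpr ⟨hu, h ▸ hu'B⟩)
    (by rw [hAB]; exact Finset.notMem_empty u)
  obtain ⟨v3, hv3m, hv3T3⟩ := exists_avoid (B := C ∪ D) (F := T3)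
    (by rw [union_card_disj hCD, ctx.hT3]; omega)
  by_cases hv3u : v3 = u
  · -- u ∉ T3 as well
    subst hv3u
    obtain ⟨py, hpy, hpyn⟩ := exists_avoid (B := C) (F := {v3})
      (by rw [Finset.card_singleton]; omega)
    obtain ⟨py', hpy'⟩ := Finset.card_pos.mp (by have := ctx.hD3; omega : 0 < D.card)
    rw [Finset.mem_singleton] at hpyn
    exact close ctx.hT1 ctx.hT2 ctx.hT3 ctx.hT4 hu hu'B hpy hpy'
      (fun _ => Ne.symm hpyn) (fun h => absurd h hnad)
      (fun h => absurd h hnbc) (fun h => absurd h hnbd)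
      (Or.inl ⟨save1 (by simp) hv3T3 (le_trans card_le_four (by omega)),
        save2 (by simp) (by simp) hune hu4 hu'4 (le_trans card_le_four (by omega))⟩)
  · have hv3T4 : v3 ∈ T4 := by
      by_contra h
      exact hv3u (hQsing v3 hv3m h)
    rcases Finset.mem_union.1 hv3m with hv3C | hv3D
    · obtain ⟨py', hpy'⟩ := Finset.card_pos.mp (by have := ctx.hD3; omega : 0 < D.card)
      exact close ctx.hT1 ctx.hT2 ctx.hT3 ctx.hT4 hu hu'B hv3C hpy'
        (fun _ => fun h => hu4 (h ▸ hv3T4)) (fun h => absurd h hnad)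
        (fun h => absurd h hnbc) (fun h => absurd h hnbd)
        (Or.inl ⟨save1 (by simp) hv3T3 (le_trans card_le_four (by omega)),
          save2 (by simp) (by simp) hune hu4 hu'4 (le_trans card_le_four (by omega))⟩)
    · obtain ⟨py, hpy, hpyn⟩ := exists_avoid (B := C) (F := {u})
        (by rw [Finset.card_singleton]; omega)
      rw [Finset.mem_singleton] at hpyn
      exact close ctx.hT1 ctx.hT2 ctx.hT3 ctx.hT4 hu hu'B hpy hv3D
        (fun _ => Ne.symm hpyn) (fun _ => fun h => hu4 (h ▸ hv3T4))
        (fun h => absurd h hnbc) (fun h => absurd h hnbd)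
        (Or.inl ⟨save1 (by simp) hv3T3 (le_trans card_le_four (by omega)),
          save2 (by simp) (by simp) hune hu4 hu'4 (le_trans card_le_four (by omega))⟩)

set_option maxHeartbeats 2000000 in
/-- Step 2a : some element of `A` misses both `T3` and `T4`. -/
lemma step2a (ctx : Ctx A B C D T1 T2 T3 T4 Eac Ead Ebc Ebd)
    (hAB : A ∩ B = ∅) (hCD : C ∩ D = ∅)
    (hPac : ¬Eac → A ∩ C = ∅) (hPad : ¬Ead → A ∩ D = ∅)
    (hPbc : ¬Ebc → B ∩ C = ∅) (hPbd : ¬Ebd → B ∩ D = ∅)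
    (hm : Eac ∨ Ead ∨ Ebc ∨ Ebd)
    {u : ℕ} (hu : u ∈ A) (hu3 : u ∉ T3) (hu4 : u ∉ T4) :
    Sol A B C D T1 T2 T3 T4 Eac Ead Ebc Ebd := by
  by_cases hv : ∃ v, v ∈ C ∪ D ∧ v ∉ T4 ∧ v ≠ u
  · obtain ⟨v, hvm, hv4, hvne⟩ := hv
    rcases Finset.mem_union.1 hvm with hvC | hvD
    · obtain ⟨py', hpy', hpy'n⟩ := exists_avoid (B := D) (F := {u})
        (by rw [Finset.card_singleton]; have := ctx.hD3; omega)
      obtain ⟨px', hpx', hpx'n⟩ := exists_avoid (B := B) (F := {v, py'})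
        (by have := card_le_two (x := v) (y := py'); have := ctx.hB3; omega)
      rw [Finset.mem_singleton] at hpy'n
      simp only [Finset.mem_insert, Finset.mem_singleton, not_or] at hpx'n
      exact close ctx.hT1 ctx.hT2 ctx.hT3 ctx.hT4 hu hpx' hvC hpy'
        (fun _ => hvne.symm) (fun _ => Ne.symm hpy'n) (fun _ => hpx'n.1) (fun _ => hpx'n.2)
        (Or.inl ⟨save1 (by simp) hu3 (le_trans card_le_four (by omega)),
          save2 (by simp) (by simp) hvne.symm hu4 hv4 (le_trans card_le_four (by omega))⟩)
    · obtain ⟨py, hpy, hpyn⟩ := exists_avoid (B := C) (F := {u})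
        (by rw [Finset.card_singleton]; have := ctx.hC3; omega)
      obtain ⟨px', hpx', hpx'n⟩ := exists_avoid (B := B) (F := {py, v})
        (by have := card_le_two (x := py) (y := v); have := ctx.hB3; omega)
      rw [Finset.mem_singleton] at hpyn
      simp only [Finset.mem_insert, Finset.mem_singleton, not_or] at hpx'n
      exact close ctx.hT1 ctx.hT2 ctx.hT3 ctx.hT4 hu hpx' hpy hvD
        (fun _ => Ne.symm hpyn) (fun _ => hvne.symm) (fun _ => hpx'n.1) (fun _ => hpx'n.2)
        (Or.inl ⟨save1 (by simp) hu3 (le_trans card_le_four (by omega)),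
          save2 (by simp) (by simp) hvne.symm hu4 hv4 (le_trans card_le_four (by omega))⟩)
  · push_neg at hv
    have hQsing : ∀ v ∈ C ∪ D, v ∉ T4 → v = u := fun v h1 h2 => hv v h1 h2
    have hCD7 : 7 ≤ C.card + D.card := by
      rcases hm with h | h | h | h
      · have := ctx.hCac h; have := ctx.hD3; omega
      · have := ctx.hDad h; have := ctx.hC3; omega
      · have := ctx.hCbc h; have := ctx.hD3; omega
      · have := ctx.hDbd h; have := ctx.hC3; omega
    obtain ⟨v0, hv0m, hv04⟩ := exists_avoid (B := C ∪ D) (F := T4)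
      (by rw [union_card_disj hCD, ctx.hT4]; omega)
    have hv0u : v0 = u := hQsing v0 hv0m hv04
    subst hv0u
    rcases Finset.mem_union.1 hv0m with huC | huD
    · exact step2q ctx hAB hCD hPac hPad hPbc hPbd hu hu4 huC hQsing
    · refine swapCD (step2q ctx.swapCD hAB (by rw [Finset.inter_comm]; exact hCD)
        hPad hPac hPbd hPbc hu hu4 huD ?_)
      intro v hvm h4
      refine hQsing v ?_ h4
      rcases Finset.mem_union.1 hvm with h | h
      · exact Finset.mem_union_right _ h
      · exact Finset.mem_union_left _ h

/-- Dispatcher for step 2a over the two slots of the first side. -/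
lemma step2atop (ctx : Ctx A B C D T1 T2 T3 T4 Eac Ead Ebc Ebd)
    (hAB : A ∩ B = ∅) (hCD : C ∩ D = ∅)
    (hPac : ¬Eac → A ∩ C = ∅) (hPad : ¬Ead → A ∩ D = ∅)
    (hPbc : ¬Ebc → B ∩ C = ∅) (hPbd : ¬Ebd → B ∩ D = ∅)
    (hm : Eac ∨ Ead ∨ Ebc ∨ Ebd)
    {u : ℕ} (hu : u ∈ A ∪ B) (hu3 : u ∉ T3) (hu4 : u ∉ T4) :
    Sol A B C D T1 T2 T3 T4 Eac Ead Ebc Ebd := by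
  rcases Finset.mem_union.1 hu with huA | huB
  · exact step2a ctx hAB hCD hPac hPad hPbc hPbd hm huA hu3 hu4
  · exact swapAB (step2a ctx.swapAB (by rw [Finset.inter_comm]; exact hAB) hCD
      hPbc hPbd hPac hPad (by tauto) huB hu3 hu4)

/-- Contradiction helper for the all-singleton case of step 2. -/
lemma step2sing_aux {X Y X' Y' T4 : Finset ℕ}
    (hXY' : X ∩ Y' = ∅) (hX'Y : X' ∩ Y = ∅) (hX'Y' : X' ∩ Y' = ∅)
    (hT4 : T4.card = 6) (hYb : Y.card ≤ 4)
    (hsubAB : T4 ⊆ X ∪ X') (hsubCD : T4 ⊆ Y ∪ Y') : False := by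
  have hTsub : T4 ⊆ X ∩ Y := by
    intro t ht
    rcases Finset.mem_union.1 (hsubAB ht) with h1 | h1 <;>
      rcases Finset.mem_union.1 (hsubCD ht) with h2 | h2
    · exact Finset.mem_inter.mpr ⟨h1, h2⟩
    · exact absurd (Finset.mem_inter.mpr ⟨h1, h2⟩)
        (by rw [hXY']; exact Finset.notMem_empty t)
    · exact absurd (Finset.mem_inter.mpr ⟨h1, h2⟩)
        (by rw [hX'Y]; exact Finset.notMem_empty t)
    · exact absurd (Finset.mem_inter.mpr ⟨h1, h2⟩)
        (by rw [hX'Y']; exact Finset.notMem_empty t)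
  have h1 := Finset.card_le_card hTsub
  have h2 : (X ∩ Y).card ≤ Y.card := Finset.card_le_card Finset.inter_subset_right
  omega

set_option maxHeartbeats 4000000 in
/-- Step 2c : `u ∈ A \ T4`, `v ∈ C \ T4`, `u ≠ v`, no element of either side misses both. -/
lemma step2c (ctx : Ctx A B C D T1 T2 T3 T4 Eac Ead Ebc Ebd)
    (hAB : A ∩ B = ∅) (hCD : C ∩ D = ∅)
    (hPac : ¬Eac → A ∩ C = ∅) (hPad : ¬Ead → A ∩ D = ∅)
    (hPbc : ¬Ebc → B ∩ C = ∅) (hPbd : ¬Ebd → B ∩ D = ∅)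
    (hm : Eac ∨ Ead ∨ Ebc ∨ Ebd)
    (hnoAB : ∀ w ∈ A ∪ B, w ∉ T3 → w ∈ T4) (hnoCD : ∀ w ∈ C ∪ D, w ∉ T3 → w ∈ T4)
    {u v : ℕ} (hu : u ∈ A) (hu4 : u ∉ T4) (hv : v ∈ C) (hv4 : v ∉ T4) (huv : u ≠ v) :
    Sol A B C D T1 T2 T3 T4 Eac Ead Ebc Ebd := by
  have hu3 : u ∈ T3 := by
    by_contra h
    exact hu4 (hnoAB u (Finset.mem_union_left _ hu) h)
  have hv3 : v ∈ T3 := by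
    by_contra h
    exact hv4 (hnoCD v (Finset.mem_union_left _ hv) h)
  by_cases hdB : ∃ δ, δ ∈ B ∧ δ ∉ T3
  · obtain ⟨δ, hδB, hδ3⟩ := hdB
    have hδ4 : δ ∈ T4 := hnoAB δ (Finset.mem_union_right _ hδB) hδ3
    obtain ⟨py', hpy', hpy'n⟩ := exists_avoid (B := D) (F := {u, δ})
      (by have := card_le_two (x := u) (y := δ); have := ctx.hD3; omega)
    simp only [Finset.mem_insert, Finset.mem_singleton, not_or] at hpy'n
    exact close ctx.hT1 ctx.hT2 ctx.hT3 ctx.hT4 hu hδB hv hpy'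
      (fun _ => huv) (fun _ => Ne.symm hpy'n.1)
      (fun _ => fun h => hv4 (h ▸ hδ4)) (fun _ => Ne.symm hpy'n.2)
      (Or.inl ⟨save1 (by simp) hδ3 (le_trans card_le_four (by omega)),
        save2 (by simp) (by simp) huv hu4 hv4 (le_trans card_le_four (by omega))⟩)
  by_cases hdD : ∃ δ, δ ∈ D ∧ δ ∉ T3
  · obtain ⟨δ, hδD, hδ3⟩ := hdD
    have hδ4 : δ ∈ T4 := hnoCD δ (Finset.mem_union_right _ hδD) hδ3
    obtain ⟨px', hpx', hpx'n⟩ := exists_avoid (B := B) (F := {v, δ})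
      (by have := card_le_two (x := v) (y := δ); have := ctx.hB3; omega)
    simp only [Finset.mem_insert, Finset.mem_singleton, not_or] at hpx'n
    exact close ctx.hT1 ctx.hT2 ctx.hT3 ctx.hT4 hu hpx' hv hδD
      (fun _ => huv) (fun _ => fun h => hu4 (h ▸ hδ4))
      (fun _ => hpx'n.1) (fun _ => hpx'n.2)
      (Or.inl ⟨save1 (by simp) hδ3 (le_trans card_le_four (by omega)),
        save2 (by simp) (by simp) huv hu4 hv4 (le_trans card_le_four (by omega))⟩)
  push_neg at hdB hdD
  have hBT3 : B ⊆ T3 := fun x hx => hdB x hx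
  have hDT3 : D ⊆ T3 := fun x hx => hdD x hx
  have hAB7 : 7 ≤ A.card + B.card := by
    rcases hm with h | h | h | h
    · have := ctx.hAac h; have := ctx.hB3; omega
    · have := ctx.hAad h; have := ctx.hB3; omega
    · have := ctx.hBbc h; have := ctx.hA3; omega
    · have := ctx.hBbd h; have := ctx.hA3; omega
  have hCD7 : 7 ≤ C.card + D.card := by
    rcases hm with h | h | h | h
    · have := ctx.hCac h; have := ctx.hD3; omega
    · have := ctx.hDad h; have := ctx.hC3; omega
    · have := ctx.hCbc h; have := ctx.hD3; omega
    · have := ctx.hDbd h; have := ctx.hC3; omega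
  have hdiffA3 := diff_lower hAB hBT3
  have hdiffC3 := diff_lower hCD hDT3
  obtain ⟨δ1, hδ1m⟩ := Finset.card_pos.mp
    (by rw [ctx.hT3] at hdiffA3; omega : 0 < (A \ T3).card)
  obtain ⟨δ2, hδ2m⟩ := Finset.card_pos.mp
    (by rw [ctx.hT3] at hdiffC3; omega : 0 < (C \ T3).card)
  rw [Finset.mem_sdiff] at hδ1m hδ2m
  have hδ1T4 : δ1 ∈ T4 := hnoAB δ1 (Finset.mem_union_left _ hδ1m.1) hδ1m.2
  have hδ2T4 : δ2 ∈ T4 := hnoCD δ2 (Finset.mem_union_left _ hδ2m.1) hδ2m.2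
  by_cases hu2 : ∃ w, w ∈ B ∧ w ∉ T4
  · obtain ⟨u2, hu2B, hu24⟩ := hu2
    by_cases hu2v : u2 = v
    · obtain ⟨py', hpy', hpy'n⟩ := exists_avoid (B := D) (F := {u, u2})
        (by have := card_le_two (x := u) (y := u2); have := ctx.hD3; omega)
      simp only [Finset.mem_insert, Finset.mem_singleton, not_or] at hpy'n
      have hne : u ≠ u2 := fun h => absurd (Finset.mem_inter.mpr ⟨hu, h ▸ hu2B⟩)
        (by rw [hAB]; exact Finset.notMem_empty u)
      exact close ctx.hT1 ctx.hT2 ctx.hT3 ctx.hT4 hu hu2B hδ2m.1 hpy'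
        (fun _ => fun h => hδ2m.2 (h ▸ hu3)) (fun _ => Ne.symm hpy'n.1)
        (fun _ => fun h => hδ2m.2 (h ▸ (hBT3 hu2B))) (fun _ => Ne.symm hpy'n.2)
        (Or.inl ⟨save1 (by simp) hδ2m.2 (le_trans card_le_four (by omega)),
          save2 (by simp) (by simp) hne hu4 hu24 (le_trans card_le_four (by omega))⟩)
    · obtain ⟨py', hpy', hpy'n⟩ := exists_avoid (B := D) (F := {δ1, u2})
        (by have := card_le_two (x := δ1) (y := u2); have := ctx.hD3; omega)
      simp only [Finset.mem_insert, Finset.mem_singleton, not_or] at hpy'n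
      have hne2 : u2 ≠ v := hu2v
      exact close ctx.hT1 ctx.hT2 ctx.hT3 ctx.hT4 hδ1m.1 hu2B hv hpy'
        (fun _ => fun h => hv4 (h ▸ hδ1T4)) (fun _ => Ne.symm hpy'n.1)
        (fun _ => hne2) (fun _ => Ne.symm hpy'n.2)
        (Or.inl ⟨save1 (by simp) hδ1m.2 (le_trans card_le_four (by omega)),
          save2 (by simp) (by simp) hne2 hu24 hv4 (le_trans card_le_four (by omega))⟩)
  by_cases hv2 : ∃ w, w ∈ D ∧ w ∉ T4
  · obtain ⟨v2, hv2D, hv24⟩ := hv2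
    by_cases hv2u : v2 = u
    · obtain ⟨px', hpx', hpx'n⟩ := exists_avoid (B := B) (F := {v, v2})
        (by have := card_le_two (x := v) (y := v2); have := ctx.hB3; omega)
      simp only [Finset.mem_insert, Finset.mem_singleton, not_or] at hpx'n
      have hne : v ≠ v2 := fun h => huv (h ▸ hv2u).symm
      exact close ctx.hT1 ctx.hT2 ctx.hT3 ctx.hT4 hδ1m.1 hpx' hv hv2D
        (fun _ => fun h => hv4 (h ▸ hδ1T4))
        (fun _ => fun h => hδ1m.2 (h ▸ (hv2u ▸ hu3 : v2 ∈ T3)))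
        (fun _ => hpx'n.1) (fun _ => hpx'n.2)
        (Or.inl ⟨save1 (by simp) hδ1m.2 (le_trans card_le_four (by omega)),
          save2 (by simp) (by simp) hne hv4 hv24 (le_trans card_le_four (by omega))⟩)
    · obtain ⟨px', hpx', hpx'n⟩ := exists_avoid (B := B) (F := {δ2, v2})
        (by have := card_le_two (x := δ2) (y := v2); have := ctx.hB3; omega)
      simp only [Finset.mem_insert, Finset.mem_singleton, not_or] at hpx'n
      have hne2 : u ≠ v2 := fun h => hv2u h.symm
      exact close ctx.hT1 ctx.hT2 ctx.hT3 ctx.hT4 hu hpx' hδ2m.1 hv2D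
        (fun _ => fun h => hδ2m.2 (h ▸ hu3)) (fun _ => hne2)
        (fun _ => hpx'n.1) (fun _ => hpx'n.2)
        (Or.inl ⟨save1 (by simp) hδ2m.2 (le_trans card_le_four (by omega)),
          save2 (by simp) (by simp) hne2 hu4 hv24 (le_trans card_le_four (by omega))⟩)
  push_neg at hu2 hv2
  have hBT4 : B ⊆ T4 := fun x hx => hu2 x hx
  have hDT4 : D ⊆ T4 := fun x hx => hv2 x hx
  by_cases hbd : Ebd
  swap
  · -- ¬Ebd : contradiction
    exfalso
    have hBD : B ∩ D = ∅ := hPbd hbd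
    have huBD : u ∉ B ∪ D := by
      intro h
      rcases Finset.mem_union.1 h with h' | h'
      · exact hu4 (hBT4 h')
      · exact hu4 (hDT4 h')
    have hsub : insert u (B ∪ D) ⊆ T3 :=
      Finset.insert_subset hu3 (Finset.union_subset hBT3 hDT3)
    have hcard := Finset.card_le_card hsub
    rw [Finset.card_insert_of_notMem huBD, union_card_disj hBD, ctx.hT3] at hcard
    have := ctx.hB3; have := ctx.hD3
    omega
  · have hB4 := ctx.hBbd hbd
    have hD4 := ctx.hDbd hbd
    have hA4T3 : A \ T4 ⊆ T3 := by
      intro e he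
      rw [Finset.mem_sdiff] at he
      by_contra h
      exact he.2 (hnoAB e (Finset.mem_union_left _ he.1) h)
    have hC4T3 : C \ T4 ⊆ T3 := by
      intro e he
      rw [Finset.mem_sdiff] at he
      by_contra h
      exact he.2 (hnoCD e (Finset.mem_union_left _ he.1) h)
    have hA3T4 : A \ T3 ⊆ T4 := by
      intro e he
      rw [Finset.mem_sdiff] at he
      exact hnoAB e (Finset.mem_union_left _ he.1) he.2
    have hC3T4 : C \ T3 ⊆ T4 := by
      intro e he
      rw [Finset.mem_sdiff] at he
      exact hnoCD e (Finset.mem_union_left _ he.1) he.2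
    have hdiffA4 := diff_lower hAB hBT4
    have hdiffC4 := diff_lower hCD hDT4
    -- three-part bounds inside T3 and T4
    have hdisj3 : (B ∪ D) ∩ ((A \ T4) ∪ (C \ T4)) = ∅ := by
      ext e
      simp only [Finset.mem_inter, Finset.mem_union, Finset.mem_sdiff,
        Finset.notMem_empty, iff_false, not_and]
      rintro (h | h) (⟨_, h4⟩ | ⟨_, h4⟩) <;> first
        | exact h4 (hBT4 h) | exact h4 (hDT4 h)
    have hkey3 : (B ∪ D).card + ((A \ T4) ∪ (C \ T4)).card ≤ 6 := by
      have hsub : (B ∪ D) ∪ ((A \ T4) ∪ (C \ T4)) ⊆ T3 :=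
        Finset.union_subset (Finset.union_subset hBT3 hDT3)
          (Finset.union_subset hA4T3 hC4T3)
      have h1 := Finset.card_le_card hsub
      rw [union_card_disj hdisj3, ctx.hT3] at h1
      exact h1
    have hdisj4 : (B ∪ D) ∩ ((A \ T3) ∪ (C \ T3)) = ∅ := by
      ext e
      simp only [Finset.mem_inter, Finset.mem_union, Finset.mem_sdiff,
        Finset.notMem_empty, iff_false, not_and]
      rintro (h | h) (⟨_, h3⟩ | ⟨_, h3⟩) <;> first
        | exact h3 (hBT3 h) | exact h3 (hDT3 h)
    have hkey4 : (B ∪ D).card + ((A \ T3) ∪ (C \ T3)).card ≤ 6 := by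
      have hsub : (B ∪ D) ∪ ((A \ T3) ∪ (C \ T3)) ⊆ T4 :=
        Finset.union_subset (Finset.union_subset hBT4 hDT4)
          (Finset.union_subset hA3T4 hC3T4)
      have h1 := Finset.card_le_card hsub
      rw [union_card_disj hdisj4, ctx.hT4] at h1
      exact h1
    have hBDb : B.card ≤ (B ∪ D).card := Finset.card_le_card Finset.subset_union_left
    have hA4u : (A \ T4).card ≤ ((A \ T4) ∪ (C \ T4)).card :=
      Finset.card_le_card Finset.subset_union_left
    have hC4u : (C \ T4).card ≤ ((A \ T4) ∪ (C \ T4)).card :=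
      Finset.card_le_card Finset.subset_union_right
    have hA3u : (A \ T3).card ≤ ((A \ T3) ∪ (C \ T3)).card :=
      Finset.card_le_card Finset.subset_union_left
    have hC3u : (C \ T3).card ≤ ((A \ T3) ∪ (C \ T3)).card :=
      Finset.card_le_card Finset.subset_union_right
    have hsub3' : (B ∪ D) ∪ ((A \ T4) ∪ (C \ T4)) ⊆ T3 :=
      Finset.union_subset (Finset.union_subset hBT3 hDT3)
        (Finset.union_subset hA4T3 hC4T3)
    have hac : Eac := by
      by_contra hnac
      have hACe : A ∩ C = ∅ := hPac hnac
      have h44 : ((A \ T4) ∩ (C \ T4)) = ∅ := by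
        rw [Finset.eq_empty_iff_forall_notMem]
        intro e he
        rw [Finset.mem_inter, Finset.mem_sdiff, Finset.mem_sdiff] at he
        exact absurd (Finset.mem_inter.mpr ⟨he.1.1, he.2.1⟩)
          (by rw [hACe]; exact Finset.notMem_empty e)
      have h33 : ((A \ T3) ∩ (C \ T3)) = ∅ := by
        rw [Finset.eq_empty_iff_forall_notMem]
        intro e he
        rw [Finset.mem_inter, Finset.mem_sdiff, Finset.mem_sdiff] at he
        exact absurd (Finset.mem_inter.mpr ⟨he.1.1, he.2.1⟩)
          (by rw [hACe]; exact Finset.notMem_empty e)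
      have hsum44 := union_card_disj h44
      have hsum33 := union_card_disj h33
      have hnad : ¬Ead := by
        intro h
        have := ctx.hAad h
        have := ctx.hDboth h hbd
        rw [ctx.hT4] at hdiffA4 hdiffC4
        omega
      have hnbc : ¬Ebc := by
        intro h
        have := ctx.hCbc h
        have := ctx.hBboth h hbd
        rw [ctx.hT4] at hdiffA4 hdiffC4
        omega
      have hADe : A ∩ D = ∅ := hPad hnad
      rw [ctx.hT4] at hdiffA4 hdiffC4
      rw [ctx.hT3] at hdiffA3 hdiffC3
      have heqT3 : (B ∪ D) ∪ ((A \ T4) ∪ (C \ T4)) = T3 := by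
        apply Finset.eq_of_subset_of_card_le hsub3'
        rw [union_card_disj hdisj3, hsum44, ctx.hT3]
        omega
      have hAT3 : ∀ e, e ∈ A → e ∈ T3 → e ∉ T4 := by
        intro e heA heT3
        rw [← heqT3] at heT3
        rcases Finset.mem_union.1 heT3 with h' | h'
        · rcases Finset.mem_union.1 h' with h'' | h''
          · exact absurd (Finset.mem_inter.mpr ⟨heA, h''⟩)
              (by rw [hAB]; exact Finset.notMem_empty e)
          · exact absurd (Finset.mem_inter.mpr ⟨heA, h''⟩)
              (by rw [hADe]; exact Finset.notMem_empty e)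
        · rcases Finset.mem_union.1 h' with h'' | h''
          · exact (Finset.mem_sdiff.1 h'').2
          · exact absurd (Finset.mem_inter.mpr ⟨heA, (Finset.mem_sdiff.1 h'').1⟩)
              (by rw [hACe]; exact Finset.notMem_empty e)
      have hsubA : A ∩ T3 ⊆ A \ T4 := by
        intro e he
        rw [Finset.mem_inter] at he
        rw [Finset.mem_sdiff]
        exact ⟨he.1, hAT3 e he.1 he.2⟩
      have h1 := Finset.card_le_card hsubA
      have h2 := Finset.card_inter_add_card_sdiff A T3
      omega
    -- the rigid corner : Eac and Ebd hold, A = C, B = D, tight structure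
    have hA4c := ctx.hAac hac
    have hC4c := ctx.hCac hac
    have hnad : ¬Ead := by
      intro h
      have := ctx.hAboth hac h
      rw [ctx.hT4] at hdiffA4
      omega
    have hnbc : ¬Ebc := by
      intro h
      have := ctx.hCboth hac h
      rw [ctx.hT4] at hdiffC4
      omega
    rw [ctx.hT4] at hdiffA4 hdiffC4
    rw [ctx.hT3] at hdiffA3 hdiffC3
    have hBBD : B = B ∪ D := by
      apply Finset.eq_of_subset_of_card_le Finset.subset_union_left
      omega
    have hDBD : D = B ∪ D := by
      apply Finset.eq_of_subset_of_card_le Finset.subset_union_right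
      have := Finset.card_le_card (Finset.subset_union_right (s₁ := B) (s₂ := D))
      omega
    have hBDeq : B = D := hBBD.trans hDBD.symm
    have hPeqA : A \ T4 = (A \ T4) ∪ (C \ T4) := by
      apply Finset.eq_of_subset_of_card_le Finset.subset_union_left
      omega
    have hPeqC : C \ T4 = (A \ T4) ∪ (C \ T4) := by
      apply Finset.eq_of_subset_of_card_le Finset.subset_union_right
      omega
    have hPeq : A \ T4 = C \ T4 := hPeqA.trans hPeqC.symm
    have hP3eqA : A \ T3 = (A \ T3) ∪ (C \ T3) := by
      apply Finset.eq_of_subset_of_card_le Finset.subset_union_left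
      omega
    have hP3eqC : C \ T3 = (A \ T3) ∪ (C \ T3) := by
      apply Finset.eq_of_subset_of_card_le Finset.subset_union_right
      omega
    have hP3eq : A \ T3 = C \ T3 := hP3eqA.trans hP3eqC.symm
    obtain ⟨u1, hu1m, u2, hu2m, hu12⟩ := Finset.one_lt_card.mp
      (by omega : 1 < (A \ T4).card)
    obtain ⟨e1', he1m, e2', he2m, he12⟩ := Finset.one_lt_card.mp
      (by omega : 1 < (A \ T3).card)
    obtain ⟨i1, hi1B, i2, hi2B, hi12⟩ := Finset.one_lt_card.mp
      (by omega : 1 < B.card)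
    have hu1A := (Finset.mem_sdiff.1 hu1m).1
    have hu2A := (Finset.mem_sdiff.1 hu2m).1
    have hu1C : u1 ∈ C := (Finset.mem_sdiff.1 (hPeq ▸ hu1m)).1
    have hu2C : u2 ∈ C := (Finset.mem_sdiff.1 (hPeq ▸ hu2m)).1
    have hu1n4 := (Finset.mem_sdiff.1 hu1m).2
    have hu2n4 := (Finset.mem_sdiff.1 hu2m).2
    have hu1T3 : u1 ∈ T3 := hA4T3 hu1m
    have hu2T3 : u2 ∈ T3 := hA4T3 hu2m
    have he1A := (Finset.mem_sdiff.1 he1m).1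
    have he2A := (Finset.mem_sdiff.1 he2m).1
    have he1C : e1' ∈ C := (Finset.mem_sdiff.1 (hP3eq ▸ he1m)).1
    have he2C : e2' ∈ C := (Finset.mem_sdiff.1 (hP3eq ▸ he2m)).1
    have he1n3 := (Finset.mem_sdiff.1 he1m).2
    have he2n3 := (Finset.mem_sdiff.1 he2m).2
    have he1T4 : e1' ∈ T4 := hA3T4 he1m
    have he2T4 : e2' ∈ T4 := hA3T4 he2m
    have hi1D : i1 ∈ D := hBDeq ▸ hi1B
    have hi2D : i2 ∈ D := hBDeq ▸ hi2B
    have hi1T3 := hBT3 hi1B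
    have hi1T4 := hBT4 hi1B
    have hi2T3 := hBT3 hi2B
    have hi2T4 := hBT4 hi2B
    by_cases hc1 : ∃ i0, i0 ∈ B ∧ i0 ∉ T1
    · obtain ⟨i0, hi0B, hi0T1⟩ := hc1
      obtain ⟨i3, hi3B, hi3n⟩ := exists_avoid (B := B) (F := {i0})
        (by rw [Finset.card_singleton]; omega)
      rw [Finset.mem_singleton] at hi3n
      exact close ctx.hT1 ctx.hT2 ctx.hT3 ctx.hT4 he1A hi0B he2C (hBDeq ▸ hi3B)
        (fun _ => he12) (fun h => absurd h hnad) (fun h => absurd h hnbc)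
        (fun _ => Ne.symm hi3n)
        (Or.inr (Or.inr (Or.inl
          ⟨save1 (by simp) hi0T1 (le_trans card_le_four (by omega)),
           save2 (x := e1') (y := e2') (by simp) (by simp) he12 he1n3 he2n3
             (le_trans card_le_four (by omega))⟩)))
    by_cases hc2 : ∃ i0, i0 ∈ B ∧ i0 ∉ T2
    · obtain ⟨i0, hi0B, hi0T2⟩ := hc2
      obtain ⟨i3, hi3B, hi3n⟩ := exists_avoid (B := B) (F := {i0})
        (by rw [Finset.card_singleton]; omega)
      rw [Finset.mem_singleton] at hi3n
      exact close ctx.hT1 ctx.hT2 ctx.hT3 ctx.hT4 he1A hi0B he2C (hBDeq ▸ hi3B)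
        (fun _ => he12) (fun h => absurd h hnad) (fun h => absurd h hnbc)
        (fun _ => Ne.symm hi3n)
        (Or.inr (Or.inr (Or.inr (Or.inl
          ⟨save1 (by simp) hi0T2 (le_trans card_le_four (by omega)),
           save2 (x := e1') (y := e2') (by simp) (by simp) he12 he1n3 he2n3
             (le_trans card_le_four (by omega))⟩))))
    by_cases hc3 : e1' ∉ T1 ∨ e2' ∉ T1
    · refine close ctx.hT1 ctx.hT2 ctx.hT3 ctx.hT4 he1A hi1B he2C hi2D
        (fun _ => he12) (fun h => absurd h hnad) (fun h => absurd h hnbc)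
        (fun _ => hi12) (Or.inr (Or.inr (Or.inl ⟨?_, ?_⟩)))
      · rcases hc3 with h | h
        · exact save1 (by simp) h (le_trans card_le_four (by omega))
        · exact save1 (by simp) h (le_trans card_le_four (by omega))
      · exact save2 (x := e1') (y := e2') (by simp) (by simp) he12 he1n3 he2n3
          (le_trans card_le_four (by omega))
    by_cases hc4 : e1' ∉ T2 ∨ e2' ∉ T2
    · refine close ctx.hT1 ctx.hT2 ctx.hT3 ctx.hT4 he1A hi1B he2C hi2D
        (fun _ => he12) (fun h => absurd h hnad) (fun h => absurd h hnbc)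
        (fun _ => hi12) (Or.inr (Or.inr (Or.inr (Or.inl ⟨?_, ?_⟩))))
      · rcases hc4 with h | h
        · exact save1 (by simp) h (le_trans card_le_four (by omega))
        · exact save1 (by simp) h (le_trans card_le_four (by omega))
      · exact save2 (x := e1') (y := e2') (by simp) (by simp) he12 he1n3 he2n3
          (le_trans card_le_four (by omega))
    · push_neg at hc1 hc2 hc3 hc4
      have hBsub1 : B ⊆ T1 := fun x hx => hc1 x hx
      have hBsub2 : B ⊆ T2 := fun x hx => hc2 x hx
      have he1nB : e1' ∉ B := fun h => absurd (Finset.mem_inter.mpr ⟨he1A, h⟩)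
        (by rw [hAB]; exact Finset.notMem_empty e1')
      have he2nB : e2' ∉ B := fun h => absurd (Finset.mem_inter.mpr ⟨he2A, h⟩)
        (by rw [hAB]; exact Finset.notMem_empty e2')
      have hcard2 : (insert e1' (insert e2' B)).card = B.card + 2 := by
        rw [Finset.card_insert_of_notMem (by simp [he12, he1nB]),
          Finset.card_insert_of_notMem he2nB]
      have hT1eq : insert e1' (insert e2' B) = T1 := by
        apply Finset.eq_of_subset_of_card_le
        · intro x hx
          rcases Finset.mem_insert.1 hx with rfl | hx
          · exact hc3.1
          rcases Finset.mem_insert.1 hx with rfl | hx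
          · exact hc3.2
          · exact hBsub1 hx
        · rw [ctx.hT1, hcard2]
          omega
      have hT2eq : insert e1' (insert e2' B) = T2 := by
        apply Finset.eq_of_subset_of_card_le
        · intro x hx
          rcases Finset.mem_insert.1 hx with rfl | hx
          · exact hc4.1
          rcases Finset.mem_insert.1 hx with rfl | hx
          · exact hc4.2
          · exact hBsub2 hx
        · rw [ctx.hT2, hcard2]
          omega
      have hun : ∀ w, w ∈ A \ T4 → w ∈ T3 → w ∉ insert e1' (insert e2' B) := by
        intro w hw hwT3 hmem
        rcases Finset.mem_insert.1 hmem with rfl | hmem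
        · exact he1n3 hwT3
        rcases Finset.mem_insert.1 hmem with rfl | hmem
        · exact he2n3 hwT3
        · exact absurd (Finset.mem_inter.mpr ⟨(Finset.mem_sdiff.1 hw).1, hmem⟩)
            (by rw [hAB]; exact Finset.notMem_empty w)
      have hu1T1 : u1 ∉ T1 := by rw [← hT1eq]; exact hun u1 hu1m hu1T3
      have hu2T1 : u2 ∉ T1 := by rw [← hT1eq]; exact hun u2 hu2m hu2T3
      have hu1T2 : u1 ∉ T2 := by rw [← hT2eq]; exact hun u1 hu1m hu1T3
      exact close ctx.hT1 ctx.hT2 ctx.hT3 ctx.hT4 hu1A hi1B hu2C hi2D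
        (fun _ => hu12) (fun h => absurd h hnad) (fun h => absurd h hnbc)
        (fun _ => hi12)
        (Or.inr (Or.inr (Or.inr (Or.inr
          ⟨save1 (by simp) hu1T2 (le_trans card_le_four (by omega)),
           save2 (x := u1) (y := u2) (by simp) (by simp) hu12 hu1T1 hu2T1
             (le_trans card_le_four (by omega))⟩))))

set_option maxHeartbeats 4000000 in
/-- Step 2 : every cross pair is either adjacent or has disjoint lists. -/
lemma step2 (ctx : Ctx A B C D T1 T2 T3 T4 Eac Ead Ebc Ebd)
    (hAB : A ∩ B = ∅) (hCD : C ∩ D = ∅)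
    (hPac : ¬Eac → A ∩ C = ∅) (hPad : ¬Ead → A ∩ D = ∅)
    (hPbc : ¬Ebc → B ∩ C = ∅) (hPbd : ¬Ebd → B ∩ D = ∅)
    (hm : Eac ∨ Ead ∨ Ebc ∨ Ebd) :
    Sol A B C D T1 T2 T3 T4 Eac Ead Ebc Ebd := by
  have hAB7 : 7 ≤ A.card + B.card := by
    rcases hm with h | h | h | h
    · have := ctx.hAac h; have := ctx.hB3; omega
    · have := ctx.hAad h; have := ctx.hB3; omega
    · have := ctx.hBbc h; have := ctx.hA3; omega
    · have := ctx.hBbd h; have := ctx.hA3; omega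
  have hCD7 : 7 ≤ C.card + D.card := by
    rcases hm with h | h | h | h
    · have := ctx.hCac h; have := ctx.hD3; omega
    · have := ctx.hDad h; have := ctx.hC3; omega
    · have := ctx.hCbc h; have := ctx.hD3; omega
    · have := ctx.hDbd h; have := ctx.hC3; omega
  by_cases hw1 : ∃ w, w ∈ A ∪ B ∧ w ∉ T3 ∧ w ∉ T4
  · obtain ⟨w, hwm, hw3, hw4⟩ := hw1
    exact step2atop ctx hAB hCD hPac hPad hPbc hPbd hm hwm hw3 hw4
  by_cases hw2 : ∃ w, w ∈ C ∪ D ∧ w ∉ T3 ∧ w ∉ T4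
  · obtain ⟨w, hwm, hw3, hw4⟩ := hw2
    refine swapSides (step2atop ctx.swapSides hCD hAB
      (fun h => by rw [Finset.inter_comm]; exact hPac h)
      (fun h => by rw [Finset.inter_comm]; exact hPbc h)
      (fun h => by rw [Finset.inter_comm]; exact hPad h)
      (fun h => by rw [Finset.inter_comm]; exact hPbd h)
      (by tauto) hwm hw3 hw4)
  · push_neg at hw1 hw2
    have hnoAB : ∀ w ∈ A ∪ B, w ∉ T3 → w ∈ T4 := hw1
    have hnoCD : ∀ w ∈ C ∪ D, w ∉ T3 → w ∈ T4 := hw2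
    have hnoBA : ∀ w ∈ B ∪ A, w ∉ T3 → w ∈ T4 := by
      intro w hw
      refine hnoAB w ?_
      rcases Finset.mem_union.1 hw with h | h
      · exact Finset.mem_union_right _ h
      · exact Finset.mem_union_left _ h
    have hnoDC : ∀ w ∈ D ∪ C, w ∉ T3 → w ∈ T4 := by
      intro w hw
      refine hnoCD w ?_
      rcases Finset.mem_union.1 hw with h | h
      · exact Finset.mem_union_right _ h
      · exact Finset.mem_union_left _ h
    have hBA : B ∩ A = ∅ := by rw [Finset.inter_comm]; exact hAB
    have hDC : D ∩ C = ∅ := by rw [Finset.inter_comm]; exact hCD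
    by_cases huv : ∃ w, w ∈ A ∪ B ∧ w ∉ T4 ∧ ∃ v', v' ∈ C ∪ D ∧ v' ∉ T4 ∧ w ≠ v'
    · obtain ⟨w, hwm, hw4, v', hv'm, hv'4, hne⟩ := huv
      rcases Finset.mem_union.1 hwm with hwA | hwB <;>
        rcases Finset.mem_union.1 hv'm with hvC | hvD
      · exact step2c ctx hAB hCD hPac hPad hPbc hPbd hm hnoAB hnoCD hwA hw4 hvC hv'4 hne
      · exact swapCD (step2c ctx.swapCD hAB hDC hPad hPac hPbd hPbc (by tauto)
          hnoAB hnoDC hwA hw4 hvD hv'4 hne)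
      · exact swapAB (step2c ctx.swapAB hBA hCD hPbc hPbd hPac hPad (by tauto)
          hnoBA hnoCD hwB hw4 hvC hv'4 hne)
      · exact swapAB (swapCD (step2c (ctx.swapAB.swapCD) hBA hDC hPbd hPbc hPad hPac
          (by tauto) hnoBA hnoDC hwB hw4 hvD hv'4 hne))
    · push_neg at huv
      obtain ⟨u0, hu0m, hu04⟩ := exists_avoid (B := A ∪ B) (F := T4)
        (by rw [union_card_disj hAB, ctx.hT4]; omega)
      obtain ⟨v0, hv0m, hv04⟩ := exists_avoid (B := C ∪ D) (F := T4)
        (by rw [union_card_disj hCD, ctx.hT4]; omega)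
      have he0 : u0 = v0 := huv u0 hu0m hu04 v0 hv0m hv04
      have hu0CD : u0 ∈ C ∪ D := he0 ▸ hv0m
      have hsubABT : T4 ⊆ A ∪ B := by
        have h2 : A ∪ B ⊆ ((A ∪ B) ∩ T4) ∪ {u0} := by
          intro e he
          by_cases h : e ∈ T4
          · exact Finset.mem_union_left _ (Finset.mem_inter.mpr ⟨he, h⟩)
          · have : e = v0 := huv e he h v0 hv0m hv04
            rw [this, ← he0]
            exact Finset.mem_union_right _ (Finset.mem_singleton_self u0)
        have h3 := Finset.card_le_card h2
        have h4 := Finset.card_union_le ((A ∪ B) ∩ T4) ({u0} : Finset ℕ)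
        rw [union_card_disj hAB] at h3
        rw [Finset.card_singleton] at h4
        have h5 : T4.card ≤ ((A ∪ B) ∩ T4).card := by rw [ctx.hT4]; omega
        have h6 := Finset.eq_of_subset_of_card_le Finset.inter_subset_right h5
        rw [← h6]
        exact Finset.inter_subset_left
      have hsubCDT : T4 ⊆ C ∪ D := by
        have h2 : C ∪ D ⊆ ((C ∪ D) ∩ T4) ∪ {u0} := by
          intro e he
          by_cases h : e ∈ T4
          · exact Finset.mem_union_left _ (Finset.mem_inter.mpr ⟨he, h⟩)
          · have h7 : u0 = e := huv u0 hu0m hu04 e he h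
            rw [← h7]
            exact Finset.mem_union_right _ (Finset.mem_singleton_self u0)
        have h3 := Finset.card_le_card h2
        have h4 := Finset.card_union_le ((C ∪ D) ∩ T4) ({u0} : Finset ℕ)
        rw [union_card_disj hCD] at h3
        rw [Finset.card_singleton] at h4
        have h5 : T4.card ≤ ((C ∪ D) ∩ T4).card := by rw [ctx.hT4]; omega
        have h6 := Finset.eq_of_subset_of_card_le Finset.inter_subset_right h5
        rw [← h6]
        exact Finset.inter_subset_left
      have hABup : A.card + B.card ≤ 7 := by
        have h2 : A ∪ B ⊆ insert u0 T4 := by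
          intro e he
          by_cases h : e ∈ T4
          · exact Finset.mem_insert_of_mem h
          · have : e = v0 := huv e he h v0 hv0m hv04
            rw [this, ← he0]; exact Finset.mem_insert_self u0 T4
        have h3 := Finset.card_le_card h2
        have h4 := Finset.card_insert_le u0 T4
        rw [union_card_disj hAB] at h3
        rw [ctx.hT4] at h4
        omega
      have hCDup : C.card + D.card ≤ 7 := by
        have h2 : C ∪ D ⊆ insert u0 T4 := by
          intro e he
          by_cases h : e ∈ T4
          · exact Finset.mem_insert_of_mem h
          · have h7 : u0 = e := huv u0 hu0m hu04 e he h
            rw [← h7]; exact Finset.mem_insert_self u0 T4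
        have h3 := Finset.card_le_card h2
        have h4 := Finset.card_insert_le u0 T4
        rw [union_card_disj hCD] at h3
        rw [ctx.hT4] at h4
        omega
      exfalso
      rcases Finset.mem_union.1 hu0m with hA0 | hB0 <;>
        rcases Finset.mem_union.1 hu0CD with hC0 | hD0
      · -- u0 ∈ A ∩ C
        have hac : Eac := by
          by_contra h
          exact absurd (Finset.mem_inter.mpr ⟨hA0, hC0⟩)
            (by rw [hPac h]; exact Finset.notMem_empty u0)
        have h1 := ctx.hCac hac
        have h2 := ctx.hAac hac
        have hnad : ¬Ead := fun h => by have := ctx.hDad h; omega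
        have hnbc : ¬Ebc := fun h => by have := ctx.hCboth hac h; have := ctx.hD3; omega
        have hnbd : ¬Ebd := fun h => by have := ctx.hBbd h; omega
        exact step2sing_aux (hPad hnad) (hPbc hnbc) (hPbd hnbd) ctx.hT4
          (by have := ctx.hD3; omega) hsubABT hsubCDT
      · -- u0 ∈ A ∩ D
        have had : Ead := by
          by_contra h
          exact absurd (Finset.mem_inter.mpr ⟨hA0, hD0⟩)
            (by rw [hPad h]; exact Finset.notMem_empty u0)
        have h1 := ctx.hDad had
        have h2 := ctx.hAad had
        have hnac : ¬Eac := fun h => by have := ctx.hCac h; omega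
        have hnbd : ¬Ebd := fun h => by have := ctx.hDboth had h; have := ctx.hC3; omega
        have hnbc : ¬Ebc := fun h => by have := ctx.hBbc h; omega
        refine step2sing_aux (hPac hnac) (hPbd hnbd) (hPbc hnbc) ctx.hT4
          (by have := ctx.hC3; omega) hsubABT ?_
        intro t ht
        rcases Finset.mem_union.1 (hsubCDT ht) with h | h
        · exact Finset.mem_union_right _ h
        · exact Finset.mem_union_left _ h
      · -- u0 ∈ B ∩ C
        have hbc : Ebc := by
          by_contra h
          exact absurd (Finset.mem_inter.mpr ⟨hB0, hC0⟩)
            (by rw [hPbc h]; exact Finset.notMem_empty u0)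
        have h1 := ctx.hCbc hbc
        have h2 := ctx.hBbc hbc
        have hnbd : ¬Ebd := fun h => by have := ctx.hBboth hbc h; have := ctx.hA3; omega
        have hnac : ¬Eac := fun h => by have := ctx.hCboth h hbc; have := ctx.hD3; omega
        have hnad : ¬Ead := fun h => by have := ctx.hAad h; omega
        refine step2sing_aux (hPbd hnbd) (hPac hnac) (hPad hnad) ctx.hT4
          (by have := ctx.hD3; omega) ?_ hsubCDT
        intro t ht
        rcases Finset.mem_union.1 (hsubABT ht) with h | h
        · exact Finset.mem_union_right _ h
        · exact Finset.mem_union_left _ h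
      · -- u0 ∈ B ∩ D
        have hbd : Ebd := by
          by_contra h
          exact absurd (Finset.mem_inter.mpr ⟨hB0, hD0⟩)
            (by rw [hPbd h]; exact Finset.notMem_empty u0)
        have h1 := ctx.hDbd hbd
        have h2 := ctx.hBbd hbd
        have hnbc : ¬Ebc := fun h => by have := ctx.hBboth h hbd; have := ctx.hA3; omega
        have hnad : ¬Ead := fun h => by have := ctx.hDboth h hbd; have := ctx.hC3; omega
        have hnac : ¬Eac := fun h => by have := ctx.hAac h; omega
        refine step2sing_aux (hPbc hnbc) (hPad hnad) (hPac hnac) ctx.hT4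
          (by have := ctx.hC3; omega) ?_ ?_
        · intro t ht
          rcases Finset.mem_union.1 (hsubABT ht) with h | h
          · exact Finset.mem_union_right _ h
          · exact Finset.mem_union_left _ h
        · intro t ht
          rcases Finset.mem_union.1 (hsubCDT ht) with h | h
          · exact Finset.mem_union_right _ h
          · exact Finset.mem_union_left _ h

/-- Case 2.2 : both within-pair intersections empty (to be proven). -/
lemma sec22 (ctx : Ctx A B C D T1 T2 T3 T4 Eac Ead Ebc Ebd)
    (hAB : A ∩ B = ∅) (hCD : C ∩ D = ∅) :
    Sol A B C D T1 T2 T3 T4 Eac Ead Ebc Ebd := by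
  by_cases hM0 : ¬Eac ∧ ¬Ead ∧ ¬Ebc ∧ ¬Ebd
  · exact m0 ctx hAB hCD hM0.1 hM0.2.1 hM0.2.2.1 hM0.2.2.2
  · have hm : Eac ∨ Ead ∨ Ebc ∨ Ebd := by tauto
    have hBA : B ∩ A = ∅ := by rw [Finset.inter_comm]; exact hAB
    have hDC : D ∩ C = ∅ := by rw [Finset.inter_comm]; exact hCD
    by_cases h1 : ¬Eac ∧ (A ∩ C).Nonempty
    · obtain ⟨δ, hδ⟩ := h1.2
      rw [Finset.mem_inter] at hδ
      exact step1 ctx hAB hCD h1.1 hδ.1 hδ.2 (by tauto)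
    by_cases h2 : ¬Ead ∧ (A ∩ D).Nonempty
    · obtain ⟨δ, hδ⟩ := h2.2
      rw [Finset.mem_inter] at hδ
      exact swapCD (step1 ctx.swapCD hAB hDC h2.1 hδ.1 hδ.2 (by tauto))
    by_cases h3 : ¬Ebc ∧ (B ∩ C).Nonempty
    · obtain ⟨δ, hδ⟩ := h3.2
      rw [Finset.mem_inter] at hδ
      exact swapAB (step1 ctx.swapAB hBA hCD h3.1 hδ.1 hδ.2 (by tauto))
    by_cases h4 : ¬Ebd ∧ (B ∩ D).Nonempty
    · obtain ⟨δ, hδ⟩ := h4.2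
      rw [Finset.mem_inter] at hδ
      exact swapAB (swapCD (step1 ctx.swapAB.swapCD hBA hDC h4.1 hδ.1 hδ.2 (by tauto)))
    · refine step2 ctx hAB hCD ?_ ?_ ?_ ?_ hm
      · exact fun h => Finset.not_nonempty_iff_eq_empty.1 (fun hne => h1 ⟨h, hne⟩)
      · exact fun h => Finset.not_nonempty_iff_eq_empty.1 (fun hne => h2 ⟨h, hne⟩)
      · exact fun h => Finset.not_nonempty_iff_eq_empty.1 (fun hne => h3 ⟨h, hne⟩)
      · exact fun h => Finset.not_nonempty_iff_eq_empty.1 (fun hne => h4 ⟨h, hne⟩)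

/-- Case 2 : `A ∩ B = ∅`. -/
lemma coreAB0 (ctx : Ctx A B C D T1 T2 T3 T4 Eac Ead Ebc Ebd)
    (hAB : A ∩ B = ∅) :
    Sol A B C D T1 T2 T3 T4 Eac Ead Ebc Ebd := by
  by_cases hCD : (C ∩ D).Nonempty
  · obtain ⟨β, hβ⟩ := hCD
    rw [Finset.mem_inter] at hβ
    by_cases hβ4 : β ∉ T4
    · obtain ⟨pa, hpa, hpan⟩ := exists_avoid (B := A) (F := {β})
        (by rw [Finset.card_singleton]; have := ctx.hA3; omega)
      obtain ⟨pb, hpb, hpbn⟩ := exists_avoid (B := B) (F := {β})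
        (by rw [Finset.card_singleton]; have := ctx.hB3; omega)
      rw [Finset.mem_singleton] at hpan hpbn
      have hS3 : ({pa, pb, β, β} : Finset ℕ).card ≤ 3 :=
        le_trans (Finset.card_le_card
          (by intro e he; simp at he ⊢; tauto : ({pa, pb, β, β} : Finset ℕ) ⊆ {pa, pb, β}))
          card_le_three
      exact close ctx.hT1 ctx.hT2 ctx.hT3 ctx.hT4 hpa hpb hβ.1 hβ.2
        (fun _ => hpan) (fun _ => hpan) (fun _ => hpbn) (fun _ => hpbn)
        (Or.inl ⟨le_trans save0 (by omega),
          save1 (by simp) hβ4 (le_trans hS3 (by omega))⟩)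
    · push_neg at hβ4
      by_cases hAB4 : ∃ γ ∈ A ∪ B, γ ∉ T4
      · obtain ⟨γ, hγ, hγ4⟩ := hAB4
        have hγβ : γ ≠ β := fun h => hγ4 (h ▸ hβ4)
        rcases Finset.mem_union.1 hγ with hγA | hγB
        · obtain ⟨pb, hpb, hpbn⟩ := exists_avoid (B := B) (F := {β})
            (by rw [Finset.card_singleton]; have := ctx.hB3; omega)
          rw [Finset.mem_singleton] at hpbn
          have hS3 : ({γ, pb, β, β} : Finset ℕ).card ≤ 3 :=
            le_trans (Finset.card_le_card
              (by intro e he; simp at he ⊢; tauto : ({γ, pb, β, β} : Finset ℕ) ⊆ {γ, pb, β}))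
              card_le_three
          exact close ctx.hT1 ctx.hT2 ctx.hT3 ctx.hT4 hγA hpb hβ.1 hβ.2
            (fun _ => hγβ) (fun _ => hγβ) (fun _ => hpbn) (fun _ => hpbn)
            (Or.inl ⟨le_trans save0 (by omega),
              save1 (by simp) hγ4 (le_trans hS3 (by omega))⟩)
        · obtain ⟨pa, hpa, hpan⟩ := exists_avoid (B := A) (F := {β})
            (by rw [Finset.card_singleton]; have := ctx.hA3; omega)
          rw [Finset.mem_singleton] at hpan
          have hS3 : ({pa, γ, β, β} : Finset ℕ).card ≤ 3 :=
            le_trans (Finset.card_le_card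
              (by intro e he; simp at he ⊢; tauto : ({pa, γ, β, β} : Finset ℕ) ⊆ {pa, γ, β}))
              card_le_three
          exact close ctx.hT1 ctx.hT2 ctx.hT3 ctx.hT4 hpa hγB hβ.1 hβ.2
            (fun _ => hpan) (fun _ => hpan) (fun _ => hγβ) (fun _ => hγβ)
            (Or.inl ⟨le_trans save0 (by omega),
              save1 (by simp) hγ4 (le_trans hS3 (by omega))⟩)
      · -- A ∪ B ⊆ T4, so |A| = |B| = 3 and no edges at a, b; A ∪ B = T4
        push_neg at hAB4
        have hsub : A ∪ B ⊆ T4 := fun γ hγ => hAB4 γ hγ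
        have hcard : (A ∪ B).card = A.card + B.card := union_card_disj hAB
        have hle : A.card + B.card ≤ 6 := by
          have := Finset.card_le_card hsub
          rw [hcard] at this
          rw [ctx.hT4] at this
          exact this
        have hA3' : A.card = 3 := by have := ctx.hA3; have := ctx.hB3; omega
        have hB3' : B.card = 3 := by have := ctx.hA3; have := ctx.hB3; omega
        have hnac : ¬Eac := fun h => by have := ctx.hAac h; omega
        have hnad : ¬Ead := fun h => by have := ctx.hAad h; omega
        have hnbc : ¬Ebc := fun h => by have := ctx.hBbc h; omega
        have hnbd : ¬Ebd := fun h => by have := ctx.hBbd h; omega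
        have hequ : A ∪ B = T4 := by
          apply Finset.eq_of_subset_of_card_le hsub
          rw [hcard, ctx.hT4]
          omega
        have hβmem : β ∈ A ∪ B := by rw [hequ]; exact hβ4
        rcases Finset.mem_union.1 hβmem with hβA | hβB
        · obtain ⟨pb, hpb⟩ := Finset.card_pos.mp (by omega : 0 < B.card)
          have hS2 : ({β, pb, β, β} : Finset ℕ).card ≤ 2 :=
            le_trans (Finset.card_le_card (by intro e he; simp at he ⊢; tauto)) card_le_two
          exact close ctx.hT1 ctx.hT2 ctx.hT3 ctx.hT4 hβA hpb hβ.1 hβ.2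
            (fun h => absurd h hnac) (fun h => absurd h hnad)
            (fun h => absurd h hnbc) (fun h => absurd h hnbd)
            (Or.inl ⟨le_trans save0 (by omega), le_trans save0 hS2⟩)
        · obtain ⟨pa, hpa⟩ := Finset.card_pos.mp (by omega : 0 < A.card)
          have hS2 : ({pa, β, β, β} : Finset ℕ).card ≤ 2 :=
            le_trans (Finset.card_le_card (by intro e he; simp at he ⊢; tauto)) card_le_two
          exact close ctx.hT1 ctx.hT2 ctx.hT3 ctx.hT4 hpa hβB hβ.1 hβ.2
            (fun h => absurd h hnac) (fun h => absurd h hnad)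
            (fun h => absurd h hnbc) (fun h => absurd h hnbd)
            (Or.inl ⟨le_trans save0 (by omega), le_trans save0 hS2⟩)
  · exact sec22 ctx hAB (Finset.not_nonempty_iff_eq_empty.1 hCD)

end Core

/-- The core combinatorial lemma. -/
lemma core (A B C D T1 T2 T3 T4 : Finset ℕ) (Eac Ead Ebc Ebd : Prop)
    (hA3 : 3 ≤ A.card) (hB3 : 3 ≤ B.card) (hC3 : 3 ≤ C.card) (hD3 : 3 ≤ D.card)
    (hAac : Eac → 4 ≤ A.card) (hAad : Ead → 4 ≤ A.card) (hAboth : Eac → Ead → 5 ≤ A.card)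
    (hBbc : Ebc → 4 ≤ B.card) (hBbd : Ebd → 4 ≤ B.card) (hBboth : Ebc → Ebd → 5 ≤ B.card)
    (hCac : Eac → 4 ≤ C.card) (hCbc : Ebc → 4 ≤ C.card) (hCboth : Eac → Ebc → 5 ≤ C.card)
    (hDad : Ead → 4 ≤ D.card) (hDbd : Ebd → 4 ≤ D.card) (hDboth : Ead → Ebd → 5 ≤ D.card)
    (hT1 : T1.card = 6) (hT2 : T2.card = 6) (hT3 : T3.card = 6) (hT4 : T4.card = 6) :
    Sol A B C D T1 T2 T3 T4 Eac Ead Ebc Ebd := by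
  have ctx : Ctx A B C D T1 T2 T3 T4 Eac Ead Ebc Ebd :=
    ⟨hA3, hB3, hC3, hD3, hAac, hAad, hAboth, hBbc, hBbd, hBboth, hCac, hCbc, hCboth,
      hDad, hDbd, hDboth, hT1, hT2, hT3, hT4⟩
  by_cases hAB : (A ∩ B).Nonempty
  · by_cases hCD : (C ∩ D).Nonempty
    · exact case1 ctx hAB hCD
    · exact swapSides (coreAB0 ctx.swapSides
        (Finset.not_nonempty_iff_eq_empty.1 hCD))
  · exact coreAB0 ctx (Finset.not_nonempty_iff_eq_empty.1 hAB)

/-- Greedy coloring of a graph from lists of size `deg + 1`. -/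
lemma greedy {W : Type*} [Fintype W] (H : SimpleGraph W) (L : W → Finset ℕ)
    (hL : ∀ w, (H.neighborSet w).ncard + 1 ≤ (L w).card) :
    ∃ f : W → ℕ, (∀ w, f w ∈ L w) ∧ ∀ w w', H.Adj w w' → f w ≠ f w' := by
  classical
  suffices h : ∀ s : Finset W, ∃ f : W → ℕ, (∀ w ∈ s, f w ∈ L w) ∧
      ∀ w ∈ s, ∀ w' ∈ s, H.Adj w w' → f w ≠ f w' by
    obtain ⟨f, h1, h2⟩ := h Finset.univ
    exact ⟨f, fun w => h1 w (Finset.mem_univ w),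
      fun w w' => h2 w (Finset.mem_univ w) w' (Finset.mem_univ w')⟩
  intro s
  induction s using Finset.induction_on with
  | empty => exact ⟨fun _ => 0, by simp, by simp⟩
  | @insert w s hw ih =>
    obtain ⟨f, h1, h2⟩ := ih
    have hfin : (H.neighborSet w).Finite := Set.toFinite _
    have hNsub : s.filter (fun x => H.Adj w x) ⊆ hfin.toFinset := by
      intro y hy
      rw [Finset.mem_filter] at hy
      rw [Set.Finite.mem_toFinset]
      exact hy.2
    have hNcard : ((s.filter (fun x => H.Adj w x)).image f).card ≤ (H.neighborSet w).ncard := by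
      refine le_trans Finset.card_image_le (le_trans (Finset.card_le_card hNsub) ?_)
      rw [Set.ncard_eq_toFinset_card _ hfin]
    obtain ⟨cw, hcw, hcwn⟩ := exists_avoid
      (B := L w) (F := (s.filter (fun x => H.Adj w x)).image f) (by have := hL w; omega)
    refine ⟨Function.update f w cw, ?_, ?_⟩
    · intro x hx
      rcases Finset.mem_insert.1 hx with rfl | hx
      · simpa using hcw
      · have hxw : x ≠ w := fun h => hw (h ▸ hx)
        simpa [Function.update_apply, hxw] using h1 x hx
    · intro x hx y hy hadj
      rcases Finset.mem_insert.1 hx with rfl | hx'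
      · rcases Finset.mem_insert.1 hy with rfl | hy'
        · exact absurd hadj (H.loopless.irrefl _)
        · have hyw : y ≠ x := fun h => hw (h ▸ hy')
          rw [Function.update_self, Function.update_of_ne hyw]
          exact fun he => hcwn (Finset.mem_image.mpr ⟨y, Finset.mem_filter.mpr ⟨hy', hadj⟩, he.symm⟩)
      · rcases Finset.mem_insert.1 hy with rfl | hy'
        · have hxw : x ≠ y := fun h => hw (h ▸ hx')
          rw [Function.update_of_ne hxw, Function.update_self]
          exact fun he => hcwn (Finset.mem_image.mpr ⟨x, Finset.mem_filter.mpr ⟨hx', hadj.symm⟩, he⟩)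
        · have hxw : x ≠ w := fun h => hw (h ▸ hx')
          have hyw : y ≠ w := fun h => hw (h ▸ hy')
          rw [Function.update_of_ne hxw, Function.update_of_ne hyw]
          exact h2 x hx' y hy' hadj

lemma deg_inl {W : Type*} [Fintype W] (H : SimpleGraph W) (i : Fin 4) :
    ((K4Join H).neighborSet (Sum.inl i)).ncard = 3 + Fintype.card W := by
  have heq : (K4Join H).neighborSet (Sum.inl i) =
      (Sum.inl '' ({i}ᶜ : Set (Fin 4))) ∪ Set.range (Sum.inr : W → Fin 4 ⊕ W) := by
    ext x
    cases x with
    | inl j =>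
      simp only [SimpleGraph.mem_neighborSet, Set.mem_union, Set.mem_image, Set.mem_compl_iff,
        Set.mem_singleton_iff, Set.mem_range]
      constructor
      · intro h
        exact Or.inl ⟨j, fun hji => (h : i ≠ j) hji.symm, rfl⟩
      · rintro (⟨j', hj', he⟩ | ⟨w, hw⟩)
        · cases he
          exact fun hij => hj' hij.symm
        · cases hw
    | inr w =>
      simp only [SimpleGraph.mem_neighborSet, Set.mem_union, Set.mem_range]
      exact ⟨fun _ => Or.inr ⟨w, rfl⟩, fun _ => trivial⟩
  rw [heq, Set.ncard_union_eq ?_ (Set.toFinite _) (Set.toFinite _)]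
  · rw [Set.ncard_image_of_injective _ Sum.inl_injective]
    have h1 : ({i}ᶜ : Set (Fin 4)).ncard = 3 := by
      rw [← Finset.coe_singleton, ← Finset.coe_compl, Set.ncard_coe_finset,
        Finset.card_compl]
      simp
    have h2 : (Set.range (Sum.inr : W → Fin 4 ⊕ W)).ncard = Fintype.card W := by
      rw [← Set.image_univ, Set.ncard_image_of_injective _ Sum.inr_injective, Set.ncard_univ,
        Nat.card_eq_fintype_card]
    rw [h1, h2]
  · rw [Set.disjoint_left]
    rintro x ⟨j, _, rfl⟩ ⟨w, hw⟩
    exact Sum.inr_ne_inl hw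

lemma deg_inr {W : Type*} [Fintype W] (H : SimpleGraph W) (w : W) :
    ((K4Join H).neighborSet (Sum.inr w)).ncard = 4 + (H.neighborSet w).ncard := by
  have heq : (K4Join H).neighborSet (Sum.inr w) =
      Set.range (Sum.inl : Fin 4 → Fin 4 ⊕ W) ∪ (Sum.inr '' H.neighborSet w) := by
    ext x
    cases x with
    | inl j =>
      simp only [SimpleGraph.mem_neighborSet, Set.mem_union, Set.mem_range, Set.mem_image]
      exact ⟨fun _ => Or.inl ⟨j, rfl⟩, fun _ => trivial⟩
    | inr w' =>
      simp only [SimpleGraph.mem_neighborSet, Set.mem_union, Set.mem_range, Set.mem_image]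
      constructor
      · intro h
        exact Or.inr ⟨w', h, rfl⟩
      · rintro (⟨j, hj⟩ | ⟨w'', hw'', he⟩)
        · cases hj
        · cases he
          exact hw''
  rw [heq, Set.ncard_union_eq ?_ (Set.toFinite _) (Set.toFinite _)]
  · have h1 : (Set.range (Sum.inl : Fin 4 → Fin 4 ⊕ W)).ncard = 4 := by
      rw [← Set.image_univ, Set.ncard_image_of_injective _ Sum.inl_injective, Set.ncard_univ]
      simp
    rw [h1, Set.ncard_image_of_injective _ Sum.inr_injective]
  · rw [Set.disjoint_left]
    rintro x ⟨j, rfl⟩ ⟨w', _, hw⟩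
    exact Sum.inr_ne_inl hw

open Classical in
/-- Residual list bounds for one of the four special vertices. -/
lemma resid {W : Type*} [Fintype W] (H : SimpleGraph W) (f : W → ℕ) (Q : Finset W)
    (x u v : W) (huv : u ≠ v) (hu : u ∉ Q) (hv : v ∉ Q) (Lx : Finset ℕ)
    (hLx : Lx.card = 3 + (H.neighborSet x).ncard) :
    (3 ≤ (Lx \ (Q.filter (H.Adj x)).image f).card) ∧
    (H.Adj x u → 4 ≤ (Lx \ (Q.filter (H.Adj x)).image f).card) ∧
    (H.Adj x v → 4 ≤ (Lx \ (Q.filter (H.Adj x)).image f).card) ∧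
    (H.Adj x u → H.Adj x v → 5 ≤ (Lx \ (Q.filter (H.Adj x)).image f).card) := by
  classical
  have hfin : (H.neighborSet x).Finite := Set.toFinite _
  set N := hfin.toFinset with hN
  have hNcard : N.card = (H.neighborSet x).ncard := (Set.ncard_eq_toFinset_card _ hfin).symm
  have hsub : Q.filter (H.Adj x) ⊆ N \ ({u, v} : Finset W) := by
    intro y hy
    rw [Finset.mem_filter] at hy
    rw [Finset.mem_sdiff, Set.Finite.mem_toFinset]
    refine ⟨hy.2, ?_⟩
    intro hmem
    rcases Finset.mem_insert.1 hmem with rfl | hmem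
    · exact hu hy.1
    · rw [Finset.mem_singleton] at hmem
      exact hv (hmem ▸ hy.1)
  have hkey : (Q.filter (H.Adj x)).card + (N ∩ {u, v}).card ≤ N.card := by
    have h1 := Finset.card_le_card hsub
    have h2 := Finset.card_inter_add_card_sdiff N ({u, v} : Finset W)
    omega
  have himg : ((Q.filter (H.Adj x)).image f).card ≤
      (Q.filter (H.Adj x)).card := Finset.card_image_le
  have hsd := Finset.le_card_sdiff ((Q.filter (H.Adj x)).image f) Lx
  have hbase : ∀ k : ℕ, (N ∩ {u, v}).card = k →
      3 + k ≤ (Lx \ (Q.filter (H.Adj x)).image f).card := by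
    intro k hk
    omega
  have hmu : H.Adj x u → u ∈ N ∩ ({u, v} : Finset W) := by
    intro h
    rw [Finset.mem_inter, Set.Finite.mem_toFinset]
    exact ⟨h, Finset.mem_insert_self _ _⟩
  have hmv : H.Adj x v → v ∈ N ∩ ({u, v} : Finset W) := by
    intro h
    rw [Finset.mem_inter, Set.Finite.mem_toFinset]
    exact ⟨h, by simp⟩
  refine ⟨by have := hbase 0; omega, ?_, ?_, ?_⟩
  · intro h
    have h1 : 0 < (N ∩ {u, v}).card := Finset.card_pos.mpr ⟨u, hmu h⟩
    omega
  · intro h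
    have h1 : 0 < (N ∩ {u, v}).card := Finset.card_pos.mpr ⟨v, hmv h⟩
    omega
  · intro h1 h2
    have hsub2 : ({u, v} : Finset W) ⊆ N ∩ {u, v} := by
      intro y hy
      rcases Finset.mem_insert.1 hy with rfl | hy
      · exact hmu h1
      · rw [Finset.mem_singleton] at hy
        exact hy ▸ hmv h2
    have h3 : ({u, v} : Finset W).card = 2 := by
      rw [Finset.card_insert_of_notMem (by simp [huv]), Finset.card_singleton]
    have h4 := Finset.card_le_card hsub2
    omega

end D1Aux

set_option maxHeartbeats 1000000 in
theorem stmt12 {W : Type*} [Fintype W] (H : SimpleGraph W)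
    (a b c d : W) (hab : a ≠ b) (hcd : c ≠ d)
    (hdisj : ({a, b} : Set W) ∩ {c, d} = ∅)
    (hnab : ¬ H.Adj a b) (hncd : ¬ H.Adj c d) :
    D1Choosable (K4Join H) := by
  classical
  intro L hL
  set n := Fintype.card W with hn
  have hac : a ≠ c := by
    intro h
    have : a ∈ ({a, b} : Set W) ∩ {c, d} := ⟨Or.inl rfl, Or.inl h⟩
    rw [hdisj] at this
    exact this
  have had : a ≠ d := by
    intro h
    have : a ∈ ({a, b} : Set W) ∩ {c, d} := ⟨Or.inl rfl, Or.inr h⟩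
    rw [hdisj] at this
    exact this
  have hbc : b ≠ c := by
    intro h
    have : b ∈ ({a, b} : Set W) ∩ {c, d} := ⟨Or.inr rfl, Or.inl h⟩
    rw [hdisj] at this
    exact this
  have hbd : b ≠ d := by
    intro h
    have : b ∈ ({a, b} : Set W) ∩ {c, d} := ⟨Or.inr rfl, Or.inr h⟩
    rw [hdisj] at this
    exact this
  have hLi : ∀ i : Fin 4, (L (Sum.inl i)).card = n + 2 := by
    intro i
    rw [hL, D1Aux.deg_inl]
    omega
  have hLw : ∀ w : W, (L (Sum.inr w)).card = 3 + (H.neighborSet w).ncard := by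
    intro w
    rw [hL, D1Aux.deg_inr]
    omega
  have hcard4 : ({a, b, c, d} : Finset W).card = 4 := by
    rw [Finset.card_insert_of_notMem (by simp [hab, hac, had]),
      Finset.card_insert_of_notMem (by simp [hbc, hbd]),
      Finset.card_insert_of_notMem (by simp [hcd]), Finset.card_singleton]
  have hn4 : 4 ≤ n := by
    calc 4 = ({a, b, c, d} : Finset W).card := hcard4.symm
    _ ≤ Finset.univ.card := Finset.card_le_card (Finset.subset_univ _)
    _ = n := Finset.card_univ
  -- greedy coloring of all of W
  obtain ⟨f, hf1, hf2⟩ := D1Aux.greedy H (fun w => L (Sum.inr w)) (fun w => by rw [hLw]; omega)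
  set Q : Finset W := Finset.univ \ {a, b, c, d} with hQdef
  have hQcard : Q.card = n - 4 := by
    rw [hQdef, Finset.card_sdiff_of_subset (Finset.subset_univ _), Finset.card_univ, hcard4]
  have haQ : a ∉ Q := by simp [hQdef]
  have hbQ : b ∉ Q := by simp [hQdef]
  have hcQ : c ∉ Q := by simp [hQdef]
  have hdQ : d ∉ Q := by simp [hQdef]
  -- residual lists for the K4 vertices
  have hT0 : ∀ i : Fin 4, 6 ≤ ((L (Sum.inl i)) \ Q.image f).card := by
    intro i
    have h1 := Finset.le_card_sdiff (Q.image f) (L (Sum.inl i))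
    have h2 : (Q.image f).card ≤ Q.card := Finset.card_image_le
    have h3 := hLi i
    omega
  obtain ⟨T1, hT1s, hT1c⟩ := Finset.exists_subset_card_eq (hT0 0)
  obtain ⟨T2, hT2s, hT2c⟩ := Finset.exists_subset_card_eq (hT0 1)
  obtain ⟨T3, hT3s, hT3c⟩ := Finset.exists_subset_card_eq (hT0 2)
  obtain ⟨T4, hT4s, hT4c⟩ := Finset.exists_subset_card_eq (hT0 3)
  -- residual lists for a b c d
  set A := L (Sum.inr a) \ (Q.filter (H.Adj a)).image f with hAdef
  set B := L (Sum.inr b) \ (Q.filter (H.Adj b)).image f with hBdef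
  set C := L (Sum.inr c) \ (Q.filter (H.Adj c)).image f with hCdef
  set D := L (Sum.inr d) \ (Q.filter (H.Adj d)).image f with hDdef
  have hra := D1Aux.resid H f Q a c d hcd hcQ hdQ (L (Sum.inr a)) (hLw a)
  have hrb := D1Aux.resid H f Q b c d hcd hcQ hdQ (L (Sum.inr b)) (hLw b)
  have hrc := D1Aux.resid H f Q c a b hab haQ hbQ (L (Sum.inr c)) (hLw c)
  have hrd := D1Aux.resid H f Q d a b hab haQ hbQ (L (Sum.inr d)) (hLw d)
  have sol := D1Aux.core A B C D T1 T2 T3 T4 (H.Adj a c) (H.Adj a d) (H.Adj b c) (H.Adj b d)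
    hra.1 hrb.1 hrc.1 hrd.1
    (fun h => hra.2.1 h) (fun h => hra.2.2.1 h) (fun h1 h2 => hra.2.2.2 h1 h2)
    (fun h => hrb.2.1 h) (fun h => hrb.2.2.1 h) (fun h1 h2 => hrb.2.2.2 h1 h2)
    (fun h => hrc.2.1 h.symm) (fun h => hrc.2.2.1 h.symm) (fun h1 h2 => hrc.2.2.2 h1.symm h2.symm)
    (fun h => hrd.2.1 h.symm) (fun h => hrd.2.2.1 h.symm) (fun h1 h2 => hrd.2.2.2 h1.symm h2.symm)
    hT1c hT2c hT3c hT4c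
  obtain ⟨pa, pb, pc, pd, t1, t2, t3, t4, hpa, hpb, hpc, hpd, e1, e2, e3, e4,
    m1, m2, m3, m4, ⟨d12, d13, d14, d23, d24, d34⟩,
    ⟨q1a, q1b, q1c, q1d⟩, ⟨q2a, q2b, q2c, q2d⟩, ⟨q3a, q3b, q3c, q3d⟩, ⟨q4a, q4b, q4c, q4d⟩⟩ := sol
  set vcol : Fin 4 → ℕ :=
    fun i => if i = 0 then t1 else if i = 1 then t2 else if i = 2 then t3 else t4 with hvcol
  set wcol : W → ℕ := fun w =>
    if w = a then pa else if w = b then pb else if w = c then pc else if w = d then pd else f w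
    with hwcol
  have hva : wcol a = pa := by simp [hwcol]
  have hvb : wcol b = pb := by simp [hwcol, (hab.symm : b ≠ a)]
  have hvc : wcol c = pc := by simp [hwcol, (hac.symm : c ≠ a), (hbc.symm : c ≠ b)]
  have hvd : wcol d = pd := by
    simp [hwcol, (had.symm : d ≠ a), (hbd.symm : d ≠ b), (hcd.symm : d ≠ c)]
  have hvrest : ∀ w : W, w ≠ a → w ≠ b → w ≠ c → w ≠ d → wcol w = f w := by
    intro w h1 h2 h3 h4
    simp [hwcol, h1, h2, h3, h4]
  have hrestQ : ∀ w : W, w ≠ a → w ≠ b → w ≠ c → w ≠ d → w ∈ Q := by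
    intro w h1 h2 h3 h4
    simp [hQdef, h1, h2, h3, h4]
  have hid : ∀ w : W, w = a ∨ w = b ∨ w = c ∨ w = d ∨ (w ≠ a ∧ w ≠ b ∧ w ≠ c ∧ w ≠ d) := by
    intro w
    by_cases h1 : w = a
    · exact Or.inl h1
    by_cases h2 : w = b
    · exact Or.inr (Or.inl h2)
    by_cases h3 : w = c
    · exact Or.inr (Or.inr (Or.inl h3))
    by_cases h4 : w = d
    · exact Or.inr (Or.inr (Or.inr (Or.inl h4)))
    · exact Or.inr (Or.inr (Or.inr (Or.inr ⟨h1, h2, h3, h4⟩)))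
  have hT1m := hT1s m1
  have hT2m := hT2s m2
  have hT3m := hT3s m3
  have hT4m := hT4s m4
  rw [Finset.mem_sdiff] at hT1m hT2m hT3m hT4m
  have hwmem : ∀ w : W, wcol w ∈ L (Sum.inr w) := by
    intro w
    rcases hid w with rfl | rfl | rfl | rfl | ⟨h1, h2, h3, h4⟩
    · rw [hva]; exact (Finset.mem_sdiff.1 hpa).1
    · rw [hvb]; exact (Finset.mem_sdiff.1 hpb).1
    · rw [hvc]; exact (Finset.mem_sdiff.1 hpc).1
    · rw [hvd]; exact (Finset.mem_sdiff.1 hpd).1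
    · rw [hvrest w h1 h2 h3 h4]; exact hf1 w
  have hwvals : ∀ w : W, wcol w = pa ∨ wcol w = pb ∨ wcol w = pc ∨ wcol w = pd ∨
      (w ∈ Q ∧ wcol w = f w) := by
    intro w
    rcases hid w with rfl | rfl | rfl | rfl | ⟨h1, h2, h3, h4⟩
    · exact Or.inl hva
    · exact Or.inr (Or.inl hvb)
    · exact Or.inr (Or.inr (Or.inl hvc))
    · exact Or.inr (Or.inr (Or.inr (Or.inl hvd)))
    · exact Or.inr (Or.inr (Or.inr (Or.inr ⟨hrestQ w h1 h2 h3 h4, hvrest w h1 h2 h3 h4⟩)))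
  have hne : ∀ z : ℕ, z ≠ pa → z ≠ pb → z ≠ pc → z ≠ pd → z ∉ Q.image f →
      ∀ w : W, z ≠ wcol w := by
    intro z za zb zc zd zq w
    rcases hwvals w with h | h | h | h | ⟨hwQ, h⟩
    · rw [h]; exact za
    · rw [h]; exact zb
    · rw [h]; exact zc
    · rw [h]; exact zd
    · rw [h]
      exact fun he => zq (he ▸ Finset.mem_image_of_mem f hwQ)
  have hIW : ∀ (i : Fin 4) (w : W), vcol i ≠ wcol w := by
    intro i w
    fin_cases i
    · exact hne t1 q1a q1b q1c q1d hT1m.2 w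
    · exact hne t2 q2a q2b q2c q2d hT2m.2 w
    · exact hne t3 q3a q3b q3c q3d hT3m.2 w
    · exact hne t4 q4a q4b q4c q4d hT4m.2 w
  have hII : ∀ i j : Fin 4, i ≠ j → vcol i ≠ vcol j := by
    intro i j hij
    fin_cases i <;> fin_cases j <;>
      first
        | exact absurd rfl hij
        | exact d12 | exact d13 | exact d14 | exact d23 | exact d24 | exact d34
        | exact d12.symm | exact d13.symm | exact d14.symm
        | exact d23.symm | exact d24.symm | exact d34.symm
  have hPrest : ∀ (x : W) (px : ℕ),
      px ∈ L (Sum.inr x) \ (Q.filter (H.Adj x)).image f →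
      ∀ w ∈ Q, H.Adj x w → px ≠ f w := by
    intro x px hpx w hwQ hadj he
    exact (Finset.mem_sdiff.1 hpx).2
      (he ▸ Finset.mem_image_of_mem f (Finset.mem_filter.mpr ⟨hwQ, hadj⟩))
  have hWW : ∀ w w' : W, H.Adj w w' → wcol w ≠ wcol w' := by
    intro w w' hadj
    rcases hid w with rfl | rfl | rfl | rfl | ⟨h1, h2, h3, h4⟩ <;>
      rcases hid w' with rfl | rfl | rfl | rfl | ⟨g1, g2, g3, g4⟩
    · exact absurd hadj (H.loopless.irrefl _)
    · exact absurd hadj hnab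
    · rw [hva, hvc]; exact e1 hadj
    · rw [hva, hvd]; exact e2 hadj
    · rw [hva, hvrest _ g1 g2 g3 g4]
      exact hPrest _ pa hpa _ (hrestQ _ g1 g2 g3 g4) hadj
    · exact absurd hadj.symm hnab
    · exact absurd hadj (H.loopless.irrefl _)
    · rw [hvb, hvc]; exact e3 hadj
    · rw [hvb, hvd]; exact e4 hadj
    · rw [hvb, hvrest _ g1 g2 g3 g4]
      exact hPrest _ pb hpb _ (hrestQ _ g1 g2 g3 g4) hadj
    · rw [hvc, hva]; exact (e1 hadj.symm).symm
    · rw [hvc, hvb]; exact (e3 hadj.symm).symm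
    · exact absurd hadj (H.loopless.irrefl _)
    · exact absurd hadj hncd
    · rw [hvc, hvrest _ g1 g2 g3 g4]
      exact hPrest _ pc hpc _ (hrestQ _ g1 g2 g3 g4) hadj
    · rw [hvd, hva]; exact (e2 hadj.symm).symm
    · rw [hvd, hvb]; exact (e4 hadj.symm).symm
    · exact absurd hadj.symm hncd
    · exact absurd hadj (H.loopless.irrefl _)
    · rw [hvd, hvrest _ g1 g2 g3 g4]
      exact hPrest _ pd hpd _ (hrestQ _ g1 g2 g3 g4) hadj
    · rw [hvrest _ h1 h2 h3 h4, hva]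
      exact (hPrest _ pa hpa _ (hrestQ _ h1 h2 h3 h4) hadj.symm).symm
    · rw [hvrest _ h1 h2 h3 h4, hvb]
      exact (hPrest _ pb hpb _ (hrestQ _ h1 h2 h3 h4) hadj.symm).symm
    · rw [hvrest _ h1 h2 h3 h4, hvc]
      exact (hPrest _ pc hpc _ (hrestQ _ h1 h2 h3 h4) hadj.symm).symm
    · rw [hvrest _ h1 h2 h3 h4, hvd]
      exact (hPrest _ pd hpd _ (hrestQ _ h1 h2 h3 h4) hadj.symm).symm
    · rw [hvrest _ h1 h2 h3 h4, hvrest _ g1 g2 g3 g4]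
      exact hf2 _ _ hadj
  refine ⟨Sum.elim vcol wcol, ?_, ?_⟩
  · intro v
    cases v with
    | inl i =>
      fin_cases i
      · exact hT1m.1
      · exact hT2m.1
      · exact hT3m.1
      · exact hT4m.1
    | inr w => exact hwmem w
  · intro u v hadj
    cases u with
    | inl i =>
      cases v with
      | inl j => exact hII i j hadj
      | inr w => exact hIW i w
    | inr w =>
      cases v with
      | inl i => exact (hIW i w).symm
      | inr w' => exact hWW w w' hadj
end

section
/- Let G be a clique expansion of C_5 with parts Q_1,...,Q_5 (in cyclic order). If Δ(G) = 9, χ(G) = 9, ω(G) ≤ 8, and G is vertex-critical, then a contradiction follows; equivalently, no clique expansion of C_5 with Δ = 9 and ω ≤ 8 has chromatic number 9. -/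
open SimpleGraph

/-- Maximum degree of a finite graph. -/
noncomputable def maxDeg {V : Type*} [Fintype V] (G : SimpleGraph V) : ℕ :=
  Finset.univ.sup fun v => (G.neighborSet v).ncard

/-- `G` is a clique expansion of `C₅` with parts `Q_i = f⁻¹(i)`: each part is
nonempty, and two distinct vertices are adjacent iff they lie in the same part or
in consecutive parts (cyclically).  Each part is then automatically a clique. -/
def IsCliqueExpC5 {V : Type*} (G : SimpleGraph V) (f : V → Fin 5) : Prop :=
  (∀ i, ∃ v, f v = i) ∧
    ∀ u v, G.Adj u v ↔ u ≠ v ∧ (f u = f v ∨ (cycleGraph 5).Adj (f u) (f v))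

lemma keyX : ∀ d a0 a1 a2 a3 a4 : ℕ,
    a0 + a1 + a2 + a3 + a4 + d = 16 →
    a0 + a1 ≤ 8 → a1 + a2 ≤ 8 → a2 + a3 ≤ 8 → a3 + a4 ≤ 8 → a4 + a0 ≤ 8 →
    ∃ x0 x1 x2 x3 x4 : ℕ,
      x0 + x3 ≤ a0 ∧ x1 + x4 ≤ a1 ∧ x2 + x0 ≤ a2 ∧ x3 + x1 ≤ a3 ∧ x4 + x2 ≤ a4 ∧
      a0 + a1 + a2 + a3 + a4 ≤ 8 + (x0 + x1 + x2 + x3 + x4) := by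
  intro d
  induction d with
  | zero =>
    intro a0 a1 a2 a3 a4 hs h01 h12 h23 h34 h40
    exact ⟨8 - a3 - a4, 8 - a4 - a0, 8 - a0 - a1, 8 - a1 - a2, 8 - a2 - a3, by omega⟩
  | succ d ih =>
    intro a0 a1 a2 a3 a4 hs h01 h12 h23 h34 h40
    have hcase : (a0 + a1 < 8 ∧ a4 + a0 < 8) ∨ (a1 + a2 < 8 ∧ a0 + a1 < 8) ∨
        (a2 + a3 < 8 ∧ a1 + a2 < 8) ∨ (a3 + a4 < 8 ∧ a2 + a3 < 8) ∨
        (a4 + a0 < 8 ∧ a3 + a4 < 8) := by omega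
    rcases hcase with ⟨h1, h2⟩ | ⟨h1, h2⟩ | ⟨h1, h2⟩ | ⟨h1, h2⟩ | ⟨h1, h2⟩
    · obtain ⟨x0, x1, x2, x3, x4, c0, c1, c2, c3, c4, hsx⟩ :=
        ih (a0 + 1) a1 a2 a3 a4 (by omega) (by omega) h12 h23 h34 (by omega)
      exact ⟨x0 - ((x0 + x3 - a0) - x3), x1, x2, x3 - (x0 + x3 - a0), x4, by omega⟩
    · obtain ⟨x0, x1, x2, x3, x4, c0, c1, c2, c3, c4, hsx⟩ :=
        ih a0 (a1 + 1) a2 a3 a4 (by omega) (by omega) (by omega) h23 h34 h40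
      exact ⟨x0, x1 - ((x1 + x4 - a1) - x4), x2, x3, x4 - (x1 + x4 - a1), by omega⟩
    · obtain ⟨x0, x1, x2, x3, x4, c0, c1, c2, c3, c4, hsx⟩ :=
        ih a0 a1 (a2 + 1) a3 a4 (by omega) h01 (by omega) (by omega) h34 h40
      exact ⟨x0 - (x2 + x0 - a2), x1, x2 - ((x2 + x0 - a2) - x0), x3, x4, by omega⟩
    · obtain ⟨x0, x1, x2, x3, x4, c0, c1, c2, c3, c4, hsx⟩ :=
        ih a0 a1 a2 (a3 + 1) a4 (by omega) h01 h12 (by omega) (by omega) h40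
      exact ⟨x0, x1 - (x3 + x1 - a3), x2, x3 - ((x3 + x1 - a3) - x1), x4, by omega⟩
    · obtain ⟨x0, x1, x2, x3, x4, c0, c1, c2, c3, c4, hsx⟩ :=
        ih a0 a1 a2 a3 (a4 + 1) (by omega) h01 h12 h23 (by omega) (by omega)
      exact ⟨x0, x1, x2 - (x4 + x2 - a4), x3, x4 - ((x4 + x2 - a4) - x2), by omega⟩

lemma keyS (a0 a1 a2 a3 a4 : ℕ)
    (hsum : a0 + a1 + a2 + a3 + a4 ≤ 16)
    (h01 : a0 + a1 ≤ 8) (h12 : a1 + a2 ≤ 8) (h23 : a2 + a3 ≤ 8)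
    (h34 : a3 + a4 ≤ 8) (h40 : a4 + a0 ≤ 8) :
    ∃ x0 x1 x2 x3 x4 s0 s1 s2 s3 s4 : ℕ,
      a0 = x0 + x3 + s0 ∧ a1 = x1 + x4 + s1 ∧ a2 = x2 + x0 + s2 ∧
      a3 = x3 + x1 + s3 ∧ a4 = x4 + x2 + s4 ∧
      x0 + x1 + x2 + x3 + x4 + (s0 + s1 + s2 + s3 + s4) ≤ 8 := by
  obtain ⟨x0, x1, x2, x3, x4, c0, c1, c2, c3, c4, hsx⟩ :=
    keyX (16 - (a0 + a1 + a2 + a3 + a4)) a0 a1 a2 a3 a4 (by omega) h01 h12 h23 h34 h40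
  exact ⟨x0, x1, x2, x3, x4, a0 - x0 - x3, a1 - x1 - x4, a2 - x2 - x0,
    a3 - x3 - x1, a4 - x4 - x2, by omega⟩


lemma inj0 (x0 x1 x2 x3 x4 s0 s1 s2 s3 s4 r r' : ℕ)
    (hsx : x0 + x1 + x2 + x3 + x4 + (s0 + s1 + s2 + s3 + s4) ≤ 8)
    (hr : r < x0 + x3 + s0) (hr' : r' < x0 + x3 + s0) (hne : r ≠ r') :
    min (if r < x0 then r else if r < x0 + x3 then x0 + x1 + x2 + (r - x0)
      else x0 + x1 + x2 + x3 + x4 + 0 + (r - x0 - x3)) 7 ≠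
    min (if r' < x0 then r' else if r' < x0 + x3 then x0 + x1 + x2 + (r' - x0)
      else x0 + x1 + x2 + x3 + x4 + 0 + (r' - x0 - x3)) 7 := by
  split_ifs <;> omega

lemma inj1 (x0 x1 x2 x3 x4 s0 s1 s2 s3 s4 r r' : ℕ)
    (hsx : x0 + x1 + x2 + x3 + x4 + (s0 + s1 + s2 + s3 + s4) ≤ 8)
    (hr : r < x1 + x4 + s1) (hr' : r' < x1 + x4 + s1) (hne : r ≠ r') :
    min (if r < x1 then x0 + r else if r < x1 + x4 then x0 + x1 + x2 + x3 + (r - x1)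
      else x0 + x1 + x2 + x3 + x4 + s0 + (r - x1 - x4)) 7 ≠
    min (if r' < x1 then x0 + r' else if r' < x1 + x4 then x0 + x1 + x2 + x3 + (r' - x1)
      else x0 + x1 + x2 + x3 + x4 + s0 + (r' - x1 - x4)) 7 := by
  split_ifs <;> omega

lemma inj2 (x0 x1 x2 x3 x4 s0 s1 s2 s3 s4 r r' : ℕ)
    (hsx : x0 + x1 + x2 + x3 + x4 + (s0 + s1 + s2 + s3 + s4) ≤ 8)
    (hr : r < x2 + x0 + s2) (hr' : r' < x2 + x0 + s2) (hne : r ≠ r') :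
    min (if r < x2 then x0 + x1 + r else if r < x2 + x0 then (r - x2)
      else x0 + x1 + x2 + x3 + x4 + s0 + s1 + (r - x2 - x0)) 7 ≠
    min (if r' < x2 then x0 + x1 + r' else if r' < x2 + x0 then (r' - x2)
      else x0 + x1 + x2 + x3 + x4 + s0 + s1 + (r' - x2 - x0)) 7 := by
  split_ifs <;> omega

lemma inj3 (x0 x1 x2 x3 x4 s0 s1 s2 s3 s4 r r' : ℕ)
    (hsx : x0 + x1 + x2 + x3 + x4 + (s0 + s1 + s2 + s3 + s4) ≤ 8)
    (hr : r < x3 + x1 + s3) (hr' : r' < x3 + x1 + s3) (hne : r ≠ r') :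
    min (if r < x3 then x0 + x1 + x2 + r else if r < x3 + x1 then x0 + (r - x3)
      else x0 + x1 + x2 + x3 + x4 + s0 + s1 + s2 + (r - x3 - x1)) 7 ≠
    min (if r' < x3 then x0 + x1 + x2 + r' else if r' < x3 + x1 then x0 + (r' - x3)
      else x0 + x1 + x2 + x3 + x4 + s0 + s1 + s2 + (r' - x3 - x1)) 7 := by
  split_ifs <;> omega

lemma inj4 (x0 x1 x2 x3 x4 s0 s1 s2 s3 s4 r r' : ℕ)
    (hsx : x0 + x1 + x2 + x3 + x4 + (s0 + s1 + s2 + s3 + s4) ≤ 8)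
    (hr : r < x4 + x2 + s4) (hr' : r' < x4 + x2 + s4) (hne : r ≠ r') :
    min (if r < x4 then x0 + x1 + x2 + x3 + r else if r < x4 + x2 then x0 + x1 + (r - x4)
      else x0 + x1 + x2 + x3 + x4 + s0 + s1 + s2 + s3 + (r - x4 - x2)) 7 ≠
    min (if r' < x4 then x0 + x1 + x2 + x3 + r' else if r' < x4 + x2 then x0 + x1 + (r' - x4)
      else x0 + x1 + x2 + x3 + x4 + s0 + s1 + s2 + s3 + (r' - x4 - x2)) 7 := by
  split_ifs <;> omega

lemma cross01 (x0 x1 x2 x3 x4 s0 s1 s2 s3 s4 r r' : ℕ)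
    (hsx : x0 + x1 + x2 + x3 + x4 + (s0 + s1 + s2 + s3 + s4) ≤ 8)
    (hr : r < x0 + x3 + s0) (hr' : r' < x1 + x4 + s1) :
    min (if r < x0 then r else if r < x0 + x3 then x0 + x1 + x2 + (r - x0)
      else x0 + x1 + x2 + x3 + x4 + 0 + (r - x0 - x3)) 7 ≠
    min (if r' < x1 then x0 + r' else if r' < x1 + x4 then x0 + x1 + x2 + x3 + (r' - x1)
      else x0 + x1 + x2 + x3 + x4 + s0 + (r' - x1 - x4)) 7 := by
  split_ifs <;> omega

lemma cross12 (x0 x1 x2 x3 x4 s0 s1 s2 s3 s4 r r' : ℕ)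
    (hsx : x0 + x1 + x2 + x3 + x4 + (s0 + s1 + s2 + s3 + s4) ≤ 8)
    (hr : r < x1 + x4 + s1) (hr' : r' < x2 + x0 + s2) :
    min (if r < x1 then x0 + r else if r < x1 + x4 then x0 + x1 + x2 + x3 + (r - x1)
      else x0 + x1 + x2 + x3 + x4 + s0 + (r - x1 - x4)) 7 ≠
    min (if r' < x2 then x0 + x1 + r' else if r' < x2 + x0 then (r' - x2)
      else x0 + x1 + x2 + x3 + x4 + s0 + s1 + (r' - x2 - x0)) 7 := by
  split_ifs <;> omega

lemma cross23 (x0 x1 x2 x3 x4 s0 s1 s2 s3 s4 r r' : ℕ)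
    (hsx : x0 + x1 + x2 + x3 + x4 + (s0 + s1 + s2 + s3 + s4) ≤ 8)
    (hr : r < x2 + x0 + s2) (hr' : r' < x3 + x1 + s3) :
    min (if r < x2 then x0 + x1 + r else if r < x2 + x0 then (r - x2)
      else x0 + x1 + x2 + x3 + x4 + s0 + s1 + (r - x2 - x0)) 7 ≠
    min (if r' < x3 then x0 + x1 + x2 + r' else if r' < x3 + x1 then x0 + (r' - x3)
      else x0 + x1 + x2 + x3 + x4 + s0 + s1 + s2 + (r' - x3 - x1)) 7 := by
  split_ifs <;> omega

lemma cross34 (x0 x1 x2 x3 x4 s0 s1 s2 s3 s4 r r' : ℕ)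
    (hsx : x0 + x1 + x2 + x3 + x4 + (s0 + s1 + s2 + s3 + s4) ≤ 8)
    (hr : r < x3 + x1 + s3) (hr' : r' < x4 + x2 + s4) :
    min (if r < x3 then x0 + x1 + x2 + r else if r < x3 + x1 then x0 + (r - x3)
      else x0 + x1 + x2 + x3 + x4 + s0 + s1 + s2 + (r - x3 - x1)) 7 ≠
    min (if r' < x4 then x0 + x1 + x2 + x3 + r' else if r' < x4 + x2 then x0 + x1 + (r' - x4)
      else x0 + x1 + x2 + x3 + x4 + s0 + s1 + s2 + s3 + (r' - x4 - x2)) 7 := by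
  split_ifs <;> omega

lemma cross40 (x0 x1 x2 x3 x4 s0 s1 s2 s3 s4 r r' : ℕ)
    (hsx : x0 + x1 + x2 + x3 + x4 + (s0 + s1 + s2 + s3 + s4) ≤ 8)
    (hr : r < x4 + x2 + s4) (hr' : r' < x0 + x3 + s0) :
    min (if r < x4 then x0 + x1 + x2 + x3 + r else if r < x4 + x2 then x0 + x1 + (r - x4)
      else x0 + x1 + x2 + x3 + x4 + s0 + s1 + s2 + s3 + (r - x4 - x2)) 7 ≠
    min (if r' < x0 then r' else if r' < x0 + x3 then x0 + x1 + x2 + (r' - x0)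
      else x0 + x1 + x2 + x3 + x4 + 0 + (r' - x0 - x3)) 7 := by
  split_ifs <;> omega


lemma exists_g (a : Fin 5 → ℕ)
    (hpair : ∀ i j : Fin 5, (cycleGraph 5).Adj i j → a i + a j ≤ 8)
    (hsum : a 0 + a 1 + a 2 + a 3 + a 4 ≤ 16) :
    ∃ g : Fin 5 → ℕ → Fin 8,
      (∀ i : Fin 5, ∀ r r' : ℕ, r < a i → r' < a i → r ≠ r' → g i r ≠ g i r') ∧
      (∀ i j : Fin 5, (cycleGraph 5).Adj i j → ∀ r r' : ℕ,
        r < a i → r' < a j → g i r ≠ g j r') := by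
  obtain ⟨x0, x1, x2, x3, x4, s0, s1, s2, s3, s4, c0, c1, c2, c3, c4, hsx⟩ :=
    keyS (a 0) (a 1) (a 2) (a 3) (a 4) hsum
      (hpair 0 1 (by decide)) (hpair 1 2 (by decide)) (hpair 2 3 (by decide))
      (hpair 3 4 (by decide)) (hpair 4 0 (by decide))
  clear hsum hpair
  have h5 : ∀ i : Fin 5, i = 0 ∨ i = 1 ∨ i = 2 ∨ i = 3 ∨ i = 4 := by decide
  refine ⟨fun i => ![
      fun r => ⟨min (if r < x0 then r else if r < x0 + x3 then x0 + x1 + x2 + (r - x0)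
      else x0 + x1 + x2 + x3 + x4 + 0 + (r - x0 - x3)) 7, Nat.lt_succ_of_le (Nat.min_le_right _ _)⟩,
      fun r => ⟨min (if r < x1 then x0 + r else if r < x1 + x4 then x0 + x1 + x2 + x3 + (r - x1)
      else x0 + x1 + x2 + x3 + x4 + s0 + (r - x1 - x4)) 7, Nat.lt_succ_of_le (Nat.min_le_right _ _)⟩,
      fun r => ⟨min (if r < x2 then x0 + x1 + r else if r < x2 + x0 then (r - x2)
      else x0 + x1 + x2 + x3 + x4 + s0 + s1 + (r - x2 - x0)) 7, Nat.lt_succ_of_le (Nat.min_le_right _ _)⟩,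
      fun r => ⟨min (if r < x3 then x0 + x1 + x2 + r else if r < x3 + x1 then x0 + (r - x3)
      else x0 + x1 + x2 + x3 + x4 + s0 + s1 + s2 + (r - x3 - x1)) 7, Nat.lt_succ_of_le (Nat.min_le_right _ _)⟩,
      fun r => ⟨min (if r < x4 then x0 + x1 + x2 + x3 + r else if r < x4 + x2 then x0 + x1 + (r - x4)
      else x0 + x1 + x2 + x3 + x4 + s0 + s1 + s2 + s3 + (r - x4 - x2)) 7, Nat.lt_succ_of_le (Nat.min_le_right _ _)⟩] i, ?_, ?_⟩
  · intro i r r' hr hr' hne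
    rcases h5 i with rfl|rfl|rfl|rfl|rfl
    · exact Fin.ne_of_val_ne (inj0 x0 x1 x2 x3 x4 s0 s1 s2 s3 s4 r r' hsx (c0 ▸ hr) (c0 ▸ hr') hne)
    · exact Fin.ne_of_val_ne (inj1 x0 x1 x2 x3 x4 s0 s1 s2 s3 s4 r r' hsx (c1 ▸ hr) (c1 ▸ hr') hne)
    · exact Fin.ne_of_val_ne (inj2 x0 x1 x2 x3 x4 s0 s1 s2 s3 s4 r r' hsx (c2 ▸ hr) (c2 ▸ hr') hne)
    · exact Fin.ne_of_val_ne (inj3 x0 x1 x2 x3 x4 s0 s1 s2 s3 s4 r r' hsx (c3 ▸ hr) (c3 ▸ hr') hne)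
    · exact Fin.ne_of_val_ne (inj4 x0 x1 x2 x3 x4 s0 s1 s2 s3 s4 r r' hsx (c4 ▸ hr) (c4 ▸ hr') hne)
  · intro i j hadj r r' hr hr'
    rcases h5 i with rfl|rfl|rfl|rfl|rfl <;> rcases h5 j with rfl|rfl|rfl|rfl|rfl
    · exact absurd hadj (by decide)
    · exact Fin.ne_of_val_ne (cross01 x0 x1 x2 x3 x4 s0 s1 s2 s3 s4 r r' hsx (c0 ▸ hr) (c1 ▸ hr'))
    · exact absurd hadj (by decide)
    · exact absurd hadj (by decide)
    · exact (Fin.ne_of_val_ne (cross40 x0 x1 x2 x3 x4 s0 s1 s2 s3 s4 r' r hsx (c4 ▸ hr') (c0 ▸ hr))).symm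
    · exact (Fin.ne_of_val_ne (cross01 x0 x1 x2 x3 x4 s0 s1 s2 s3 s4 r' r hsx (c0 ▸ hr') (c1 ▸ hr))).symm
    · exact absurd hadj (by decide)
    · exact Fin.ne_of_val_ne (cross12 x0 x1 x2 x3 x4 s0 s1 s2 s3 s4 r r' hsx (c1 ▸ hr) (c2 ▸ hr'))
    · exact absurd hadj (by decide)
    · exact absurd hadj (by decide)
    · exact absurd hadj (by decide)
    · exact (Fin.ne_of_val_ne (cross12 x0 x1 x2 x3 x4 s0 s1 s2 s3 s4 r' r hsx (c1 ▸ hr') (c2 ▸ hr))).symm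
    · exact absurd hadj (by decide)
    · exact Fin.ne_of_val_ne (cross23 x0 x1 x2 x3 x4 s0 s1 s2 s3 s4 r r' hsx (c2 ▸ hr) (c3 ▸ hr'))
    · exact absurd hadj (by decide)
    · exact absurd hadj (by decide)
    · exact absurd hadj (by decide)
    · exact (Fin.ne_of_val_ne (cross23 x0 x1 x2 x3 x4 s0 s1 s2 s3 s4 r' r hsx (c2 ▸ hr') (c3 ▸ hr))).symm
    · exact absurd hadj (by decide)
    · exact Fin.ne_of_val_ne (cross34 x0 x1 x2 x3 x4 s0 s1 s2 s3 s4 r r' hsx (c3 ▸ hr) (c4 ▸ hr'))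
    · exact Fin.ne_of_val_ne (cross40 x0 x1 x2 x3 x4 s0 s1 s2 s3 s4 r r' hsx (c4 ▸ hr) (c0 ▸ hr'))
    · exact absurd hadj (by decide)
    · exact absurd hadj (by decide)
    · exact (Fin.ne_of_val_ne (cross34 x0 x1 x2 x3 x4 s0 s1 s2 s3 s4 r' r hsx (c3 ▸ hr') (c4 ▸ hr))).symm
    · exact absurd hadj (by decide)

theorem stmt13 {V : Type*} [Fintype V] (G : SimpleGraph V) (f : V → Fin 5)
    (hexp : IsCliqueExpC5 G f) (hΔ : maxDeg G = 9) (hω : G.cliqueNum ≤ 8) :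
    G.chromaticNumber ≠ 9 := by
  classical
  intro h9
  obtain ⟨hne', hadj⟩ := hexp
  set n : Fin 5 → ℕ := fun i => (Finset.univ.filter (fun v => f v = i)).card with hn
  have hdeg : ∀ v : V, (G.neighborSet v).ncard ≤ 9 := by
    intro v; rw [← hΔ]; exact Finset.le_sup (f := fun v => (G.neighborSet v).ncard) (Finset.mem_univ v)
  -- triple bound from max degree
  have tri : ∀ i j k : Fin 5, (cycleGraph 5).Adj i j → (cycleGraph 5).Adj i k →
      j ≠ k → j ≠ i → k ≠ i → n j + n i + n k ≤ 10 := by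
    intro i j k hij hik hjk hji hki
    obtain ⟨v, hv⟩ := hne' i
    set Pj := Finset.univ.filter (fun u => f u = j) with hPj
    set Pi := Finset.univ.filter (fun u => f u = i) with hPi
    set Pk := Finset.univ.filter (fun u => f u = k) with hPk
    have hd1 : Disjoint Pj Pi := by
      refine Finset.disjoint_left.mpr ?_
      intro u hu hu'
      simp only [hPj, hPi, Finset.mem_filter] at hu hu'
      exact hji (hu.2.symm.trans hu'.2)
    have hd2 : Disjoint (Pj ∪ Pi) Pk := by
      refine Finset.disjoint_left.mpr ?_
      intro u hu hu'
      simp only [hPj, hPi, hPk, Finset.mem_union, Finset.mem_filter] at hu hu'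
      rcases hu with h | h
      · exact hjk (h.2.symm.trans hu'.2)
      · exact hki (hu'.2.symm.trans h.2)
    have hcard : (Pj ∪ Pi ∪ Pk).card = n j + n i + n k := by
      rw [Finset.card_union_of_disjoint hd2, Finset.card_union_of_disjoint hd1]
    have hsub : (↑(Pj ∪ Pi ∪ Pk) : Set V) ⊆ insert v (G.neighborSet v) := by
      intro u hu
      simp only [Finset.coe_union, Set.mem_union, Finset.mem_coe, hPj, hPi, hPk,
        Finset.mem_filter, Finset.mem_univ, true_and] at hu
      by_cases huv : u = v
      · exact Set.mem_insert_iff.mpr (Or.inl huv)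
      · refine Set.mem_insert_iff.mpr (Or.inr ?_)
        have : G.Adj v u := by
          rw [hadj v u]
          refine ⟨fun h => huv h.symm, ?_⟩
          rcases hu with (h | h) | h
          · exact Or.inr (by rw [hv, h]; exact hij)
          · exact Or.inl (hv.trans h.symm)
          · exact Or.inr (by rw [hv, h]; exact hik)
        exact this
    calc n j + n i + n k = (↑(Pj ∪ Pi ∪ Pk) : Set V).ncard := by
            rw [Set.ncard_coe_finset, hcard]
      _ ≤ (insert v (G.neighborSet v)).ncard := Set.ncard_le_ncard hsub (Set.toFinite _)
      _ ≤ (G.neighborSet v).ncard + 1 := Set.ncard_insert_le _ _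
      _ ≤ 10 := by have := hdeg v; omega
  -- pair bound from clique number
  have pair : ∀ i j : Fin 5, (cycleGraph 5).Adj i j → n i + n j ≤ 8 := by
    intro i j hij
    set Pi := Finset.univ.filter (fun u => f u = i) with hPi
    set Pj := Finset.univ.filter (fun u => f u = j) with hPj
    have hd1 : Disjoint Pi Pj := by
      refine Finset.disjoint_left.mpr ?_
      intro u hu hu'
      simp only [hPj, hPi, Finset.mem_filter] at hu hu'
      exact hij.ne (hu.2.symm.trans hu'.2)
    have hclique : G.IsClique (↑(Pi ∪ Pj) : Set V) := by
      intro u hu w hw huw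
      simp only [Finset.coe_union, Set.mem_union, Finset.mem_coe, hPi, hPj,
        Finset.mem_filter, Finset.mem_univ, true_and] at hu hw
      rw [hadj u w]
      refine ⟨huw, ?_⟩
      rcases hu with h | h <;> rcases hw with h' | h'
      · exact Or.inl (h.trans h'.symm)
      · exact Or.inr (by rw [h, h']; exact hij)
      · exact Or.inr (by rw [h, h']; exact hij.symm)
      · exact Or.inl (h.trans h'.symm)
    have hcard : (Pi ∪ Pj).card = n i + n j := Finset.card_union_of_disjoint hd1
    have := SimpleGraph.IsClique.card_le_cliqueNum (G := G) (t := Pi ∪ Pj) (tc := hclique)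
    omega
  have h16 : n 0 + n 1 + n 2 + n 3 + n 4 ≤ 16 := by
    have t0 := tri 0 4 1 (by decide) (by decide) (by decide) (by decide) (by decide)
    have t1 := tri 1 0 2 (by decide) (by decide) (by decide) (by decide) (by decide)
    have t2 := tri 2 1 3 (by decide) (by decide) (by decide) (by decide) (by decide)
    have t3 := tri 3 2 4 (by decide) (by decide) (by decide) (by decide) (by decide)
    have t4 := tri 4 3 0 (by decide) (by decide) (by decide) (by decide) (by decide)
    omega
  obtain ⟨g, hinj, hcross⟩ := exists_g n pair h16
  set emb : V ≃ Fin (Fintype.card V) := Fintype.equivFin V with hemb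
  set rank : V → ℕ :=
    fun v => (Finset.univ.filter (fun w => f w = f v ∧ emb w < emb v)).card with hrank
  have hrlt : ∀ v : V, rank v < n (f v) := by
    intro v
    apply Finset.card_lt_card
    rw [Finset.ssubset_iff_of_subset]
    · exact ⟨v, by simp, by simp⟩
    · intro w hw
      simp only [Finset.mem_filter, Finset.mem_univ, true_and] at hw ⊢
      exact hw.1
  have hmono : ∀ u v : V, f u = f v → emb u < emb v → rank u < rank v := by
    intro u v hf h
    apply Finset.card_lt_card
    rw [Finset.ssubset_iff_of_subset]
    · exact ⟨u, by simp [hf, h], by simp⟩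
    · intro w hw
      simp only [Finset.mem_filter, Finset.mem_univ, true_and] at hw ⊢
      exact ⟨hw.1.trans hf, hw.2.trans h⟩
  have hrne : ∀ u v : V, f u = f v → u ≠ v → rank u ≠ rank v := by
    intro u v hf hne
    rcases lt_trichotomy (emb u) (emb v) with h | h | h
    · exact (hmono u v hf h).ne
    · exact absurd (emb.injective (Fin.le_antisymm h.le h.ge)) hne
    · exact (hmono v u hf.symm h).ne'
  have hcol : G.Colorable 8 := by
    refine ⟨SimpleGraph.Coloring.mk (fun v => g (f v) (rank v)) ?_⟩
    intro u v huv
    obtain ⟨hneq, hor⟩ := (hadj u v).mp huv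
    rcases hor with hf | hcyc
    · have h1 : rank v < n (f u) := by rw [hf]; exact hrlt v
      have := hinj (f u) (rank u) (rank v) (hrlt u) h1 (hrne u v hf hneq)
      show g (f u) (rank u) ≠ g (f v) (rank v)
      rw [hf] at this ⊢
      exact this
    · exact hcross (f u) (f v) hcyc (rank u) (rank v) (hrlt u) (hrlt v)
  have hle := hcol.chromaticNumber_le
  rw [h9] at hle
  norm_num at hle
end
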